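/- arXiv:1212.1650 — 13 statements merged into one kernel-verified Lean document; each statement's English description precedes it below -/
import Mathlib

section
/- The index of a finite-dimensional Lie algebra G equals dim G minus the rank over the fraction field R(G) of the symmetric algebra S(G) of the n×n matrix M whose (i,j) entry is the bracket [x_i, x_j] regarded as an element of S(G), where {x_1,...,x_n} is a basis of G. -/
open Module

noncomputable def lieStab (K : Type*) {L : Type*} [Field K] [LieRing L] [LieAlgebra K L]
    (f : Module.Dual K L) : Submodule K L where
  carrier := {x | ∀ y, f ⁅x, y⁆ = 0}
  add_mem' := by
    intro a b ha hb y
    rw [add_lie, map_add, ha y, hb y, add_zero]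
  zero_mem' := by intro y; simp
  smul_mem' := by
    intro t a ha y
    rw [smul_lie, map_smul, ha y, smul_zero]

noncomputable def lieIndex (K L : Type*) [Field K] [LieRing L] [LieAlgebra K L] : ℕ :=
  ⨅ f : Module.Dual K L, Module.finrank K (lieStab K f)

open Matrix


section minors
variable {F : Type*} [Field F]

/-- From a lower bound on the rank, extract linearly independent columns. -/
lemma exists_indep_cols {n m r : ℕ} (A : Matrix (Fin n) (Fin m) F) (h : r ≤ A.rank) :
    ∃ g : Fin r → Fin m, Function.Injective g ∧
      LinearIndependent F (fun j => Aᵀ (g j)) := by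
  classical
  obtain ⟨s, hs_sub, hspan, hind⟩ := exists_linearIndependent F (Set.range Aᵀ)
  haveI : Fintype s := ((Set.finite_range Aᵀ).subset hs_sub).fintype
  have hcard : r ≤ Fintype.card s := by
    have h1 : A.rank = finrank F (Submodule.span F s) := by
      rw [Matrix.rank_eq_finrank_span_cols, hspan]; rfl
    have h2 : finrank F (Submodule.span F s) = s.toFinset.card :=
      finrank_span_set_eq_card hind
    rw [Set.toFinset_card] at h2
    omega
  obtain ⟨e⟩ := Function.Embedding.nonempty_of_card_le (by simpa using hcard :
    Fintype.card (Fin r) ≤ Fintype.card s)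
  choose φ hφ using fun x : s => hs_sub x.2
  have hφinj : Function.Injective φ := by
    intro x y hxy
    apply Subtype.ext
    rw [← hφ x, ← hφ y, hxy]
  refine ⟨φ ∘ e, hφinj.comp e.injective, ?_⟩
  have heq : (fun j => Aᵀ ((φ ∘ e) j)) = fun j => ((e j : s) : Fin n → F) := by
    funext j; exact hφ (e j)
  rw [heq]
  exact hind.comp e e.injective

end minors

section minors2
variable {F : Type*} [Field F]

lemma rank_ge_of_submatrix_det_ne_zero {n r : ℕ} (A : Matrix (Fin n) (Fin n) F)
    (f g : Fin r → Fin n) (hdet : (A.submatrix f g).det ≠ 0) : r ≤ A.rank := by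
  classical
  have hEf : ((1 : Matrix (Fin n) (Fin n) F).submatrix f id) * A = A.submatrix f id := by
    ext i k
    simp [Matrix.mul_apply, Matrix.one_apply]
  have hEg : (A.submatrix f id) * ((1 : Matrix (Fin n) (Fin n) F).submatrix id g) =
      A.submatrix f g := by
    ext i k
    simp [Matrix.mul_apply, Matrix.one_apply]
  have hunit : IsUnit (A.submatrix f g) :=
    (Matrix.isUnit_iff_isUnit_det _).mpr (isUnit_iff_ne_zero.mpr hdet)
  have hr : (A.submatrix f g).rank = r := by
    rw [Matrix.rank_of_isUnit _ hunit, Fintype.card_fin]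
  calc r = (A.submatrix f g).rank := hr.symm
    _ = ((A.submatrix f id) * ((1 : Matrix (Fin n) (Fin n) F).submatrix id g)).rank := by
        rw [hEg]
    _ ≤ (A.submatrix f id).rank := Matrix.rank_mul_le_left _ _
    _ = (((1 : Matrix (Fin n) (Fin n) F).submatrix f id) * A).rank := by rw [hEf]
    _ ≤ A.rank := Matrix.rank_mul_le_right _ _

lemma exists_submatrix_det_ne_zero {n r : ℕ} (A : Matrix (Fin n) (Fin n) F)
    (h : r ≤ A.rank) : ∃ f g : Fin r → Fin n, (A.submatrix f g).det ≠ 0 := by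
  classical
  obtain ⟨g, hginj, hgind⟩ := exists_indep_cols A h
  set B : Matrix (Fin n) (Fin r) F := A.submatrix id g with hB
  have hBT : Bᵀ = fun j => Aᵀ (g j) := by
    funext j i; rfl
  have hrB : B.rank = r := by
    rw [Matrix.rank_eq_finrank_span_cols, show B.col = Bᵀ from rfl, hBT, finrank_span_eq_card hgind,
      Fintype.card_fin]
  have hrBT : r ≤ Bᵀ.rank := by rw [Matrix.rank_transpose, hrB]
  obtain ⟨f, hfinj, hfind⟩ := exists_indep_cols Bᵀ hrBT
  refine ⟨f, g, ?_⟩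
  have hC : (fun i => (A.submatrix f g) i) = fun i => Bᵀᵀ (f i) := by
    funext i j; rfl
  have : LinearIndependent F (fun i => (A.submatrix f g) i) := by
    rw [hC]; exact hfind
  have hunit : IsUnit (A.submatrix f g) :=
    Matrix.linearIndependent_rows_iff_isUnit.mp this
  exact ((Matrix.isUnit_iff_isUnit_det _).mp hunit).ne_zero

end minors2

section stab
variable (K : Type*) {L : Type*} [Field K] [LieRing L] [LieAlgebra K L]

/-- The linear map `x ↦ (j ↦ f ⁅x, b j⁆)`. -/
noncomputable def stabMap {n : ℕ} (b : Basis (Fin n) K L) (f : Module.Dual K L) :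
    L →ₗ[K] (Fin n → K) where
  toFun x := fun j => f ⁅x, b j⁆
  map_add' x y := by funext j; simp [add_lie]
  map_smul' t x := by funext j; simp [smul_lie]

lemma ker_stabMap {n : ℕ} (b : Basis (Fin n) K L) (f : Module.Dual K L) :
    LinearMap.ker (stabMap K b f) = lieStab K f := by
  ext x
  constructor
  · intro hx y
    have hz : (f ∘ₗ (LieAlgebra.ad K L x)) = 0 := by
      apply b.ext
      intro j
      simpa [LieAlgebra.ad_apply, stabMap] using congrFun hx j
    simpa [LieAlgebra.ad_apply] using LinearMap.congr_fun hz y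
  · intro hx
    funext j
    exact hx (b j)

lemma stabMap_eq {n : ℕ} (b : Basis (Fin n) K L) (f : Module.Dual K L) :
    stabMap K b f =
      ((Matrix.of fun i j : Fin n => f ⁅b i, b j⁆)ᵀ.mulVecLin).comp
        b.equivFun.toLinearMap := by
  classical
  apply b.ext
  intro i
  funext j
  simp only [LinearMap.comp_apply, LinearEquiv.coe_coe, Matrix.mulVecLin_apply]
  rw [show b.equivFun (b i) = fun k => if i = k then (1:K) else 0 from funext fun k => b.equivFun_self i k]
  simp only [stabMap, LinearMap.coe_mk, AddHom.coe_mk]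
  simp [Matrix.mulVec, dotProduct, mul_ite, mul_comm]

lemma finrank_lieStab {n : ℕ} (b : Basis (Fin n) K L) (f : Module.Dual K L) :
    Module.finrank K (lieStab K f) =
      n - (Matrix.of fun i j : Fin n => f ⁅b i, b j⁆).rank ∧
      (Matrix.of fun i j : Fin n => f ⁅b i, b j⁆).rank ≤ n := by
  classical
  haveI : FiniteDimensional K L := Module.Finite.of_basis b
  set M := Matrix.of fun i j : Fin n => f ⁅b i, b j⁆ with hM
  have hrange : LinearMap.range (stabMap K b f) = LinearMap.range Mᵀ.mulVecLin := by
    rw [stabMap_eq]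
    exact LinearMap.range_comp_of_range_eq_top _ (LinearMap.range_eq_top.mpr b.equivFun.surjective)
  have hrn : Module.finrank K (LinearMap.range (stabMap K b f)) = M.rank := by
    rw [hrange, ← Matrix.rank, Matrix.rank_transpose]
  have hfL : Module.finrank K L = n := finrank_eq_card_basis b |>.trans (Fintype.card_fin n)
  have hrk := LinearMap.finrank_range_add_finrank_ker (stabMap K b f)
  rw [hrn, ker_stabMap, hfL] at hrk
  constructor
  · omega
  · omega

end stab

section main
variable (K : Type*) [Field K] [IsAlgClosed K] [CharZero K]
  (L : Type*) [LieRing L] [LieAlgebra K L]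

theorem stmt1' (n : ℕ) (b : Basis (Fin n) K L) :
    lieIndex K L = n -
      (Matrix.of fun i j : Fin n =>
        algebraMap (MvPolynomial (Fin n) K) (FractionRing (MvPolynomial (Fin n) K))
          (∑ s : Fin n, MvPolynomial.C (b.repr ⁅b i, b j⁆ s) * MvPolynomial.X s)).rank := by
  classical
  set P := MvPolynomial (Fin n) K
  set F := FractionRing P
  set Mp : Matrix (Fin n) (Fin n) P :=
    Matrix.of fun i j => ∑ s : Fin n, MvPolynomial.C (b.repr ⁅b i, b j⁆ s) * MvPolynomial.X s
    with hMp
  have hMF : (Matrix.of fun i j : Fin n =>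
      algebraMap P F (∑ s : Fin n, MvPolynomial.C (b.repr ⁅b i, b j⁆ s) * MvPolynomial.X s))
      = Mp.map (algebraMap P F) := by
    ext i j; rfl
  rw [hMF]
  set MF := Mp.map (algebraMap P F) with hMFdef
  -- the specialized matrix
  set Mf : Module.Dual K L → Matrix (Fin n) (Fin n) K :=
    fun f => Matrix.of fun i j => f ⁅b i, b j⁆ with hMfdef
  -- specialization as polynomial evaluation
  have hspec : ∀ v : Fin n → K, Mp.map (MvPolynomial.eval v) = Mf (Basis.constr b K v) := by
    intro v
    ext i j
    simp only [Matrix.map_apply, hMp, Matrix.of_apply, hMfdef, map_sum]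
    have : (Basis.constr b K v) ⁅b i, b j⁆
        = ∑ s : Fin n, b.repr ⁅b i, b j⁆ s • (Basis.constr b K v) (b s) := by
      conv_lhs => rw [← b.sum_repr ⁅b i, b j⁆]
      rw [map_sum]
      simp
    rw [this]
    simp [Basis.constr_basis, smul_eq_mul]
  have hspec' : ∀ f : Module.Dual K L, Mp.map (MvPolynomial.eval fun s => f (b s)) = Mf f := by
    intro f
    ext i j
    simp only [Matrix.map_apply, hMp, Matrix.of_apply, hMfdef, map_sum]
    have : f ⁅b i, b j⁆ = ∑ s : Fin n, b.repr ⁅b i, b j⁆ s • f (b s) := by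
      conv_lhs => rw [← b.sum_repr ⁅b i, b j⁆]
      rw [map_sum]
      simp
    rw [this]
    simp [smul_eq_mul]
  -- direction B : every specialization has rank ≤ generic rank
  have hB : ∀ f : Module.Dual K L, (Mf f).rank ≤ MF.rank := by
    intro f
    obtain ⟨r', c', hdet⟩ := exists_submatrix_det_ne_zero (Mf f) le_rfl
    apply rank_ge_of_submatrix_det_ne_zero MF r' c'
    have hent : ∀ i j, (Mf f) i j = MvPolynomial.eval (fun s => f (b s)) (Mp i j) := by
      intro i j; rw [← hspec' f]; rfl
    have hsub : (Mf f).submatrix r' c'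
        = (Mp.submatrix r' c').map (MvPolynomial.eval fun s => f (b s)) := by
      ext i j; simp [hent]
    have h1 : (Mp.submatrix r' c').det ≠ 0 := by
      intro h0
      apply hdet
      rw [hsub, ← RingHom.mapMatrix_apply, ← RingHom.map_det, h0, map_zero]
    have hsub2 : MF.submatrix r' c' = (Mp.submatrix r' c').map (algebraMap P F) := by
      ext i j; rfl
    rw [hsub2, ← RingHom.mapMatrix_apply, ← RingHom.map_det]
    exact (map_ne_zero_iff _ (IsFractionRing.injective P F)).mpr h1
  -- direction C : the generic rank is attained
  have hC : ∃ f : Module.Dual K L, MF.rank ≤ (Mf f).rank := by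
    obtain ⟨r', c', hdet⟩ := exists_submatrix_det_ne_zero MF le_rfl
    have hsub2 : MF.submatrix r' c' = (Mp.submatrix r' c').map (algebraMap P F) := by
      ext i j; rfl
    have h1 : (Mp.submatrix r' c').det ≠ 0 := by
      intro h0
      apply hdet
      rw [hsub2, ← RingHom.mapMatrix_apply, ← RingHom.map_det, h0, map_zero]
    have h2 : ∃ v : Fin n → K, MvPolynomial.eval v (Mp.submatrix r' c').det ≠ 0 := by
      by_contra hcon
      push_neg at hcon
      exact h1 (MvPolynomial.funext fun v => by simpa using hcon v)
    obtain ⟨v, hv⟩ := h2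
    refine ⟨Basis.constr b K v, rank_ge_of_submatrix_det_ne_zero _ r' c' ?_⟩
    have hent : ∀ i j, (Mf (Basis.constr b K v)) i j = MvPolynomial.eval v (Mp i j) := by
      intro i j; rw [← hspec v]; rfl
    have hsub : (Mf (Basis.constr b K v)).submatrix r' c'
        = (Mp.submatrix r' c').map (MvPolynomial.eval v) := by
      ext i j; simp [hent]
    rw [hsub, ← RingHom.mapMatrix_apply, ← RingHom.map_det]
    exact hv
  obtain ⟨f₀, hf₀⟩ := hC
  have hMFn : MF.rank ≤ n := by
    simpa using MF.rank_le_card_width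
  -- now finish by inf arithmetic
  have hstab : ∀ f : Module.Dual K L,
      Module.finrank K (lieStab K f) = n - (Mf f).rank ∧ (Mf f).rank ≤ n :=
    fun f => finrank_lieStab K b f
  have hle : lieIndex K L ≤ n - MF.rank := by
    have : lieIndex K L ≤ Module.finrank K (lieStab K f₀) := by
      rw [lieIndex, iInf]
      exact Nat.sInf_le ⟨f₀, rfl⟩
    have heq : Module.finrank K (lieStab K f₀) = n - (Mf f₀).rank := (hstab f₀).1
    have h0 : (Mf f₀).rank = MF.rank := le_antisymm (hB f₀) hf₀
    omega
  have hge : n - MF.rank ≤ lieIndex K L := by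
    have hne : (Set.range fun f : Module.Dual K L => Module.finrank K (lieStab K f)).Nonempty :=
      ⟨_, ⟨0, rfl⟩⟩
    have hmem : lieIndex K L ∈
        Set.range fun f : Module.Dual K L => Module.finrank K (lieStab K f) := by
      rw [lieIndex, iInf]
      exact Nat.sInf_mem hne
    obtain ⟨f₁, hf₁⟩ := hmem
    have hf₁' : Module.finrank K (lieStab K f₁) = lieIndex K L := hf₁
    have h1 := (hstab f₁).1
    have h2 := hB f₁
    omega
  omega

end main

theorem stmt1 (K : Type*) [Field K] [IsAlgClosed K] [CharZero K]
    (L : Type*) [LieRing L] [LieAlgebra K L]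
    (n : ℕ) (b : Basis (Fin n) K L) :
    lieIndex K L = n -
      (Matrix.of fun i j : Fin n =>
        algebraMap (MvPolynomial (Fin n) K) (FractionRing (MvPolynomial (Fin n) K))
          (∑ s : Fin n, MvPolynomial.C (b.repr ⁅b i, b j⁆ s) * MvPolynomial.X s)).rank := by
  exact stmt1' K L n b
end

section
/- For n ≥ 3, the index of the n-dimensional filiform Lie algebra L_n is n − 2. -/
open Module

theorem stmt4 (K : Type*) [Field K] [IsAlgClosed K] [CharZero K]
    (L : Type*) [LieRing L] [LieAlgebra K L]
    (n : ℕ) (hn : 3 ≤ n) (x : ℕ → L)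
    (hli : LinearIndependent K fun i : Fin n => x (i.1 + 1))
    (hsp : Submodule.span K (Set.range fun i : Fin n => x (i.1 + 1)) = ⊤)
    (hbr : ∀ i, 2 ≤ i → i ≤ n - 1 → ⁅x 1, x i⁆ = x (i + 1))
    (hz : ∀ i j, 1 ≤ i → i ≤ n → 1 ≤ j → j ≤ n →
      ¬(i = 1 ∧ 2 ≤ j ∧ j ≤ n - 1) → ¬(j = 1 ∧ 2 ≤ i ∧ i ≤ n - 1) →
      ⁅x i, x j⁆ = 0) :
    lieIndex K L = n - 2 := by
  classical
  haveI : NeZero n := ⟨by omega⟩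
  let b : Basis (Fin n) K L := Module.Basis.mk hli (by rw [hsp])
  have hb : ∀ i : Fin n, b i = x (i.1 + 1) := fun i => Module.Basis.mk_apply hli _ i
  haveI : FiniteDimensional K L := Module.Finite.of_basis b
  have hfr : finrank K L = n := by
    rw [finrank_eq_card_basis b, Fintype.card_fin]
  have hb0 : b 0 = x 1 := by rw [hb]; rfl
  -- bracket on basis vectors
  have hbr' : ∀ (j : Fin n) (h1 : 1 ≤ j.1) (h2 : j.1 + 2 ≤ n),
      ⁅b ⟨0, by omega⟩, b j⁆ = b ⟨j.1 + 1, by omega⟩ := by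
    intro j h1 h2
    rw [hb, hb, hb]
    exact hbr (j.1 + 1) (by omega) (by omega)
  have hz' : ∀ (i j : Fin n) (h1 : ¬(i.1 = 0 ∧ 1 ≤ j.1 ∧ j.1 + 2 ≤ n))
      (h2 : ¬(j.1 = 0 ∧ 1 ≤ i.1 ∧ i.1 + 2 ≤ n)), ⁅b i, b j⁆ = 0 := by
    intro i j h1 h2
    rw [hb, hb]
    have hi := i.2
    have hj := j.2
    exact hz (i.1 + 1) (j.1 + 1) (by omega) (by omega) (by omega) (by omega)
      (by omega) (by omega)
  -- membership in stabilizer via basis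
  have mem_stab : ∀ (f : Dual K L) (v : L), v ∈ lieStab K f ↔ ∀ y, f ⁅v, y⁆ = 0 :=
    fun f v => Iff.rfl
  have mem_iff : ∀ (f : Dual K L) (v : L),
      v ∈ lieStab K f ↔ ∀ j : Fin n, f ⁅v, b j⁆ = 0 := by
    intro f v
    rw [mem_stab]
    constructor
    · exact fun h j => h (b j)
    · intro h y
      have hext : f.comp (LieAlgebra.ad K L v) = 0 := by
        apply b.ext
        intro j
        simpa [LieAlgebra.ad_apply] using h j
      have := LinearMap.congr_fun hext y
      simpa [LieAlgebra.ad_apply] using this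
  -- expansion
  have expand : ∀ (g : L →ₗ[K] K) (v : L), g v = ∑ i : Fin n, b.repr v i * g (b i) := by
    intro g v
    conv_lhs => rw [← b.sum_repr v]
    rw [map_sum]
    exact Finset.sum_congr rfl fun i _ => by rw [map_smul, smul_eq_mul]
  have key : ∀ (f : Dual K L) (v : L) (j : Fin n),
      f ⁅v, b j⁆ = ∑ i : Fin n, b.repr v i * f ⁅b i, b j⁆ := by
    intro f v j
    have h := expand (-(f.comp (LieAlgebra.ad K L (b j)))) v
    simpa only [LinearMap.neg_apply, LinearMap.comp_apply, LieAlgebra.ad_apply,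
      ← map_neg, lie_skew, mul_neg] using h
  ------------------------------------------------------------------
  -- Lower bound: for every f, finrank (lieStab K f) ≥ n - 2
  ------------------------------------------------------------------
  have lower : ∀ f : Dual K L, n - 2 ≤ finrank K (lieStab K f) := by
    intro f
    let Φ : L →ₗ[K] Module.Dual K L := {
      toFun := fun v => f.comp (LieAlgebra.ad K L v)
      map_add' := by intro a c; ext y; simp [LieAlgebra.ad_apply, add_lie]
      map_smul' := by intro t a; ext y; simp [LieAlgebra.ad_apply, smul_lie] }
    have hΦ : ∀ v y, Φ v y = f ⁅v, y⁆ := fun v y => by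
      simp [Φ, LieAlgebra.ad_apply]
    have hker : lieStab K f = LinearMap.ker Φ := by
      ext v
      rw [mem_stab, LinearMap.mem_ker]
      constructor
      · intro h; ext y; rw [hΦ]; exact h y
      · intro h y; rw [← hΦ]; rw [h]; rfl
    -- range of Φ is contained in a 2-dimensional space
    let T : Submodule K (Module.Dual K L) := Submodule.span K {Φ (b ⟨0, by omega⟩), b.coord ⟨0, by omega⟩}
    have hrange : LinearMap.range Φ ≤ T := by
      rw [LinearMap.range_eq_map, ← hsp]
      have : (Set.range fun i : Fin n => x (i.1 + 1)) = Set.range b := by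
        ext y; constructor
        · rintro ⟨i, rfl⟩; exact ⟨i, (hb i)⟩
        · rintro ⟨i, rfl⟩; exact ⟨i, (hb i).symm⟩
      rw [this, Submodule.map_span, Submodule.span_le]
      rintro - ⟨-, ⟨i, rfl⟩, rfl⟩
      by_cases hi : i.1 = 0
      · have : i = ⟨0, by omega⟩ := Fin.ext hi
        rw [this]
        exact Submodule.subset_span (Set.mem_insert _ _)
      · have hΦi : Φ (b i) = (f ⁅b i, b ⟨0, by omega⟩⁆) • b.coord ⟨0, by omega⟩ := by
          apply b.ext
          intro j
          rw [hΦ]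
          by_cases hj : j.1 = 0
          · have hj2 : j = ⟨0, by omega⟩ := Fin.ext (by simp only [Fin.val_mk]; omega)
            rw [hj2]
            simp [Basis.coord_apply, Basis.repr_self]
          · have hj' : ¬((⟨0, by omega⟩ : Fin n) = j) := fun h => hj (by rw [← h])
            rw [hz' i j (by omega) (by omega)]
            simp only [LinearMap.smul_apply, Basis.coord_apply, Basis.repr_self,
              Finsupp.single_apply, smul_eq_mul, map_zero]
            rw [if_neg (fun hh : j = ⟨0, by omega⟩ => hj (by rw [hh]))]
            simp
        rw [hΦi]
        exact Submodule.smul_mem _ _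
          (Submodule.subset_span (Set.mem_insert_of_mem _ rfl))
    have hT : finrank K T ≤ 2 := by
      have := finrank_span_le_card (R := K) ({Φ (b 0), b.coord 0} : Set (Module.Dual K L))
      refine this.trans ?_
      have : ({Φ (b 0), b.coord 0} : Set (Module.Dual K L)).toFinset
          ⊆ {Φ (b 0), b.coord 0} := by
        simp
      calc _ ≤ ({Φ (b 0), b.coord 0} : Finset (Module.Dual K L)).card :=
              Finset.card_le_card this
        _ ≤ 2 := Finset.card_insert_le _ _ |>.trans (by simp)
    have hrk : finrank K (LinearMap.range Φ) ≤ 2 :=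
      (Submodule.finrank_mono hrange).trans hT
    have hsum := LinearMap.finrank_range_add_finrank_ker Φ
    rw [hfr] at hsum
    rw [hker]
    omega
  ------------------------------------------------------------------
  -- Upper bound: the witness f₀ = b.coord 2
  ------------------------------------------------------------------
  let f₀ : Dual K L := b.coord ⟨2, by omega⟩
  have coordval : ∀ j : Fin n, f₀ (b j) = if j.1 = 2 then 1 else 0 := by
    intro j
    by_cases h : j.1 = 2
    · have h2 : (⟨2, by omega⟩ : Fin n) = j := Fin.ext (by simp only [Fin.val_mk]; omega)
      rw [← h2]
      simp [f₀, Basis.coord_apply, Basis.repr_self]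
    · have h2 : (2 : ℕ) ≠ j.1 := fun hh => h hh.symm
      rw [if_neg h]
      simp only [f₀, Basis.coord_apply, Basis.repr_self, Finsupp.single_apply]
      rw [if_neg (fun hh : j = ⟨2, by omega⟩ => h (by rw [hh]))]
  have upper : finrank K (lieStab K f₀) = n - 2 := by
    have hS : lieStab K f₀ =
        Submodule.span K (Set.range fun k : Fin (n - 2) => b ⟨k.1 + 2, by omega⟩) := by
      apply le_antisymm
      · intro v hv
        have hv' := (mem_iff f₀ v).1 hv
        set a := b.repr v with ha
        -- a 0 = 0 from bracket with b 1
        have h1 : a ⟨0, by omega⟩ = 0 := by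
          have := hv' ⟨1, by omega⟩
          rw [key] at this
          rw [Finset.sum_eq_single (⟨0, by omega⟩ : Fin n)] at this
          · rw [hbr' ⟨1, by omega⟩ (by simp only [Fin.val_mk]; omega)
              (by simp only [Fin.val_mk]; omega)] at this
            rw [coordval] at this
            simpa using this
          · intro i _ hi
            have hi0 : i.1 ≠ 0 := fun h => hi (Fin.ext (by simp only [Fin.val_mk]; omega))
            rw [hz' i ⟨1, by omega⟩ (by simp only [Fin.val_mk]; omega)
              (by simp only [Fin.val_mk]; omega), map_zero, mul_zero]
          · intro h; exact absurd (Finset.mem_univ _) h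
        -- a 1 = 0 from bracket with b 0
        have h2 : a ⟨1, by omega⟩ = 0 := by
          have := hv' ⟨0, by omega⟩
          rw [key] at this
          rw [Finset.sum_eq_single (⟨1, by omega⟩ : Fin n)] at this
          · have hlie : ⁅b ⟨1, by omega⟩, b ⟨0, by omega⟩⁆
                = -b ⟨1 + 1, by omega⟩ := by
              rw [← lie_skew, hbr' ⟨1, by omega⟩ (by simp only [Fin.val_mk]; omega)
                (by simp only [Fin.val_mk]; omega)]
            rw [hlie, map_neg, coordval] at this
            simp at this
            exact this
          · intro i _ hi
            by_cases hc : 1 ≤ i.1 ∧ i.1 + 2 ≤ n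
            · have : ⁅b i, b ⟨0, by omega⟩⁆ = -b ⟨i.1 + 1, by omega⟩ := by
                rw [← lie_skew, hbr' i hc.1 hc.2]
              rw [this, map_neg, coordval]
              have : i.1 + 1 ≠ 2 := by
                intro h
                exact hi (Fin.ext (by simp only [Fin.val_mk]; omega))
              rw [if_neg this]
              simp
            · rw [hz' i ⟨0, by omega⟩ (by simp only [Fin.val_mk]; omega)
                (by simp only [Fin.val_mk]; omega), map_zero, mul_zero]
          · intro h; exact absurd (Finset.mem_univ _) h
        -- conclude membership in span
        have hrepr := b.sum_repr v
        rw [← hrepr]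
        apply Submodule.sum_mem
        intro i _
        by_cases hc : 2 ≤ i.1
        · apply Submodule.smul_mem
          apply Submodule.subset_span
          exact ⟨⟨i.1 - 2, by omega⟩, congrArg b (Fin.ext (by simp; omega))⟩
        · have hi01 : i.1 = 0 ∨ i.1 = 1 := by omega
          have : a i = 0 := by
            rcases hi01 with h | h
            · have : i = ⟨0, by omega⟩ := Fin.ext (by simp only [Fin.val_mk]; omega)
              rw [this]; exact h1
            · have : i = ⟨1, by omega⟩ := Fin.ext (by simp only [Fin.val_mk]; omega)
              rw [this]; exact h2
          rw [← ha, this, zero_smul]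
          exact Submodule.zero_mem _
      · rw [Submodule.span_le]
        rintro - ⟨k, rfl⟩
        rw [SetLike.mem_coe, mem_iff]
        intro j
        by_cases hj : j.1 = 0
        · have hj' : j = ⟨0, by omega⟩ := Fin.ext (by simp only [Fin.val_mk]; omega)
          by_cases hc : k.1 + 2 + 2 ≤ n
          · rw [hj', ← lie_skew,
              hbr' ⟨k.1 + 2, by omega⟩ (by simp only [Fin.val_mk]; omega)
                (by simp only [Fin.val_mk]; omega),
              map_neg, coordval]
            rw [if_neg (by simp only [Fin.val_mk]; omega)]
            simp
          · rw [hz' ⟨k.1 + 2, by omega⟩ j (by simp only [Fin.val_mk]; omega)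
              (by simp only [Fin.val_mk]; omega), map_zero]
        · rw [hz' ⟨k.1 + 2, by omega⟩ j (by simp only [Fin.val_mk]; omega)
            (by simp only [Fin.val_mk]; omega), map_zero]
    rw [hS]
    have hli2 : LinearIndependent K fun k : Fin (n - 2) => b ⟨k.1 + 2, by omega⟩ := by
      have : (fun k : Fin (n - 2) => b ⟨k.1 + 2, by omega⟩)
          = b ∘ (fun k : Fin (n - 2) => (⟨k.1 + 2, by omega⟩ : Fin n)) := rfl
      rw [this]
      apply b.linearIndependent.comp
      intro k l h
      have : k.1 + 2 = l.1 + 2 := congrArg Fin.val h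
      exact Fin.ext (by omega)
    rw [finrank_span_eq_card hli2, Fintype.card_fin]
  ------------------------------------------------------------------
  -- conclusion
  ------------------------------------------------------------------
  unfold lieIndex
  apply le_antisymm
  · exact (ciInf_le' _ f₀).trans_eq upper
  · exact le_ciInf fun f => lower f
end

section
/- For n ≥ 3, a linear functional f = Σ p_i x_i* on L_n is regular (i.e., dim L_n^f = n−2) if and only if p_s ≠ 0 for some s ∈ {3, ..., n}. -/
open Module

theorem stmt5 (K : Type*) [Field K] [IsAlgClosed K] [CharZero K]
    (L : Type*) [LieRing L] [LieAlgebra K L]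
    (n : ℕ) (hn : 3 ≤ n) (x : ℕ → L)
    (hli : LinearIndependent K fun i : Fin n => x (i.1 + 1))
    (hsp : Submodule.span K (Set.range fun i : Fin n => x (i.1 + 1)) = ⊤)
    (hbr : ∀ i, 2 ≤ i → i ≤ n - 1 → ⁅x 1, x i⁆ = x (i + 1))
    (hz : ∀ i j, 1 ≤ i → i ≤ n → 1 ≤ j → j ≤ n →
      ¬(i = 1 ∧ 2 ≤ j ∧ j ≤ n - 1) → ¬(j = 1 ∧ 2 ≤ i ∧ i ≤ n - 1) →
      ⁅x i, x j⁆ = 0) :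
    ∀ f : Module.Dual K L,
      Module.finrank K (lieStab K f) = n - 2 ↔ ∃ s, 3 ≤ s ∧ s ≤ n ∧ f (x s) ≠ 0 := by
  intro f
  have hsp' : ⊤ ≤ Submodule.span K (Set.range fun i : Fin n => x (i.1 + 1)) := hsp.ge
  let b : Basis (Fin n) K L := Basis.mk hli hsp'
  have hb : ∀ i : Fin n, b i = x (i.1 + 1) := fun i => Basis.mk_apply hli hsp' i
  haveI : FiniteDimensional K L := Module.Finite.of_basis b
  have hdim : finrank K L = n := (finrank_eq_card_basis b).trans (by simp)
  set i0 : Fin n := ⟨0, by omega⟩ with hi0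
  -- the bilinear form
  let B : L →ₗ[K] L →ₗ[K] K := LinearMap.mk₂ K (fun a y => f ⁅a, y⁆)
    (fun a a' y => by rw [add_lie, map_add])
    (fun t a y => by rw [smul_lie, map_smul, smul_eq_mul])
    (fun a y y' => by rw [lie_add, map_add])
    (fun t a y => by rw [lie_smul, map_smul, smul_eq_mul])
  have hBapp : ∀ a y : L, B a y = f ⁅a, y⁆ := fun _ _ => rfl
  have hstab : ∀ a : L, a ∈ lieStab K f ↔ ∀ y, B a y = 0 := fun a => Iff.rfl
  -- bracket computations
  have key : ∀ j : Fin n, ⁅x 1, x (j.1 + 1)⁆ =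
      if j.1 = 0 ∨ j.1 = n - 1 then 0 else x (j.1 + 2) := by
    intro j
    by_cases h0 : j.1 = 0
    · rw [if_pos (Or.inl h0), h0]; simp
    · by_cases h1 : j.1 = n - 1
      · rw [if_pos (Or.inr h1)]
        exact hz 1 (j.1 + 1) (by omega) (by omega) (by omega) (by omega)
          (by omega) (by omega)
      · rw [if_neg (by omega), hbr (j.1 + 1) (by omega) (by omega)]
  have hMx : ∀ k j : Fin n, f ⁅x (k.1 + 1), x (j.1 + 1)⁆ =
      if k.1 = 0 then (if j.1 = 0 ∨ j.1 = n - 1 then 0 else f (x (j.1 + 2)))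
      else if j.1 = 0 then (if k.1 = n - 1 then 0 else -f (x (k.1 + 2))) else 0 := by
    intro k j
    by_cases hk : k.1 = 0
    · rw [if_pos hk, hk]
      show f ⁅x 1, x (j.1 + 1)⁆ = _
      rw [key j]
      split_ifs with h
      · exact map_zero f
      · rfl
    · rw [if_neg hk]
      by_cases hj : j.1 = 0
      · rw [if_pos hj, hj]
        show f ⁅x (k.1 + 1), x 1⁆ = _
        rw [← lie_skew, map_neg, key k]
        by_cases hk1 : k.1 = n - 1
        · rw [if_pos (Or.inr hk1), if_pos hk1, map_zero, neg_zero]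
        · rw [if_neg (by omega), if_neg hk1]
      · rw [if_neg hj]
        rw [hz (k.1 + 1) (j.1 + 1) (by omega) (by omega) (by omega) (by omega)
          (by omega) (by omega)]
        exact map_zero f
  have hBsum : ∀ (a : L) (j : Fin n),
      B a (b j) = ∑ k : Fin n, b.repr a k * f ⁅x (k.1 + 1), x (j.1 + 1)⁆ := by
    intro a j
    conv_lhs => rw [← b.sum_repr a]
    rw [map_sum, LinearMap.sum_apply]
    refine Finset.sum_congr rfl fun k _ => ?_
    rw [map_smul, LinearMap.smul_apply, smul_eq_mul, hBapp, hb, hb]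
  have hB0 : ∀ a : L, b.repr a i0 = 0 → ∀ j : Fin n, j.1 ≠ 0 → B a (b j) = 0 := by
    intro a ha j hj
    rw [hBsum]
    refine Finset.sum_eq_zero fun k _ => ?_
    rw [hMx k j]
    by_cases hk : k.1 = 0
    · have : k = i0 := Fin.ext hk
      rw [this, ha, zero_mul]
    · rw [if_neg hk, if_neg hj, mul_zero]
  have hBj : ∀ (a : L) (j : Fin n), 1 ≤ j.1 → j.1 ≤ n - 2 →
      B a (b j) = b.repr a i0 * f (x (j.1 + 2)) := by
    intro a j hj1 hj2
    rw [hBsum, Finset.sum_eq_single i0]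
    · rw [hMx i0 j, if_pos rfl, if_neg (by omega : ¬(j.1 = 0 ∨ j.1 = n - 1))]
    · intro k _ hk
      have hk' : k.1 ≠ 0 := fun h => hk (Fin.ext h)
      rw [hMx k j, if_neg hk', if_neg (by omega : ¬j.1 = 0), mul_zero]
    · intro h; exact absurd (Finset.mem_univ _) h
  by_cases hex : ∃ s, 3 ≤ s ∧ s ≤ n ∧ f (x s) ≠ 0
  · obtain ⟨s, hs3, hsn, hps⟩ := hex
    set j₀ : Fin n := ⟨s - 2, by omega⟩ with hj₀
    have hj₀v : j₀.1 = s - 2 := rfl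
    have hj₀2 : j₀.1 + 2 = s := by rw [hj₀v]; omega
    set ψ : L →ₗ[K] K × K := LinearMap.prod (b.coord i0) (B.flip (b i0)) with hψ
    have hker : lieStab K f = LinearMap.ker ψ := by
      ext a
      rw [hstab, LinearMap.mem_ker, hψ, LinearMap.prod_apply, Prod.mk.injEq]
      rw [Function.prod]
      constructor
      · intro ha
        refine ⟨?_, ha (b i0)⟩
        have h1 := hBj a j₀ (by omega) (by omega)
        rw [hj₀2, ha (b j₀)] at h1
        rcases mul_eq_zero.mp h1.symm with h | h
        · rw [Basis.coord_apply]; exact h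
        · exact absurd h hps
      · rintro ⟨h1, h2⟩ y
        have hBa : B a = 0 := by
          refine b.ext fun j => ?_
          rw [LinearMap.zero_apply]
          by_cases hj : j.1 = 0
          · rw [show j = i0 from Fin.ext hj]
            exact h2
          · exact hB0 a (by rw [← Basis.coord_apply]; exact h1) j hj
        rw [hBa, LinearMap.zero_apply]
    have hM00 : B (b i0) (b i0) = 0 := by
      rw [hBapp, hb i0, hMx i0 i0, if_pos rfl, if_pos (Or.inl rfl)]
    have hMj₀0 : B (b j₀) (b i0) = -f (x s) := by
      rw [hBapp, hb j₀, hb i0, hMx j₀ i0, if_neg (by omega : ¬j₀.1 = 0), if_pos rfl,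
        if_neg (by omega : ¬j₀.1 = n - 1), hj₀2]
    have hj₀ne : j₀ ≠ i0 := by
      intro h
      have : j₀.1 = 0 := by rw [h]
      omega
    have hc1 : b.coord i0 (b i0) = 1 := by
      rw [Basis.coord_apply, Basis.repr_self, Finsupp.single_eq_same]
    have hc2 : b.coord i0 (b j₀) = 0 := by
      rw [Basis.coord_apply, Basis.repr_self, Finsupp.single_eq_of_ne' hj₀ne]
    have hsurj : Function.Surjective ψ := by
      rintro ⟨u, v⟩
      refine ⟨u • b i0 + (-v / f (x s)) • b j₀, ?_⟩
      rw [hψ, LinearMap.prod_apply, Function.prod, Prod.mk.injEq]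
      constructor
      · rw [map_add, map_smul, map_smul, hc1, hc2, smul_eq_mul, smul_eq_mul,
          mul_one, mul_zero, add_zero]
      · rw [LinearMap.flip_apply, map_add, LinearMap.add_apply, map_smul,
          LinearMap.smul_apply, map_smul, LinearMap.smul_apply, hM00, hMj₀0,
          smul_eq_mul, smul_eq_mul, mul_zero, zero_add]
        field_simp
    have hfr : finrank K (lieStab K f) = n - 2 := by
      have h1 := LinearMap.finrank_range_add_finrank_ker ψ
      rw [LinearMap.range_eq_top.mpr hsurj, finrank_top, hdim] at h1
      have h2 : finrank K (K × K) = 2 := by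
        rw [Module.finrank_prod, finrank_self]
      rw [h2] at h1
      rw [hker]
      omega
    exact iff_of_true hfr ⟨s, hs3, hsn, hps⟩
  · push_neg at hex
    have hstabtop : lieStab K f = ⊤ := by
      rw [Submodule.eq_top_iff']
      intro a
      rw [hstab]
      intro y
      have hBz : B = 0 := by
        refine b.ext fun k => ?_
        refine b.ext fun j => ?_
        rw [LinearMap.zero_apply, LinearMap.zero_apply, hBapp, hb, hb, hMx k j]
        split_ifs with h1 h2 h3 h4
        · rfl
        · exact hex (j.1 + 2) (by omega) (by have := j.2; omega)
        · rfl
        · rw [hex (k.1 + 2) (by omega) (by have := k.2; omega), neg_zero]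
        · rfl
      rw [hBz]
      rfl
    have hfr : finrank K (lieStab K f) = n := by rw [hstabtop, finrank_top, hdim]
    refine iff_of_false ?_ ?_
    · rw [hfr]; omega
    · push_neg; exact hex
end

section
/- For n = 2k with k ≥ 2, the index of the n-dimensional filiform Lie algebra Q_n is 2. -/
open Module

section Aux

variable {K : Type*} [Field K] {L : Type*} [LieRing L] [LieAlgebra K L]

lemma sgn_even {a b : ℕ} (h : (a + b) % 2 = 0) : ((-1 : K)) ^ a = (-1) ^ b := by
  rcases Nat.even_or_odd a with ha | ha
  · have hb : Even b := by rw [Nat.even_iff]; rw [Nat.even_iff] at ha; omega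
    rw [ha.neg_one_pow, hb.neg_one_pow]
  · have hb : Odd b := by rw [Nat.odd_iff]; rw [Nat.odd_iff] at ha; omega
    rw [ha.neg_one_pow, hb.neg_one_pow]

lemma sgn_odd {a b : ℕ} (h : (a + b) % 2 = 1) : ((-1 : K)) ^ a = -(-1) ^ b := by
  rcases Nat.even_or_odd a with ha | ha
  · have hb : Odd b := by rw [Nat.odd_iff]; rw [Nat.even_iff] at ha; omega
    rw [ha.neg_one_pow, hb.neg_one_pow, neg_neg]
  · have hb : Even b := by rw [Nat.even_iff]; rw [Nat.odd_iff] at ha; omega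
    rw [ha.neg_one_pow, hb.neg_one_pow]

lemma brz {n k : ℕ} {x : ℕ → L} (hk : 2 ≤ k) (hnk : n = 2 * k)
    (hz : ∀ i j, 1 ≤ i → i ≤ n → 1 ≤ j → j ≤ n →
      ¬(i = 1 ∧ 2 ≤ j ∧ j ≤ n - 1) → ¬(j = 1 ∧ 2 ≤ i ∧ i ≤ n - 1) →
      ¬(2 ≤ i ∧ i ≤ k ∧ j = n - i + 1) → ¬(2 ≤ j ∧ j ≤ k ∧ i = n - j + 1) →
      ⁅x i, x j⁆ = 0)
    {i j : ℕ} (h1 : 1 ≤ i) (h2 : i ≤ n) (h3 : 1 ≤ j) (h4 : j ≤ n)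
    (nc1 : ¬(i = 1 ∧ 2 ≤ j ∧ j + 1 ≤ n)) (nc2 : ¬(j = 1 ∧ 2 ≤ i ∧ i + 1 ≤ n))
    (nc3 : ¬(2 ≤ i ∧ i + 1 ≤ n ∧ i + j = n + 1)) : ⁅x i, x j⁆ = 0 := by
  refine hz i j h1 h2 h3 h4 ?_ ?_ ?_ ?_
  · rintro ⟨e1, e2, e3⟩; exact nc1 ⟨e1, e2, by omega⟩
  · rintro ⟨e1, e2, e3⟩; exact nc2 ⟨e1, e2, by omega⟩
  · rintro ⟨e1, e2, e3⟩; exact nc3 ⟨e1, by omega, by omega⟩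
  · rintro ⟨e1, e2, e3⟩; exact nc3 ⟨by omega, by omega, by omega⟩

lemma br3 {n k : ℕ} {x : ℕ → L} (hk : 2 ≤ k) (hnk : n = 2 * k)
    (hbr2 : ∀ i, 2 ≤ i → i ≤ k → ⁅x i, x (n - i + 1)⁆ = ((-1 : K)) ^ (i + 1) • x n)
    {i j : ℕ} (h2 : 2 ≤ i) (h3 : i + 1 ≤ n) (hij : i + j = n + 1) :
    ⁅x i, x j⁆ = ((-1 : K)) ^ (i + 1) • x n := by
  by_cases hik : i ≤ k
  · have hj : j = n - i + 1 := by omega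
    rw [hj]; exact hbr2 i h2 hik
  · have hthis := hbr2 j (by omega) (by omega)
    have hi' : n - j + 1 = i := by omega
    rw [hi'] at hthis
    have hsk : ((-1 : K)) ^ (i + 1) = -(-1 : K) ^ (j + 1) := sgn_odd (by omega)
    rw [← lie_skew, hthis, ← neg_smul, ← hsk]

lemma fT1 {n k : ℕ} {x : ℕ → L} (hk : 2 ≤ k) (hnk : n = 2 * k)
    (hbr1 : ∀ i, 2 ≤ i → i ≤ n - 1 → ⁅x 1, x i⁆ = x (i + 1))
    (hbr2 : ∀ i, 2 ≤ i → i ≤ k → ⁅x i, x (n - i + 1)⁆ = ((-1 : K)) ^ (i + 1) • x n)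
    (hz : ∀ i j, 1 ≤ i → i ≤ n → 1 ≤ j → j ≤ n →
      ¬(i = 1 ∧ 2 ≤ j ∧ j ≤ n - 1) → ¬(j = 1 ∧ 2 ≤ i ∧ i ≤ n - 1) →
      ¬(2 ≤ i ∧ i ≤ k ∧ j = n - i + 1) → ¬(2 ≤ j ∧ j ≤ k ∧ i = n - j + 1) →
      ⁅x i, x j⁆ = 0)
    (f : Module.Dual K L) (a : ℕ → K) {j : ℕ} (hj1 : 2 ≤ j) (hj2 : j + 1 ≤ n) :
    ∑ m ∈ Finset.Icc 1 n, a m * f ⁅x m, x j⁆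
      = a 1 * f (x (j + 1)) + a (n + 1 - j) * ((-1 : K) ^ (n + 2 - j) * f (x n)) := by
  have e1 : f ⁅x 1, x j⁆ = f (x (j + 1)) := by rw [hbr1 j hj1 (by omega)]
  have e2 : f ⁅x (n + 1 - j), x j⁆ = (-1 : K) ^ (n + 2 - j) * f (x n) := by
    rw [br3 hk hnk hbr2 (i := n + 1 - j) (by omega) (by omega) (by omega), map_smul,
      smul_eq_mul]
    congr 2
    omega
  rw [Finset.sum_eq_add_of_mem 1 (n + 1 - j) (Finset.mem_Icc.mpr (by omega))
    (Finset.mem_Icc.mpr (by omega)) (by omega) ?_, e1, e2]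
  intro c hc hcc
  obtain ⟨hc1, hc2⟩ := Finset.mem_Icc.mp hc
  obtain ⟨hne1, hne2⟩ := hcc
  rw [brz hk hnk hz hc1 hc2 (by omega) (by omega) (by omega) (by omega) (by omega),
    map_zero, mul_zero]

lemma fT2 {n k : ℕ} {x : ℕ → L} (hk : 2 ≤ k) (hnk : n = 2 * k)
    (hbr1 : ∀ i, 2 ≤ i → i ≤ n - 1 → ⁅x 1, x i⁆ = x (i + 1))
    (hz : ∀ i j, 1 ≤ i → i ≤ n → 1 ≤ j → j ≤ n →
      ¬(i = 1 ∧ 2 ≤ j ∧ j ≤ n - 1) → ¬(j = 1 ∧ 2 ≤ i ∧ i ≤ n - 1) →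
      ¬(2 ≤ i ∧ i ≤ k ∧ j = n - i + 1) → ¬(2 ≤ j ∧ j ≤ k ∧ i = n - j + 1) →
      ⁅x i, x j⁆ = 0)
    (f : Module.Dual K L) (a : ℕ → K) :
    ∑ m ∈ Finset.Icc 1 n, a m * f ⁅x m, x 1⁆
      = -∑ m ∈ Finset.Icc 2 (n - 1), a m * f (x (m + 1)) := by
  rw [← Finset.sum_subset (show Finset.Icc 2 (n - 1) ⊆ Finset.Icc 1 n from
      Finset.Icc_subset_Icc (by omega) (by omega)) ?_]
  · rw [← Finset.sum_neg_distrib]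
    refine Finset.sum_congr rfl fun m hm => ?_
    obtain ⟨hm1, hm2⟩ := Finset.mem_Icc.mp hm
    rw [← lie_skew, hbr1 m hm1 hm2, map_neg, mul_neg]
  · intro m hm hnm
    obtain ⟨hm1, hm2⟩ := Finset.mem_Icc.mp hm
    have hcase : m = 1 ∨ m = n := by
      simp only [Finset.mem_Icc, not_and, not_le] at hnm
      omega
    rcases hcase with rfl | rfl
    · rw [lie_self, map_zero, mul_zero]
    · rw [brz hk hnk hz (by omega) le_rfl (by omega) (by omega) (by omega) (by omega)
        (by omega), map_zero, mul_zero]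

lemma fT3 {n k : ℕ} {x : ℕ → L} (hk : 2 ≤ k) (hnk : n = 2 * k)
    (hz : ∀ i j, 1 ≤ i → i ≤ n → 1 ≤ j → j ≤ n →
      ¬(i = 1 ∧ 2 ≤ j ∧ j ≤ n - 1) → ¬(j = 1 ∧ 2 ≤ i ∧ i ≤ n - 1) →
      ¬(2 ≤ i ∧ i ≤ k ∧ j = n - i + 1) → ¬(2 ≤ j ∧ j ≤ k ∧ i = n - j + 1) →
      ⁅x i, x j⁆ = 0)
    (f : Module.Dual K L) (a : ℕ → K) :
    ∑ m ∈ Finset.Icc 1 n, a m * f ⁅x m, x n⁆ = 0 :=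
  Finset.sum_eq_zero fun m hm => by
    obtain ⟨h1, h2⟩ := Finset.mem_Icc.mp hm
    rw [brz hk hnk hz h1 h2 (by omega) le_rfl (by omega) (by omega) (by omega),
      map_zero, mul_zero]

end Aux

theorem stmt6 (K : Type*) [Field K] [IsAlgClosed K] [CharZero K]
    (L : Type*) [LieRing L] [LieAlgebra K L]
    (n k : ℕ) (hk : 2 ≤ k) (hnk : n = 2 * k) (x : ℕ → L)
    (hli : LinearIndependent K fun i : Fin n => x (i.1 + 1))
    (hsp : Submodule.span K (Set.range fun i : Fin n => x (i.1 + 1)) = ⊤)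
    (hbr1 : ∀ i, 2 ≤ i → i ≤ n - 1 → ⁅x 1, x i⁆ = x (i + 1))
    (hbr2 : ∀ i, 2 ≤ i → i ≤ k → ⁅x i, x (n - i + 1)⁆ = ((-1 : K)) ^ (i + 1) • x n)
    (hz : ∀ i j, 1 ≤ i → i ≤ n → 1 ≤ j → j ≤ n →
      ¬(i = 1 ∧ 2 ≤ j ∧ j ≤ n - 1) → ¬(j = 1 ∧ 2 ≤ i ∧ i ≤ n - 1) →
      ¬(2 ≤ i ∧ i ≤ k ∧ j = n - i + 1) → ¬(2 ≤ j ∧ j ≤ k ∧ i = n - j + 1) →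
      ⁅x i, x j⁆ = 0) :
    lieIndex K L = 2 := by
  classical
  have hn4 : 4 ≤ n := by omega
  let b : Basis (Fin n) K L := Basis.mk hli hsp.ge
  have hb : ∀ i : Fin n, b i = x (i.1 + 1) := fun i => Basis.mk_apply _ _ i
  haveI : FiniteDimensional K L := Module.Finite.of_basis b
  have hxb : ∀ m, 1 ≤ m → m ≤ n → ∀ h : m - 1 < n, x m = b ⟨m - 1, h⟩ := by
    intro m h1 h2 h
    rw [hb]
    show x m = x (m - 1 + 1)
    congr 1
    omega
  have hU : ∀ g : ℕ → L, ∑ i : Fin n, g (i.1 + 1) = ∑ m ∈ Finset.Icc 1 n, g m := by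
    intro g
    rw [← Finset.Ico_add_one_right_eq_Icc, Finset.sum_Ico_eq_sum_range,
      Fin.sum_univ_eq_sum_range (fun i => g (i + 1)) n]
    simp [add_comm]
  have hstab : ∀ (f : Module.Dual K L) (u : L),
      (∀ j, 1 ≤ j → j ≤ n → f ⁅u, x j⁆ = 0) → u ∈ lieStab K f := by
    intro f u hu y
    let g : L →ₗ[K] K :=
      { toFun := fun z => f ⁅u, z⁆
        map_add' := fun p q => by simp only [lie_add, map_add]
        map_smul' := fun t p => by simp only [lie_smul, map_smul, RingHom.id_apply] }
    have hker : Submodule.span K (Set.range fun i : Fin n => x (i.1 + 1)) ≤ LinearMap.ker g := by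
      rw [Submodule.span_le]
      rintro _ ⟨i, rfl⟩
      exact LinearMap.mem_ker.mpr (hu (i.1 + 1) (by omega) (by omega))
    rw [hsp] at hker
    exact LinearMap.mem_ker.mp (hker Submodule.mem_top)
  have hS : ∀ (f : Module.Dual K L) (a : ℕ → K) (j : ℕ),
      f ⁅∑ m ∈ Finset.Icc 1 n, a m • x m, x j⁆ = ∑ m ∈ Finset.Icc 1 n, a m * f ⁅x m, x j⁆ := by
    intro f a j
    let g : L →ₗ[K] K :=
      { toFun := fun z => f ⁅z, x j⁆
        map_add' := fun p q => by simp only [add_lie, map_add]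
        map_smul' := fun t p => by simp only [smul_lie, map_smul, RingHom.id_apply] }
    rw [show f ⁅∑ m ∈ Finset.Icc 1 n, a m • x m, x j⁆
        = g (∑ m ∈ Finset.Icc 1 n, a m • x m) from rfl, map_sum]
    refine Finset.sum_congr rfl fun m _ => ?_
    rw [map_smul, smul_eq_mul]
    rfl
  have hxn_mem : ∀ f : Module.Dual K L, x n ∈ lieStab K f := by
    intro f
    apply hstab
    intro j h1 h2
    rw [brz hk hnk hz (by omega) le_rfl h1 h2 (by omega) (by omega) (by omega), map_zero]
  have hlast : n - 1 < n := by omega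
  have hxn_ne : x n ≠ 0 := by
    rw [hxb n (by omega) le_rfl hlast]
    exact b.ne_zero _
  have hxn_repr : ∀ i0 : Fin n, i0 ≠ ⟨n - 1, hlast⟩ → b.repr (x n) i0 = 0 := by
    intro i0 hi0
    rw [hxb n (by omega) le_rfl hlast, b.repr_self, Finsupp.single_apply,
      if_neg fun hcon => hi0 hcon.symm]
  have hlow : ∀ f : Module.Dual K L, 2 ≤ finrank K (lieStab K f) := by
    intro f
    obtain ⟨w, hw_mem, i0, hi0, hwc⟩ :
        ∃ w, w ∈ lieStab K f ∧ ∃ i0 : Fin n, i0 ≠ ⟨n - 1, hlast⟩ ∧ b.repr w i0 ≠ 0 := by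
      by_cases hcn : f (x n) = 0
      · refine ⟨x (n - 1), ?_, ⟨n - 2, by omega⟩, ?_, ?_⟩
        · apply hstab
          intro j h1 h2
          rcases eq_or_ne j 1 with rfl | hj1
          · rw [← lie_skew, hbr1 (n - 1) (by omega) le_rfl, map_neg]
            have he : n - 1 + 1 = n := by omega
            rw [he, hcn, neg_zero]
          · rcases eq_or_ne j 2 with rfl | hj2
            · rw [br3 hk hnk hbr2 (i := n - 1) (by omega) (by omega) (by omega), map_smul,
                smul_eq_mul, hcn, mul_zero]
            · rw [brz hk hnk hz (by omega) (by omega) h1 h2 (by omega) (by omega) (by omega),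
                map_zero]
        · intro hcon
          rw [Fin.mk.injEq] at hcon
          omega
        · have he : n - 1 - 1 = n - 2 := by omega
          rw [hxb (n - 1) (by omega) (by omega) (by omega), b.repr_self]
          rw [show (⟨n - 1 - 1, by omega⟩ : Fin n) = ⟨n - 2, by omega⟩ from by
            rw [Fin.mk.injEq]; omega]
          rw [Finsupp.single_apply, if_pos rfl]
          exact one_ne_zero
      · -- f (x n) ≠ 0 : explicit kernel vector
        set a : ℕ → K := fun m =>
          if m = 1 then f (x n) else if m + 1 ≤ n then (-1 : K) ^ m * f (x (n + 2 - m)) else 0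
          with ha_def
        have ha1 : a 1 = f (x n) := by simp [ha_def]
        have ham : ∀ m, m ≠ 1 → m + 1 ≤ n → a m = (-1 : K) ^ m * f (x (n + 2 - m)) := by
          intro m hm1 hm2
          simp only [ha_def, if_neg hm1, if_pos hm2]
        refine ⟨∑ m ∈ Finset.Icc 1 n, a m • x m, ?_, ⟨0, by omega⟩, ?_, ?_⟩
        · apply hstab
          intro j h1 h2
          rw [hS]
          rcases eq_or_ne j 1 with rfl | hj1
          · rw [fT2 hk hnk hbr1 hz f a, neg_eq_zero]
            refine Finset.sum_involution (fun m _ => n + 1 - m) ?_ ?_ ?_ ?_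
            · intro m hm
              obtain ⟨hm1, hm2⟩ := Finset.mem_Icc.mp hm
              show a m * f (x (m + 1)) + a (n + 1 - m) * f (x (n + 1 - m + 1)) = 0
              rw [ham m (by omega) (by omega), ham (n + 1 - m) (by omega) (by omega)]
              have e1 : n + 2 - (n + 1 - m) = m + 1 := by omega
              have e2 : n + 1 - m + 1 = n + 2 - m := by omega
              rw [e1, e2]
              have hsg : ((-1 : K)) ^ (n + 1 - m) = -(-1 : K) ^ m := sgn_odd (by omega)
              rw [hsg]
              ring
            · intro m hm _
              obtain ⟨hm1, hm2⟩ := Finset.mem_Icc.mp hm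
              show n + 1 - m ≠ m
              omega
            · intro m hm
              obtain ⟨hm1, hm2⟩ := Finset.mem_Icc.mp hm
              show n + 1 - m ∈ Finset.Icc 2 (n - 1)
              rw [Finset.mem_Icc]
              omega
            · intro m hm
              obtain ⟨hm1, hm2⟩ := Finset.mem_Icc.mp hm
              show n + 1 - (n + 1 - m) = m
              omega
          · rcases eq_or_ne j n with rfl | hjn
            · exact fT3 hk hnk hz f a
            · rw [fT1 hk hnk hbr1 hbr2 hz f a (by omega) (by omega), ha1,
                ham (n + 1 - j) (by omega) (by omega)]
              have e1 : n + 2 - (n + 1 - j) = j + 1 := by omega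
              rw [e1]
              have hsg : ((-1 : K)) ^ (n + 1 - j) = -(-1 : K) ^ (n + 2 - j) :=
                sgn_odd (by omega)
              have hss : ((-1 : K)) ^ (n + 2 - j) * (-1 : K) ^ (n + 2 - j) = 1 := by
                rw [← pow_add]
                exact Even.neg_one_pow (by rw [Nat.even_iff]; omega)
              rw [hsg]
              linear_combination (-(f (x (j + 1)) * f (x n))) * hss
        · intro hcon
          rw [Fin.mk.injEq] at hcon
          omega
        · have hv : (∑ m ∈ Finset.Icc 1 n, a m • x m) = ∑ i : Fin n, a (i.1 + 1) • b i := by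
            rw [← hU fun m => a m • x m]
            exact Finset.sum_congr rfl fun i _ => by rw [hb]
          rw [hv, b.repr_sum_self]
          simpa [ha1] using hcn
    -- now : two independent vectors in the stabilizer
    have hxnm := hxn_mem f
    have hpair : LinearIndependent K ![w, x n] := by
      rw [LinearIndependent.pair_iff]
      intro s t hst
      have h0 := congrArg (fun z => b.repr z i0) hst
      simp only [map_add, map_smul, Finsupp.coe_add, Finsupp.coe_smul, Pi.add_apply,
        Pi.smul_apply, smul_eq_mul, map_zero, Finsupp.coe_zero, Pi.zero_apply,
        hxn_repr i0 hi0, mul_zero, add_zero] at h0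
      have hs : s = 0 := by
        rcases mul_eq_zero.mp h0 with h | h
        · exact h
        · exact absurd h hwc
      refine ⟨hs, ?_⟩
      rw [hs, zero_smul, zero_add] at hst
      rcases smul_eq_zero.mp hst with h | h
      · exact h
      · exact absurd h hxn_ne
    have hsub : Submodule.span K (Set.range ![w, x n]) ≤ lieStab K f := by
      rw [Submodule.span_le]
      rintro _ ⟨i, rfl⟩
      fin_cases i
      · exact hw_mem
      · exact hxnm
    calc (2 : ℕ) = finrank K (Submodule.span K (Set.range ![w, x n])) := by
          rw [finrank_span_eq_card hpair, Fintype.card_fin]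
      _ ≤ finrank K (lieStab K f) := Submodule.finrank_mono hsub
  let f0 : Module.Dual K L := b.coord ⟨n - 1, hlast⟩
  have hc0 : ∀ m, 1 ≤ m → m ≤ n → f0 (x m) = if m = n then 1 else 0 := by
    intro m h1 h2
    have hm1 : m - 1 < n := by omega
    rw [hxb m h1 h2 hm1]
    show b.repr (b ⟨m - 1, hm1⟩) ⟨n - 1, hlast⟩ = _
    rw [b.repr_self, Finsupp.single_apply]
    by_cases hmn : m = n
    · rw [if_pos (by rw [Fin.mk.injEq]; omega), if_pos hmn]
    · rw [if_neg (by rw [Fin.mk.injEq]; omega), if_neg hmn]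
  have hupper : lieStab K f0 ≤ Submodule.span K ({x 1 + x 2, x n} : Set L) := by
    intro u hu
    set r : ℕ → K := fun m => if h : m - 1 < n then b.repr u ⟨m - 1, h⟩ else 0 with hr_def
    have hsum : u = ∑ m ∈ Finset.Icc 1 n, r m • x m := by
      rw [← hU fun m => r m • x m]
      conv_lhs => rw [← b.sum_repr u]
      refine Finset.sum_congr rfl fun i _ => ?_
      have : r (i.1 + 1) = b.repr u i := by
        simp only [hr_def]
        rw [dif_pos (by omega : i.1 + 1 - 1 < n)]
        exact congrArg _ (Fin.ext (show i.1 + 1 - 1 = i.1 by omega))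
      rw [this, hb]
    have key : ∀ j, 1 ≤ j → j ≤ n → ∑ m ∈ Finset.Icc 1 n, r m * f0 ⁅x m, x j⁆ = 0 := by
      intro j h1 h2
      rw [← hS f0 r j, ← hsum]
      exact hu (x j)
    have hcn0 : f0 (x n) = 1 := by rw [hc0 n (by omega) le_rfl, if_pos rfl]
    have hmid : ∀ m, 3 ≤ m → m ≤ n - 1 → r m = 0 := by
      intro m h3 hm1
      have hkey := key (n + 1 - m) (by omega) (by omega)
      rw [fT1 hk hnk hbr1 hbr2 hz f0 r (by omega) (by omega)] at hkey
      have e1 : n + 1 - m + 1 = n + 2 - m := by omega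
      have e2 : n + 1 - (n + 1 - m) = m := by omega
      have e3 : n + 2 - (n + 1 - m) = m + 1 := by omega
      rw [e1, e2, e3, hc0 (n + 2 - m) (by omega) (by omega), if_neg (by omega), hcn0,
        mul_zero, mul_one, zero_add] at hkey
      rcases mul_eq_zero.mp hkey with h | h
      · exact h
      · exact absurd h (pow_ne_zero _ (neg_ne_zero.mpr one_ne_zero))
    have h12 : r 1 = r 2 := by
      have hkey := key (n - 1) (by omega) (by omega)
      rw [fT1 hk hnk hbr1 hbr2 hz f0 r (by omega) (by omega)] at hkey
      have e1 : n - 1 + 1 = n := by omega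
      have e2 : n + 1 - (n - 1) = 2 := by omega
      have e3 : n + 2 - (n - 1) = 3 := by omega
      rw [e1, e2, e3, hcn0] at hkey
      have h3 : ((-1 : K)) ^ 3 = -1 := by norm_num
      rw [h3] at hkey
      linear_combination hkey
    have hform : u = r 1 • (x 1 + x 2) + r n • x n := by
      rw [hsum,
        ← Finset.sum_subset (show ({1, 2, n} : Finset ℕ) ⊆ Finset.Icc 1 n from ?_) ?_]
      · rw [Finset.sum_insert (by simp; omega), Finset.sum_insert (by simp; omega),
          Finset.sum_singleton, smul_add, ← h12]
        abel
      · intro m hm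
        simp only [Finset.mem_insert, Finset.mem_singleton] at hm
        rw [Finset.mem_Icc]
        omega
      · intro m hmIcc hmnot
        obtain ⟨hm1, hm2⟩ := Finset.mem_Icc.mp hmIcc
        simp only [Finset.mem_insert, Finset.mem_singleton, not_or] at hmnot
        rw [hmid m (by omega) (by omega), zero_smul]
    exact Submodule.mem_span_pair.mpr ⟨r 1, r n, hform.symm⟩
  have hspan2 : finrank K (Submodule.span K ({x 1 + x 2, x n} : Set L)) ≤ 2 := by
    refine (finrank_span_le_card _).trans ?_
    rw [Set.toFinset_insert, Set.toFinset_singleton]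
    exact (Finset.card_insert_le _ _).trans (by simp)
  have hup2 : finrank K (lieStab K f0) = 2 :=
    le_antisymm ((Submodule.finrank_mono hupper).trans hspan2) (hlow f0)
  refine le_antisymm ?_ ?_
  · exact (ciInf_le (OrderBot.bddBelow _) f0).trans hup2.le
  · exact le_ciInf hlow
end

section
/- For n = 2k with k ≥ 2, a linear functional f = Σ_{i=1}^n p_i x_i* on Q_n satisfies dim Q_n^f = 2 whenever p_n ≠ 0; that is, every functional with p_n ≠ 0 is regular for Q_n. -/
open Module

private lemma sgnaux (K : Type*) [Field K] (a : ℕ) : ((-1 : K)) ^ a = (-1) ^ (a % 2) := by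
  conv_lhs => rw [← Nat.div_add_mod a 2]
  rw [pow_add, pow_mul, neg_one_sq, one_pow, one_mul]

private lemma negpow (K : Type*) [Field K] {a b : ℕ} (h : a % 2 = b % 2) :
    ((-1 : K)) ^ a = (-1) ^ b := by
  rw [sgnaux, sgnaux K b, h]

private lemma negpow' (K : Type*) [Field K] {a b : ℕ} (h : a % 2 ≠ b % 2) :
    ((-1 : K)) ^ a = -(-1) ^ b := by
  rw [sgnaux, sgnaux K b]
  rcases Nat.mod_two_eq_zero_or_one a with h1 | h1 <;>
    rcases Nat.mod_two_eq_zero_or_one b with h2 | h2 <;>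
      rw [h1, h2] <;> first | (exfalso; exact h (h1.trans h2.symm)) | norm_num

private lemma sumlie (K : Type*) {L : Type*} [Field K] [LieRing L] [LieAlgebra K L] {ι : Type*}
    (s : Finset ι) (g : ι → L) (y : L) : ⁅∑ i ∈ s, g i, y⁆ = ∑ i ∈ s, ⁅g i, y⁆ := by
  induction s using Finset.cons_induction with
  | empty => simp
  | cons a s ha ih => rw [Finset.sum_cons, Finset.sum_cons, add_lie, ih]

theorem stmt7 (K : Type*) [Field K] [IsAlgClosed K] [CharZero K]
    (L : Type*) [LieRing L] [LieAlgebra K L]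
    (n k : ℕ) (hk : 2 ≤ k) (hnk : n = 2 * k) (x : ℕ → L)
    (hli : LinearIndependent K fun i : Fin n => x (i.1 + 1))
    (hsp : Submodule.span K (Set.range fun i : Fin n => x (i.1 + 1)) = ⊤)
    (hbr1 : ∀ i, 2 ≤ i → i ≤ n - 1 → ⁅x 1, x i⁆ = x (i + 1))
    (hbr2 : ∀ i, 2 ≤ i → i ≤ k → ⁅x i, x (n - i + 1)⁆ = ((-1 : K)) ^ (i + 1) • x n)
    (hz : ∀ i j, 1 ≤ i → i ≤ n → 1 ≤ j → j ≤ n →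
      ¬(i = 1 ∧ 2 ≤ j ∧ j ≤ n - 1) → ¬(j = 1 ∧ 2 ≤ i ∧ i ≤ n - 1) →
      ¬(2 ≤ i ∧ i ≤ k ∧ j = n - i + 1) → ¬(2 ≤ j ∧ j ≤ k ∧ i = n - j + 1) →
      ⁅x i, x j⁆ = 0) :
    ∀ f : Module.Dual K L, f (x n) ≠ 0 → Module.finrank K (lieStab K f) = 2 := by
  intro f hf
  have hn4 : 4 ≤ n := by omega
  set p : ℕ → K := fun i => f (x i) with hp
  have hfp : p n ≠ 0 := hf
  -- table lemmas
  have h1 : ∀ j, 2 ≤ j → j ≤ n - 1 → f ⁅x 1, x j⁆ = p (j + 1) := by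
    intro j h2 h3; rw [hbr1 j h2 h3]
  have hpair : ∀ i j, 2 ≤ i → i ≤ n - 1 → i + j = n + 1 →
      f ⁅x i, x j⁆ = (-1) ^ (i + 1) * p n := by
    intro i j h2 h3 hij
    rcases le_or_gt i k with hik | hik
    · have hj : j = n - i + 1 := by omega
      rw [hj, hbr2 i h2 hik, map_smul, smul_eq_mul]
    · have hb2 := hbr2 j (by omega) (by omega)
      rw [show n - j + 1 = i by omega] at hb2
      rw [← lie_skew, hb2, map_neg, map_smul, smul_eq_mul,
        negpow' K (a := j + 1) (b := i + 1) (by omega)]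
      simp only [hp]
      ring
  have hz' : ∀ i j, 1 ≤ i → i ≤ n → 1 ≤ j → j ≤ n →
      ¬(i = 1 ∧ 2 ≤ j ∧ j ≤ n - 1) → ¬(j = 1 ∧ 2 ≤ i ∧ i ≤ n - 1) →
      ¬(2 ≤ i ∧ i ≤ n - 1 ∧ i + j = n + 1) → f ⁅x i, x j⁆ = 0 := by
    intro i j hi1 hin hj1 hjn hA hB hC
    rw [hz i j hi1 hin hj1 hjn hA hB (by omega) (by omega), map_zero]
  -- stabilizer membership via basis
  have hstab_iff : ∀ a : L, a ∈ lieStab K f ↔ ∀ j : Fin n, f ⁅a, x (j.1 + 1)⁆ = 0 := by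
    intro a
    constructor
    · intro h j; exact h (x (j.1 + 1))
    · intro h y
      have hy : y ∈ Submodule.span K (Set.range fun i : Fin n => x (i.1 + 1)) := by
        rw [hsp]; trivial
      induction hy using Submodule.span_induction with
      | mem z hzm => obtain ⟨j, rfl⟩ := hzm; exact h j
      | zero => simp
      | add u w hu hw hu' hw' => rw [lie_add, map_add, hu', hw', add_zero]
      | smul t u hu hu' => rw [lie_smul, map_smul, hu', smul_zero]
  have hfsum : ∀ (c : Fin n → K) (j : ℕ),
      f ⁅∑ i : Fin n, c i • x (i.1 + 1), x j⁆ = ∑ i : Fin n, c i * f ⁅x (i.1 + 1), x j⁆ := by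
    intro c j
    rw [sumlie K, map_sum]
    exact Finset.sum_congr rfl fun i _ => by rw [smul_lie, map_smul, smul_eq_mul]
  -- the vector v
  set w : ℕ → K := fun m =>
    if m = 1 then 1 else if m = n then 0 else (-1) ^ m * p (n - m + 2) / p n with hwdef
  have hw1 : w 1 = 1 := by simp [hwdef]
  have hwn : w n = 0 := by
    have hne1 : ¬ (n = 1) := by omega
    simp [hwdef, hne1]
  have hwm : ∀ m, 2 ≤ m → m ≤ n - 1 → w m = (-1) ^ m * p (n - m + 2) / p n := by
    intro m h2 h3
    simp only [hwdef]; rw [if_neg (by omega), if_neg (by omega)]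
  set v : L := ∑ i : Fin n, w (i.1 + 1) • x (i.1 + 1) with hv
  -- case evaluations
  have hcaseB : ∀ (c : Fin n → K) (j : ℕ) (_ : 2 ≤ j) (_ : j ≤ n - 1),
      f ⁅∑ i : Fin n, c i • x (i.1 + 1), x j⁆
        = c ⟨0, by omega⟩ * p (j + 1) + c ⟨n - j, by omega⟩ * ((-1) ^ j * p n) := by
    intro c j h2 h3
    rw [hfsum]
    have hne : (⟨0, by omega⟩ : Fin n) ≠ ⟨n - j, by omega⟩ :=
      Fin.ne_of_val_ne (show (0 : ℕ) ≠ n - j by omega)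
    have h0 : ∀ i ∈ Finset.univ (α := Fin n), i ≠ ⟨0, by omega⟩ ∧ i ≠ ⟨n - j, by omega⟩ →
        c i * f ⁅x (i.1 + 1), x j⁆ = 0 := by
      intro i _ ⟨hia, hib⟩
      have hlt := i.2
      have hia' : i.1 ≠ 0 := fun h => hia (Fin.ext h)
      have hib' : i.1 ≠ n - j := fun h => hib (Fin.ext h)
      rw [hz' (i.1 + 1) j (by omega) (by omega) (by omega) (by omega) (by omega) (by omega)
        (by omega), mul_zero]
    rw [Finset.sum_eq_add (⟨0, by omega⟩ : Fin n) (⟨n - j, by omega⟩ : Fin n) hne h0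
      (fun h => absurd (Finset.mem_univ _) h) (fun h => absurd (Finset.mem_univ _) h)]
    show c _ * f ⁅x (0 + 1), x j⁆ + c _ * f ⁅x (n - j + 1), x j⁆ = _
    rw [show (0 : ℕ) + 1 = 1 from rfl, h1 j h2 h3,
      hpair (n - j + 1) j (by omega) (by omega) (by omega),
      negpow K (a := n - j + 1 + 1) (b := j) (by omega)]
  have hcaseC : ∀ c : Fin n → K, f ⁅∑ i : Fin n, c i • x (i.1 + 1), x n⁆ = 0 := by
    intro c
    rw [hfsum]
    apply Finset.sum_eq_zero
    intro i _
    have hlt := i.2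
    rw [hz' (i.1 + 1) n (by omega) (by omega) (by omega) (by omega) (by omega) (by omega)
      (by omega), mul_zero]
  have hb1 : ∀ q, 2 ≤ q → q ≤ n - 1 → f ⁅x q, x 1⁆ = -p (q + 1) := by
    intro q hq1 hq2; rw [← lie_skew, map_neg, h1 q hq1 hq2]
  have hcaseA : f ⁅v, x 1⁆ = 0 := by
    rw [hv, hfsum]
    apply Finset.sum_ninvolution (g := fun i : Fin n => ⟨n - 1 - i.1, by omega⟩)
    · intro i
      have hlt := i.2
      show w (i.1 + 1) * f ⁅x (i.1 + 1), x 1⁆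
        + w (n - 1 - i.1 + 1) * f ⁅x (n - 1 - i.1 + 1), x 1⁆ = 0
      rcases eq_or_ne i.1 0 with h0 | h0
      · rw [show i.1 + 1 = 1 by omega, show n - 1 - i.1 + 1 = n by omega, hwn, zero_mul,
          add_zero, hz' 1 1 (by omega) (by omega) (by omega) (by omega) (by omega) (by omega)
          (by omega), mul_zero]
      rcases eq_or_ne i.1 (n - 1) with hl | hl
      · rw [show i.1 + 1 = n by omega, show n - 1 - i.1 + 1 = 1 by omega, hwn, zero_mul,
          zero_add, hz' 1 1 (by omega) (by omega) (by omega) (by omega) (by omega) (by omega)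
          (by omega), mul_zero]
      · rw [hwm (i.1 + 1) (by omega) (by omega), hwm (n - 1 - i.1 + 1) (by omega) (by omega),
          hb1 (i.1 + 1) (by omega) (by omega), hb1 (n - 1 - i.1 + 1) (by omega) (by omega),
          show n - (n - 1 - i.1 + 1) + 2 = i.1 + 2 by omega,
          show n - 1 - i.1 + 1 + 1 = n - (i.1 + 1) + 2 by omega,
          negpow' K (a := n - 1 - i.1 + 1) (b := i.1 + 1) (by omega)]
        simp only [hp]
        field_simp
        ring
    · intro i _ hcon
      have hlt := i.2
      have : n - 1 - i.1 = i.1 := congrArg Fin.val hcon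
      omega
    · intro i; exact Finset.mem_univ _
    · intro i
      have hlt := i.2
      exact Fin.ext (show n - 1 - (n - 1 - i.1) = i.1 by omega)
  -- v and x n are in the stabilizer
  have hvmem : v ∈ lieStab K f := by
    rw [hstab_iff]
    intro j
    have hj := j.2
    rcases eq_or_ne j.1 0 with h0 | h0
    · rw [show j.1 + 1 = 1 by omega]; exact hcaseA
    rcases eq_or_ne j.1 (n - 1) with hl | hl
    · rw [show j.1 + 1 = n by omega, hv]; exact hcaseC _
    · rw [hv, hcaseB (fun i => w (i.1 + 1)) (j.1 + 1) (by omega) (by omega)]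
      show w (0 + 1) * p (j.1 + 1 + 1) + w (n - (j.1 + 1) + 1) * ((-1) ^ (j.1 + 1) * p n) = 0
      rw [show (0 : ℕ) + 1 = 1 from rfl, hw1, one_mul,
        hwm (n - (j.1 + 1) + 1) (by omega) (by omega),
        show n - (n - (j.1 + 1) + 1) + 2 = j.1 + 1 + 1 by omega,
        negpow' K (a := n - (j.1 + 1) + 1) (b := j.1 + 1) (by omega)]
      rcases Nat.even_or_odd (j.1 + 1) with he | he
      · rw [he.neg_one_pow]; field_simp; ring
      · rw [he.neg_one_pow]; field_simp; ring
  have hxnmem : x n ∈ lieStab K f := by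
    rw [hstab_iff]
    intro j
    have hj := j.2
    exact hz' n (j.1 + 1) (by omega) (by omega) (by omega) (by omega) (by omega) (by omega)
      (by omega)
  -- combination identity
  have hcomb : ∀ s t : K, s • v + t • x n
      = ∑ i : Fin n, (s * w (i.1 + 1) + (if i.1 = n - 1 then t else 0)) • x (i.1 + 1) := by
    intro s t
    have hzero : ∀ i : Fin n, i ≠ ⟨n - 1, by omega⟩ →
        (if i.1 = n - 1 then t else 0) • x (i.1 + 1) = 0 := fun i hne => by
      rw [if_neg (fun h => hne (Fin.ext h)), zero_smul]
    have h2 : ∑ i : Fin n, (if i.1 = n - 1 then t else 0) • x (i.1 + 1) = t • x n := by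
      rw [Fintype.sum_eq_single _ hzero]
      show (if n - 1 = n - 1 then t else 0) • x (n - 1 + 1) = t • x n
      rw [if_pos rfl, show n - 1 + 1 = n by omega]
    calc s • v + t • x n
        = ∑ i : Fin n, s • (w (i.1 + 1) • x (i.1 + 1))
          + ∑ i : Fin n, (if i.1 = n - 1 then t else 0) • x (i.1 + 1) := by
          rw [h2, hv, Finset.smul_sum]
      _ = ∑ i : Fin n, (s * w (i.1 + 1) + (if i.1 = n - 1 then t else 0)) • x (i.1 + 1) := by
          rw [← Finset.sum_add_distrib]
          exact Finset.sum_congr rfl fun i _ => by rw [add_smul, smul_smul]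
  -- basis
  let b : Basis (Fin n) K L := Basis.mk hli (by rw [hsp])
  have hb : ∀ i : Fin n, b i = x (i.1 + 1) := fun i => Basis.mk_apply _ _ _
  -- linear independence of v, x n
  have hindep : LinearIndependent K ![v, x n] := by
    rw [LinearIndependent.pair_iff]
    intro s t hst
    rw [hcomb] at hst
    have h0 := Fintype.linearIndependent_iff.1 hli
      (fun i => s * w (i.1 + 1) + (if i.1 = n - 1 then t else 0)) hst
    constructor
    · have hs : s * w 1 + (if (0 : ℕ) = n - 1 then t else 0) = 0 := h0 ⟨0, by omega⟩
      rw [hw1, mul_one, if_neg (by omega), add_zero] at hs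
      exact hs
    · have ht : s * w (n - 1 + 1) + (if (n - 1 : ℕ) = n - 1 then t else 0) = 0 :=
        h0 ⟨n - 1, by omega⟩
      rw [show n - 1 + 1 = n by omega, hwn, mul_zero, if_pos rfl, zero_add] at ht
      exact ht
  -- span equality
  have heq : lieStab K f = Submodule.span K (Set.range ![v, x n]) := by
    apply le_antisymm
    · intro a ha
      have hrep := (b.sum_repr a).symm
      simp only [hb] at hrep
      have hkey : ∀ i : Fin n, 1 ≤ i.1 → i.1 ≤ n - 2 →
          b.repr a i = b.repr a ⟨0, by omega⟩ * w (i.1 + 1) := by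
        intro i h1i h2i
        have hcond := (hstab_iff a).1 ha ⟨n - i.1 - 1, by omega⟩
        rw [show (n - i.1 - 1 : ℕ) + 1 = n - i.1 by omega] at hcond
        rw [hrep] at hcond
        rw [hcaseB _ (n - i.1) (by omega) (by omega)] at hcond
        have hfin : (⟨n - (n - i.1), by omega⟩ : Fin n) = i :=
          Fin.ext (show n - (n - i.1) = i.1 by omega)
        rw [hfin] at hcond
        rw [negpow K (a := n - i.1) (b := i.1) (by omega)] at hcond
        rw [hwm (i.1 + 1) (by omega) (by omega),
          show n - (i.1 + 1) + 2 = n - i.1 + 1 by omega,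
          negpow' K (a := i.1 + 1) (b := i.1) (by omega)]
        rcases Nat.even_or_odd i.1 with he | he
        · rw [he.neg_one_pow] at hcond ⊢
          field_simp
          linear_combination hcond
        · rw [he.neg_one_pow] at hcond ⊢
          field_simp
          linear_combination -hcond
      have hsum : a = (b.repr a ⟨0, by omega⟩) • v + (b.repr a ⟨n - 1, by omega⟩) • x n := by
        rw [hcomb]
        conv_lhs => rw [hrep]
        apply Finset.sum_congr rfl
        intro i _
        have hlt := i.2
        congr 1
        rcases eq_or_ne i.1 0 with h0 | h0
        · have hieq : i = ⟨0, by omega⟩ := Fin.ext (show i.1 = 0 from h0)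
          rw [show (i.1 : ℕ) = 0 from h0, if_neg (by omega), hieq,
            show (0 : ℕ) + 1 = 1 from rfl, hw1, mul_one, add_zero]
        rcases eq_or_ne i.1 (n - 1) with hl | hl
        · have hieq : i = ⟨n - 1, by omega⟩ := Fin.ext (show i.1 = n - 1 from hl)
          rw [show (i.1 : ℕ) = n - 1 from hl, if_pos rfl, hieq,
            show n - 1 + 1 = n by omega, hwn, mul_zero, zero_add]
        · rw [if_neg hl, add_zero]
          exact hkey i (by omega) (by omega)
      rw [hsum]
      exact Submodule.add_mem _
        (Submodule.smul_mem _ _ (Submodule.subset_span ⟨0, rfl⟩))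
        (Submodule.smul_mem _ _ (Submodule.subset_span ⟨1, rfl⟩))
    · rw [Submodule.span_le]
      rintro _ ⟨i, rfl⟩
      fin_cases i
      · exact hvmem
      · exact hxnmem
  rw [heq, finrank_span_eq_card hindep]
  simp
end

section
/- The 5-dimensional filiform Lie algebra F_5^2 with nonzero brackets [x_1,x_i] = x_{i+1} for i = 2,3,4 and [x_2,x_3] = x_5 has index 1. -/
open Module

theorem stmt10 (K : Type*) [Field K] [IsAlgClosed K] [CharZero K]
    (L : Type*) [LieRing L] [LieAlgebra K L]
    (x : ℕ → L)
    (hli : LinearIndependent K fun i : Fin 5 => x (i.1 + 1))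
    (hsp : Submodule.span K (Set.range fun i : Fin 5 => x (i.1 + 1)) = ⊤)
    (hbr1 : ∀ i, 2 ≤ i → i ≤ 4 → ⁅x 1, x i⁆ = x (i + 1))
    (hbr2 : ⁅x 2, x 3⁆ = x 5)
    (hz : ∀ i j, 1 ≤ i → i ≤ 5 → 1 ≤ j → j ≤ 5 →
      ¬(i = 1 ∧ 2 ≤ j ∧ j ≤ 4) → ¬(j = 1 ∧ 2 ≤ i ∧ i ≤ 4) → ¬(i = 2 ∧ j = 3) → ¬(i = 3 ∧ j = 2) →
      ⁅x i, x j⁆ = 0) :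
    lieIndex K L = 1 := by
  have hsp' : ⊤ ≤ Submodule.span K (Set.range fun i : Fin 5 => x (i.1 + 1)) := hsp.ge
  let b : Basis (Fin 5) K L := Basis.mk hli hsp'
  have hb : ∀ i : Fin 5, b i = x (i.1 + 1) := fun i => Basis.mk_apply hli hsp' i
  haveI : FiniteDimensional K L := Module.Finite.of_basis b
  have hx5ne : x 5 ≠ 0 := by
    have := b.ne_zero 4
    rwa [hb 4] at this
  -- x 5 is central
  have hcent : ∀ y : L, ⁅x 5, y⁆ = 0 := by
    intro y
    have hy : y ∈ Submodule.span K (Set.range fun i : Fin 5 => x (i.1 + 1)) := by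
      rw [hsp]; trivial
    induction hy using Submodule.span_induction with
    | mem y hy =>
        obtain ⟨i, rfl⟩ := hy
        have := i.isLt
        exact hz 5 _ (by omega) (by omega) (by omega) (by omega) (by omega) (by omega)
          (by omega) (by omega)
    | zero => simp
    | add u v _ _ ihu ihv => rw [lie_add, ihu, ihv, add_zero]
    | smul t u _ ihu => rw [lie_smul, ihu, smul_zero]
  have hx5mem : ∀ f : Module.Dual K L, x 5 ∈ lieStab K f := by
    intro f y
    rw [hcent y, map_zero]
  -- bracket table
  have h11 : ⁅x 1, x 1⁆ = 0 := hz 1 1 (by omega) (by omega) (by omega) (by omega) (by omega) (by omega) (by omega) (by omega)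
  have h12 : ⁅x 1, x 2⁆ = x 3 := hbr1 2 (by omega) (by omega)
  have h13 : ⁅x 1, x 3⁆ = x 4 := hbr1 3 (by omega) (by omega)
  have h14 : ⁅x 1, x 4⁆ = x 5 := hbr1 4 (by omega) (by omega)
  have h21 : ⁅x 2, x 1⁆ = -x 3 := by rw [← lie_skew, h12]
  have h22 : ⁅x 2, x 2⁆ = 0 := hz 2 2 (by omega) (by omega) (by omega) (by omega) (by omega) (by omega) (by omega) (by omega)
  have h23 : ⁅x 2, x 3⁆ = x 5 := hbr2
  have h24 : ⁅x 2, x 4⁆ = 0 := hz 2 4 (by omega) (by omega) (by omega) (by omega) (by omega) (by omega) (by omega) (by omega)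
  have h31 : ⁅x 3, x 1⁆ = -x 4 := by rw [← lie_skew, h13]
  have h32 : ⁅x 3, x 2⁆ = -x 5 := by rw [← lie_skew, h23]
  have h33 : ⁅x 3, x 3⁆ = 0 := hz 3 3 (by omega) (by omega) (by omega) (by omega) (by omega) (by omega) (by omega) (by omega)
  have h34 : ⁅x 3, x 4⁆ = 0 := hz 3 4 (by omega) (by omega) (by omega) (by omega) (by omega) (by omega) (by omega) (by omega)
  have h41 : ⁅x 4, x 1⁆ = -x 5 := by rw [← lie_skew, h14]
  have h42 : ⁅x 4, x 2⁆ = 0 := hz 4 2 (by omega) (by omega) (by omega) (by omega) (by omega) (by omega) (by omega) (by omega)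
  have h43 : ⁅x 4, x 3⁆ = 0 := hz 4 3 (by omega) (by omega) (by omega) (by omega) (by omega) (by omega) (by omega) (by omega)
  have h44 : ⁅x 4, x 4⁆ = 0 := hz 4 4 (by omega) (by omega) (by omega) (by omega) (by omega) (by omega) (by omega) (by omega)
  -- the functional
  have hb0 : b 0 = x 1 := by simpa using hb 0
  have hb1 : b 1 = x 2 := by simpa using hb 1
  have hb2 : b 2 = x 3 := by simpa using hb 2
  have hb3 : b 3 = x 4 := by simpa using hb 3
  have hb4 : b 4 = x 5 := by simpa using hb 4
  set f0 : Module.Dual K L := b.coord 4 with hf0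
  have fb : ∀ i : Fin 5, f0 (b i) = if i = 4 then 1 else 0 := by
    intro i
    rw [hf0, Basis.coord_apply, b.repr_self]
    simp [Finsupp.single_apply, eq_comm]
  have f3 : f0 (x 3) = 0 := by rw [← hb2]; simpa using fb 2
  have f4 : f0 (x 4) = 0 := by rw [← hb3]; simpa using fb 3
  have f5 : f0 (x 5) = 1 := by rw [← hb4]; simpa using fb 4
  have hstab_eq : lieStab K f0 = Submodule.span K {x 5} := by
    apply le_antisymm
    · intro z hz'
      have hrep := b.sum_repr z
      set c : Fin 5 → K := fun i => b.repr z i with hc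
      let brv : L → L →ₗ[K] L := fun v =>
        { toFun := fun y => ⁅y, v⁆
          map_add' := fun a b' => add_lie a b' v
          map_smul' := fun t a => smul_lie t a v }
      have hexp : ∀ v : L, f0 ⁅z, v⁆ = ∑ i : Fin 5, c i * f0 ⁅b i, v⁆ := by
        intro v
        conv_lhs => rw [← hrep]
        show f0 (brv v (∑ i : Fin 5, c i • b i)) = _
        rw [map_sum, map_sum]
        refine Finset.sum_congr rfl fun i _ => ?_
        rw [map_smul, map_smul, smul_eq_mul]
        rfl
      have e1 := hz' (x 1)
      have e2 := hz' (x 2)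
      have e3 := hz' (x 3)
      have e4 := hz' (x 4)
      rw [hexp] at e1 e2 e3 e4
      simp only [Fin.sum_univ_five, hb0, hb1, hb2, hb3, hb4, h11, h21, h31, h41, h12, h22,
        h32, h42, h13, h23, h33, h43, h14, h24, h34, h44, hcent, map_zero, map_neg, f3, f4, f5,
        mul_zero, mul_one, mul_neg, zero_add, add_zero, neg_zero] at e1 e2 e3 e4
      have hc3 : c 3 = 0 := by linear_combination -e1
      have hc0 : c 0 = 0 := by linear_combination e4
      have hc1 : c 1 = 0 := e3
      have hc2 : c 2 = 0 := neg_eq_zero.mp e2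
      have hzz : z = c 4 • x 5 := by
        conv_lhs => rw [← hrep]
        rw [Fin.sum_univ_five]
        show c 0 • b 0 + c 1 • b 1 + c 2 • b 2 + c 3 • b 3 + c 4 • b 4 = c 4 • x 5
        rw [hc0, hc1, hc2, hc3, hb4]
        simp
      rw [hzz]
      exact Submodule.smul_mem _ _ (Submodule.mem_span_singleton_self _)
    · rw [Submodule.span_le]
      rintro _ rfl
      exact hx5mem f0
  have hval : finrank K (lieStab K f0) = 1 := by
    rw [hstab_eq, finrank_span_singleton hx5ne]
  have hlow : ∀ f : Module.Dual K L, 1 ≤ finrank K (lieStab K f) := by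
    intro f
    have : Nontrivial (lieStab K f) := by
      refine nontrivial_of_ne ⟨x 5, hx5mem f⟩ 0 ?_
      intro h
      exact hx5ne (congrArg Subtype.val h)
    exact Module.finrank_pos_iff.mpr this
  refine le_antisymm ?_ (le_ciInf hlow)
  calc lieIndex K L ≤ finrank K (lieStab K f0) := ciInf_le' _ f0
    _ = 1 := hval
end

section
/- The 6-dimensional filiform Lie algebra F_6^3 with nonzero brackets [x_1,x_i] = x_{i+1} for i = 2,3,4,5, [x_2,x_5] = x_6, and [x_3,x_4] = −x_6 (this is Q_6) has index 2. -/
open Module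

lemma mem_lieStab_iff {K : Type*} [Field K] {L : Type*} [LieRing L] [LieAlgebra K L]
    (f : Module.Dual K L) (u : L) : u ∈ lieStab K f ↔ ∀ y, f ⁅u, y⁆ = 0 := Iff.rfl

lemma mem_lieStab_of_span {K : Type*} [Field K] {L : Type*} [LieRing L] [LieAlgebra K L]
    {x : ℕ → L}
    (hsp : Submodule.span K (Set.range fun i : Fin 6 => x (i.1 + 1)) = ⊤)
    (f : Module.Dual K L) (u : L)
    (h : ∀ i : Fin 6, f ⁅u, x (i.1 + 1)⁆ = 0) : u ∈ lieStab K f := by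
  rw [mem_lieStab_iff]
  intro y
  have hy : y ∈ Submodule.span K (Set.range fun i : Fin 6 => x (i.1 + 1)) := by
    rw [hsp]; trivial
  induction hy using Submodule.span_induction with
  | mem p hp => obtain ⟨i, rfl⟩ := hp; exact h i
  | zero => simp
  | add p q _ _ hp hq => rw [lie_add, map_add, hp, hq, add_zero]
  | smul t p _ hp => rw [lie_smul, map_smul, hp, smul_zero]

lemma lb_aux {K : Type*} [Field K] {L : Type*} [LieRing L] [LieAlgebra K L]
    (x : ℕ → L)
    (hli : LinearIndependent K fun i : Fin 6 => x (i.1 + 1))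
    (hsp : Submodule.span K (Set.range fun i : Fin 6 => x (i.1 + 1)) = ⊤)
    (hbr1 : ∀ i, 2 ≤ i → i ≤ 5 → ⁅x 1, x i⁆ = x (i + 1))
    (hbr2 : ⁅x 2, x 5⁆ = x 6)
    (hbr3 : ⁅x 3, x 4⁆ = -x 6)
    (hz : ∀ i j, 1 ≤ i → i ≤ 6 → 1 ≤ j → j ≤ 6 →
      ¬(i = 1 ∧ 2 ≤ j ∧ j ≤ 5) → ¬(j = 1 ∧ 2 ≤ i ∧ i ≤ 5) → ¬(i = 2 ∧ j = 5) → ¬(i = 5 ∧ j = 2) → ¬(i = 3 ∧ j = 4) → ¬(i = 4 ∧ j = 3) →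
      ⁅x i, x j⁆ = 0)
    (f : Module.Dual K L) :
    ∃ u w : L, u ∈ lieStab K f ∧ w ∈ lieStab K f ∧ LinearIndependent K ![u, w] := by
  have Z : ∀ i j : ℕ, (1 ≤ i ∧ i ≤ 6 ∧ 1 ≤ j ∧ j ≤ 6 ∧ ¬(i = 1 ∧ 2 ≤ j ∧ j ≤ 5) ∧
      ¬(j = 1 ∧ 2 ≤ i ∧ i ≤ 5) ∧ ¬(i = 2 ∧ j = 5) ∧ ¬(i = 5 ∧ j = 2) ∧ ¬(i = 3 ∧ j = 4) ∧
      ¬(i = 4 ∧ j = 3)) → ⁅x i, x j⁆ = 0 := by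
    rintro i j ⟨a, b, c, d, e, g, h1, h2, h3, h4⟩
    exact hz i j a b c d e g h1 h2 h3 h4
  have h12 : ⁅x 1, x 2⁆ = x 3 := hbr1 2 le_rfl (by norm_num)
  have h13 : ⁅x 1, x 3⁆ = x 4 := hbr1 3 (by norm_num) (by norm_num)
  have h14 : ⁅x 1, x 4⁆ = x 5 := hbr1 4 (by norm_num) (by norm_num)
  have h15 : ⁅x 1, x 5⁆ = x 6 := hbr1 5 (by norm_num) (by norm_num)
  have h21 : ⁅x 2, x 1⁆ = -x 3 := by rw [← lie_skew, h12]
  have h31 : ⁅x 3, x 1⁆ = -x 4 := by rw [← lie_skew, h13]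
  have h41 : ⁅x 4, x 1⁆ = -x 5 := by rw [← lie_skew, h14]
  have h51 : ⁅x 5, x 1⁆ = -x 6 := by rw [← lie_skew, h15]
  have h52 : ⁅x 5, x 2⁆ = -x 6 := by rw [← lie_skew, hbr2]
  have h43 : ⁅x 4, x 3⁆ = x 6 := by rw [← lie_skew, hbr3, neg_neg]
  have z16 : ⁅x 1, x 6⁆ = 0 := Z 1 6 (by omega)
  have z23 : ⁅x 2, x 3⁆ = 0 := Z 2 3 (by omega)
  have z24 : ⁅x 2, x 4⁆ = 0 := Z 2 4 (by omega)
  have z26 : ⁅x 2, x 6⁆ = 0 := Z 2 6 (by omega)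
  have z32 : ⁅x 3, x 2⁆ = 0 := Z 3 2 (by omega)
  have z35 : ⁅x 3, x 5⁆ = 0 := Z 3 5 (by omega)
  have z36 : ⁅x 3, x 6⁆ = 0 := Z 3 6 (by omega)
  have z42 : ⁅x 4, x 2⁆ = 0 := Z 4 2 (by omega)
  have z45 : ⁅x 4, x 5⁆ = 0 := Z 4 5 (by omega)
  have z46 : ⁅x 4, x 6⁆ = 0 := Z 4 6 (by omega)
  have z53 : ⁅x 5, x 3⁆ = 0 := Z 5 3 (by omega)
  have z54 : ⁅x 5, x 4⁆ = 0 := Z 5 4 (by omega)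
  have z55 : ⁅x 5, x 5⁆ = 0 := lie_self _
  have z56 : ⁅x 5, x 6⁆ = 0 := Z 5 6 (by omega)
  have z6 : ∀ j, 1 ≤ j → j ≤ 6 → ⁅x 6, x j⁆ = 0 := fun j a b => Z 6 j (by omega)
  have hli' := Fintype.linearIndependent_iff.mp hli
  have hw : x 6 ∈ lieStab K f := by
    refine mem_lieStab_of_span hsp f _ (fun i => ?_)
    rw [z6 (i.1 + 1) (by omega) (by have := i.2; omega), map_zero]
  by_cases h6 : f (x 6) = 0
  · refine ⟨x 5, x 6, ?_, hw, ?_⟩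
    · refine mem_lieStab_of_span hsp f _ (fun i => ?_)
      fin_cases i
      · rw [show (0:ℕ) + 1 = 1 from rfl, h51, map_neg, h6, neg_zero]
      · rw [h52, map_neg, h6, neg_zero]
      · rw [z53, map_zero]
      · rw [z54, map_zero]
      · rw [z55, map_zero]
      · rw [z56, map_zero]
    · rw [LinearIndependent.pair_iff]
      intro s t hst
      have hsum : ∑ i : Fin 6, (![0, 0, 0, 0, s, t] : Fin 6 → K) i • x (i.1 + 1) = 0 := by
        rw [Fin.sum_univ_six]
        simpa using hst
      have h4 := hli' _ hsum 4
      have h5 := hli' _ hsum 5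
      simp at h4 h5
      exact ⟨h4, h5⟩
  · refine ⟨f (x 6) • x 1 - f (x 6) • x 2 + f (x 5) • x 3 - f (x 4) • x 4 + f (x 3) • x 5,
      x 6, ?_, hw, ?_⟩
    · refine mem_lieStab_of_span hsp f _ (fun i => ?_)
      fin_cases i
      · simp only [show (0:ℕ) + 1 = 1 from rfl, add_lie, sub_lie, smul_lie, lie_self, h21, h31,
          h41, h51, map_add, map_sub, map_smul, map_neg, map_zero, smul_zero, smul_neg,
          smul_eq_mul, mul_neg]
        ring
      · simp only [add_lie, sub_lie, smul_lie, lie_self, h12, z32, z42, h52, map_add, map_sub,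
          map_smul, map_neg, map_zero, smul_zero, smul_neg, smul_eq_mul, mul_neg]
        ring
      · simp only [add_lie, sub_lie, smul_lie, lie_self, h13, z23, h43, z53, map_add, map_sub,
          map_smul, map_neg, map_zero, smul_zero, smul_neg, smul_eq_mul, mul_neg]
        ring
      · simp only [add_lie, sub_lie, smul_lie, lie_self, h14, z24, hbr3, z54, map_add, map_sub,
          map_smul, map_neg, map_zero, smul_zero, smul_neg, smul_eq_mul, mul_neg]
        ring
      · simp only [add_lie, sub_lie, smul_lie, lie_self, h15, hbr2, z35, z45, map_add, map_sub,
          map_smul, map_neg, map_zero, smul_zero, smul_neg, smul_eq_mul, mul_neg]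
        ring
      · simp only [add_lie, sub_lie, smul_lie, z16, z26, z36, z46, z56, map_add, map_sub,
          map_smul, map_zero, smul_zero]
        ring
    · rw [LinearIndependent.pair_iff]
      intro s t hst
      have hsum : ∑ i : Fin 6,
          (![s * f (x 6), -(s * f (x 6)), s * f (x 5), -(s * f (x 4)), s * f (x 3), t] :
            Fin 6 → K) i • x (i.1 + 1) = 0 := by
        rw [Fin.sum_univ_six]
        simp only [Matrix.cons_val_zero, Matrix.cons_val_one, Matrix.head_cons]
        rw [← hst]
        simp [smul_sub, smul_add, smul_smul, neg_smul]
        abel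
      have h0 := hli' _ hsum 0
      have h5 := hli' _ hsum 5
      simp at h0 h5
      constructor
      · rcases h0 with h | h
        · exact h
        · exact absurd h h6
      · exact h5

lemma ub_aux {K : Type*} [Field K] {L : Type*} [LieRing L] [LieAlgebra K L]
    (x : ℕ → L)
    (hli : LinearIndependent K fun i : Fin 6 => x (i.1 + 1))
    (hsp : Submodule.span K (Set.range fun i : Fin 6 => x (i.1 + 1)) = ⊤)
    (hbr1 : ∀ i, 2 ≤ i → i ≤ 5 → ⁅x 1, x i⁆ = x (i + 1))
    (hbr2 : ⁅x 2, x 5⁆ = x 6)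
    (hbr3 : ⁅x 3, x 4⁆ = -x 6)
    (hz : ∀ i j, 1 ≤ i → i ≤ 6 → 1 ≤ j → j ≤ 6 →
      ¬(i = 1 ∧ 2 ≤ j ∧ j ≤ 5) → ¬(j = 1 ∧ 2 ≤ i ∧ i ≤ 5) → ¬(i = 2 ∧ j = 5) → ¬(i = 5 ∧ j = 2) → ¬(i = 3 ∧ j = 4) → ¬(i = 4 ∧ j = 3) →
      ⁅x i, x j⁆ = 0) :
    ∃ f : Module.Dual K L,
      lieStab K f ≤ Submodule.span K (Set.range ![x 1 - x 2, x 6]) := by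
  have Z : ∀ i j : ℕ, (1 ≤ i ∧ i ≤ 6 ∧ 1 ≤ j ∧ j ≤ 6 ∧ ¬(i = 1 ∧ 2 ≤ j ∧ j ≤ 5) ∧
      ¬(j = 1 ∧ 2 ≤ i ∧ i ≤ 5) ∧ ¬(i = 2 ∧ j = 5) ∧ ¬(i = 5 ∧ j = 2) ∧ ¬(i = 3 ∧ j = 4) ∧
      ¬(i = 4 ∧ j = 3)) → ⁅x i, x j⁆ = 0 := by
    rintro i j ⟨a, b, c, d, e, g, h1, h2, h3, h4⟩
    exact hz i j a b c d e g h1 h2 h3 h4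
  have h12 : ⁅x 1, x 2⁆ = x 3 := hbr1 2 le_rfl (by norm_num)
  have h13 : ⁅x 1, x 3⁆ = x 4 := hbr1 3 (by norm_num) (by norm_num)
  have h14 : ⁅x 1, x 4⁆ = x 5 := hbr1 4 (by norm_num) (by norm_num)
  have h15 : ⁅x 1, x 5⁆ = x 6 := hbr1 5 (by norm_num) (by norm_num)
  have h21 : ⁅x 2, x 1⁆ = -x 3 := by rw [← lie_skew, h12]
  have h31 : ⁅x 3, x 1⁆ = -x 4 := by rw [← lie_skew, h13]
  have h41 : ⁅x 4, x 1⁆ = -x 5 := by rw [← lie_skew, h14]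
  have h51 : ⁅x 5, x 1⁆ = -x 6 := by rw [← lie_skew, h15]
  have h52 : ⁅x 5, x 2⁆ = -x 6 := by rw [← lie_skew, hbr2]
  have h43 : ⁅x 4, x 3⁆ = x 6 := by rw [← lie_skew, hbr3, neg_neg]
  have z23 : ⁅x 2, x 3⁆ = 0 := Z 2 3 (by omega)
  have z24 : ⁅x 2, x 4⁆ = 0 := Z 2 4 (by omega)
  have z32 : ⁅x 3, x 2⁆ = 0 := Z 3 2 (by omega)
  have z35 : ⁅x 3, x 5⁆ = 0 := Z 3 5 (by omega)
  have z42 : ⁅x 4, x 2⁆ = 0 := Z 4 2 (by omega)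
  have z45 : ⁅x 4, x 5⁆ = 0 := Z 4 5 (by omega)
  have z53 : ⁅x 5, x 3⁆ = 0 := Z 5 3 (by omega)
  have z54 : ⁅x 5, x 4⁆ = 0 := Z 5 4 (by omega)
  have z61 : ⁅x 6, x 1⁆ = 0 := Z 6 1 (by omega)
  have z63 : ⁅x 6, x 3⁆ = 0 := Z 6 3 (by omega)
  have z64 : ⁅x 6, x 4⁆ = 0 := Z 6 4 (by omega)
  have z65 : ⁅x 6, x 5⁆ = 0 := Z 6 5 (by omega)
  set b : Basis (Fin 6) K L := Basis.mk hli hsp.ge with hbdef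
  have hbx : ∀ i : Fin 6, b i = x (i.1 + 1) := fun i => by rw [hbdef, Basis.mk_apply]
  set f : Module.Dual K L := b.coord 5 with hfdef
  have hfb : ∀ i : Fin 6, f (b i) = if i = (5 : Fin 6) then 1 else 0 := fun i => by
    rw [hfdef, Basis.coord_apply, Basis.repr_self, Finsupp.single_apply]
  have hb0 : b 0 = x 1 := hbx 0
  have hb1 : b 1 = x 2 := hbx 1
  have hb2 : b 2 = x 3 := hbx 2
  have hb3 : b 3 = x 4 := hbx 3
  have hb4 : b 4 = x 5 := hbx 4
  have hb5 : b 5 = x 6 := hbx 5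
  have hf3 : f (x 3) = 0 := by rw [← hb2, hfb 2, if_neg (by decide)]
  have hf4 : f (x 4) = 0 := by rw [← hb3, hfb 3, if_neg (by decide)]
  have hf5 : f (x 5) = 0 := by rw [← hb4, hfb 4, if_neg (by decide)]
  have hf6 : f (x 6) = 1 := by rw [← hb5, hfb 5, if_pos rfl]
  refine ⟨f, ?_⟩
  intro z hzm
  have hm : ∀ y, f ⁅z, y⁆ = 0 := hzm
  set c0 := b.repr z 0 with hc0
  set c1 := b.repr z 1 with hc1
  set c2v := b.repr z 2 with hc2
  set c3v := b.repr z 3 with hc3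
  set c4v := b.repr z 4 with hc4
  set c5 := b.repr z 5 with hc5
  have hzeq : z = c0 • x 1 + c1 • x 2 + c2v • x 3 + c3v • x 4 +
      c4v • x 5 + c5 • x 6 := by
    conv_lhs => rw [← b.sum_repr z]
    rw [Fin.sum_univ_six, hb0, hb1, hb2, hb3, hb4, hb5]
  have e1 := hm (x 1)
  have e3 := hm (x 3)
  have e4 := hm (x 4)
  have e5 := hm (x 5)
  rw [hzeq] at e1 e3 e4 e5
  simp only [add_lie, smul_lie, lie_self, h21, h31, h41, h51, z61, h13, z23, h43, z53,
    z63, h14, z24, hbr3, z64, z54, h15, hbr2, z35, z45, z65, map_add, map_smul, map_neg, map_zero,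
    smul_zero, smul_neg, smul_eq_mul, hf3, hf4, hf5, hf6] at e1 e3 e4 e5
  -- extract coefficient equations
  have ec4 : c4v = 0 := by linear_combination -e1
  have ec3 : c3v = 0 := by linear_combination e3
  have ec2 : c2v = 0 := by linear_combination -e4
  have ec01 : c1 = -c0 := by linear_combination e5
  have hzeq2 : z = c0 • (x 1 - x 2) + c5 • x 6 := by
    rw [hzeq, ec4, ec3, ec2, ec01]
    module
  rw [hzeq2]
  refine Submodule.add_mem _ (Submodule.smul_mem _ _ (Submodule.subset_span ?_))
    (Submodule.smul_mem _ _ (Submodule.subset_span ?_))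
  · exact ⟨0, rfl⟩
  · exact ⟨1, rfl⟩

set_option maxHeartbeats 1000000 in
theorem stmt11 (K : Type*) [Field K] [IsAlgClosed K] [CharZero K]
    (L : Type*) [LieRing L] [LieAlgebra K L]
    (x : ℕ → L)
    (hli : LinearIndependent K fun i : Fin 6 => x (i.1 + 1))
    (hsp : Submodule.span K (Set.range fun i : Fin 6 => x (i.1 + 1)) = ⊤)
    (hbr1 : ∀ i, 2 ≤ i → i ≤ 5 → ⁅x 1, x i⁆ = x (i + 1))
    (hbr2 : ⁅x 2, x 5⁆ = x 6)
    (hbr3 : ⁅x 3, x 4⁆ = -x 6)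
    (hz : ∀ i j, 1 ≤ i → i ≤ 6 → 1 ≤ j → j ≤ 6 →
      ¬(i = 1 ∧ 2 ≤ j ∧ j ≤ 5) → ¬(j = 1 ∧ 2 ≤ i ∧ i ≤ 5) → ¬(i = 2 ∧ j = 5) → ¬(i = 5 ∧ j = 2) → ¬(i = 3 ∧ j = 4) → ¬(i = 4 ∧ j = 3) →
      ⁅x i, x j⁆ = 0) :
    lieIndex K L = 2 := by
  classical
  haveI : Module.Finite K L := Module.Finite.of_basis (Basis.mk hli hsp.ge)
  have lb : ∀ f : Module.Dual K L, 2 ≤ finrank K (lieStab K f) := by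
    intro f
    obtain ⟨u, w, hu, hw, hind⟩ := lb_aux x hli hsp hbr1 hbr2 hbr3 hz f
    have hv : LinearIndependent K (![(⟨u, hu⟩ : lieStab K f), ⟨w, hw⟩]) := by
      apply LinearIndependent.of_comp (lieStab K f).subtype
      convert hind
      funext i; fin_cases i <;> rfl
    simpa using hv.fintype_card_le_finrank
  obtain ⟨f₀, hf₀⟩ := ub_aux x hli hsp hbr1 hbr2 hbr3 hz
  have ub : finrank K (lieStab K f₀) ≤ 2 := by
    refine le_trans (Submodule.finrank_mono hf₀) ?_
    have h := finrank_range_le_card (R := K) ![x 1 - x 2, x 6]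
    unfold Set.finrank at h
    exact h.trans (by simp)
  rw [lieIndex]
  refine le_antisymm ?_ ?_
  · exact le_trans (ciInf_le' _ f₀) ub
  · exact le_ciInf lb
end

section
/- The 6-dimensional filiform Lie algebra F_6^4 with nonzero brackets [x_1,x_i] = x_{i+1} for i = 2,3,4,5, [x_2,x_3] = x_5, and [x_2,x_4] = x_6 has index 2. -/
open Module

theorem stmt12 (K : Type*) [Field K] [IsAlgClosed K] [CharZero K]
    (L : Type*) [LieRing L] [LieAlgebra K L]
    (x : ℕ → L)
    (hli : LinearIndependent K fun i : Fin 6 => x (i.1 + 1))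
    (hsp : Submodule.span K (Set.range fun i : Fin 6 => x (i.1 + 1)) = ⊤)
    (hbr1 : ∀ i, 2 ≤ i → i ≤ 5 → ⁅x 1, x i⁆ = x (i + 1))
    (hbr2 : ⁅x 2, x 3⁆ = x 5)
    (hbr3 : ⁅x 2, x 4⁆ = x 6)
    (hz : ∀ i j, 1 ≤ i → i ≤ 6 → 1 ≤ j → j ≤ 6 →
      ¬(i = 1 ∧ 2 ≤ j ∧ j ≤ 5) → ¬(j = 1 ∧ 2 ≤ i ∧ i ≤ 5) → ¬(i = 2 ∧ j = 3) → ¬(i = 3 ∧ j = 2) → ¬(i = 2 ∧ j = 4) → ¬(i = 4 ∧ j = 2) →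
      ⁅x i, x j⁆ = 0) :
    lieIndex K L = 2 := by
  classical
  -- bracket table
  have B12 : ⁅x 1, x 2⁆ = x 3 := hbr1 2 (by norm_num) (by norm_num)
  have B13 : ⁅x 1, x 3⁆ = x 4 := hbr1 3 (by norm_num) (by norm_num)
  have B14 : ⁅x 1, x 4⁆ = x 5 := hbr1 4 (by norm_num) (by norm_num)
  have B15 : ⁅x 1, x 5⁆ = x 6 := hbr1 5 (by norm_num) (by norm_num)
  have B16 : ⁅x 1, x 6⁆ = 0 := hz 1 6 (by omega) (by omega) (by omega) (by omega)
    (by omega) (by omega) (by omega) (by omega) (by omega) (by omega)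
  have B11 : ⁅x 1, x 1⁆ = 0 := lie_self _
  have B21 : ⁅x 2, x 1⁆ = -x 3 := by rw [← lie_skew, B12]
  have B22 : ⁅x 2, x 2⁆ = 0 := lie_self _
  have B23 : ⁅x 2, x 3⁆ = x 5 := hbr2
  have B24 : ⁅x 2, x 4⁆ = x 6 := hbr3
  have B25 : ⁅x 2, x 5⁆ = 0 := hz 2 5 (by omega) (by omega) (by omega) (by omega)
    (by omega) (by omega) (by omega) (by omega) (by omega) (by omega)
  have B26 : ⁅x 2, x 6⁆ = 0 := hz 2 6 (by omega) (by omega) (by omega) (by omega)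
    (by omega) (by omega) (by omega) (by omega) (by omega) (by omega)
  have B31 : ⁅x 3, x 1⁆ = -x 4 := by rw [← lie_skew, B13]
  have B32 : ⁅x 3, x 2⁆ = -x 5 := by rw [← lie_skew, B23]
  have Zhi : ∀ i j, 3 ≤ i → i ≤ 6 → 3 ≤ j → j ≤ 6 → ⁅x i, x j⁆ = 0 := fun i j h1 h2 h3 h4 =>
    hz i j (by omega) h2 (by omega) h4 (by omega) (by omega) (by omega) (by omega) (by omega)
      (by omega)
  have B33 : ⁅x 3, x 3⁆ = 0 := Zhi 3 3 (by omega) (by omega) (by omega) (by omega)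
  have B34 : ⁅x 3, x 4⁆ = 0 := Zhi 3 4 (by omega) (by omega) (by omega) (by omega)
  have B35 : ⁅x 3, x 5⁆ = 0 := Zhi 3 5 (by omega) (by omega) (by omega) (by omega)
  have B36 : ⁅x 3, x 6⁆ = 0 := Zhi 3 6 (by omega) (by omega) (by omega) (by omega)
  have B41 : ⁅x 4, x 1⁆ = -x 5 := by rw [← lie_skew, B14]
  have B42 : ⁅x 4, x 2⁆ = -x 6 := by rw [← lie_skew, B24]
  have B43 : ⁅x 4, x 3⁆ = 0 := Zhi 4 3 (by omega) (by omega) (by omega) (by omega)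
  have B44 : ⁅x 4, x 4⁆ = 0 := Zhi 4 4 (by omega) (by omega) (by omega) (by omega)
  have B45 : ⁅x 4, x 5⁆ = 0 := Zhi 4 5 (by omega) (by omega) (by omega) (by omega)
  have B46 : ⁅x 4, x 6⁆ = 0 := Zhi 4 6 (by omega) (by omega) (by omega) (by omega)
  have B51 : ⁅x 5, x 1⁆ = -x 6 := by rw [← lie_skew, B15]
  have B52 : ⁅x 5, x 2⁆ = 0 := hz 5 2 (by omega) (by omega) (by omega) (by omega)
    (by omega) (by omega) (by omega) (by omega) (by omega) (by omega)
  have B53 : ⁅x 5, x 3⁆ = 0 := Zhi 5 3 (by omega) (by omega) (by omega) (by omega)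
  have B54 : ⁅x 5, x 4⁆ = 0 := Zhi 5 4 (by omega) (by omega) (by omega) (by omega)
  have B55 : ⁅x 5, x 5⁆ = 0 := lie_self _
  have B56 : ⁅x 5, x 6⁆ = 0 := Zhi 5 6 (by omega) (by omega) (by omega) (by omega)
  have B61 : ⁅x 6, x 1⁆ = 0 := hz 6 1 (by omega) (by omega) (by omega) (by omega)
    (by omega) (by omega) (by omega) (by omega) (by omega) (by omega)
  have B62 : ⁅x 6, x 2⁆ = 0 := hz 6 2 (by omega) (by omega) (by omega) (by omega)
    (by omega) (by omega) (by omega) (by omega) (by omega) (by omega)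
  have B63 : ⁅x 6, x 3⁆ = 0 := Zhi 6 3 (by omega) (by omega) (by omega) (by omega)
  have B64 : ⁅x 6, x 4⁆ = 0 := Zhi 6 4 (by omega) (by omega) (by omega) (by omega)
  have B65 : ⁅x 6, x 5⁆ = 0 := Zhi 6 5 (by omega) (by omega) (by omega) (by omega)
  have B66 : ⁅x 6, x 6⁆ = 0 := lie_self _
  -- basis
  have hsp' : ⊤ ≤ Submodule.span K (Set.range fun i : Fin 6 => x (i.1 + 1)) := hsp.ge
  let b : Basis (Fin 6) K L := Basis.mk hli hsp'
  have hb : ∀ i : Fin 6, b i = x (i.1 + 1) := fun i => Basis.mk_apply hli hsp' i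
  haveI : Module.Finite K L := Module.Finite.of_basis b
  -- membership helper
  have memStab : ∀ (f : Module.Dual K L) (v : L),
      (∀ i : Fin 6, f ⁅v, x (i.1 + 1)⁆ = 0) → v ∈ lieStab K f := by
    intro f v h y
    have hgy : (f ∘ₗ (LieAlgebra.ad K L v)) = 0 := by
      refine b.ext fun i => ?_
      rw [hb i]
      simpa [LieAlgebra.ad_apply] using h i
    simpa [LieAlgebra.ad_apply] using LinearMap.congr_fun hgy y
  have stabmem : ∀ (f : Module.Dual K L) (v : L), v ∈ lieStab K f → ∀ y, f ⁅v, y⁆ = 0 :=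
    fun f v hv => hv
  -- two independent elements give finrank ≥ 2
  have key : ∀ (S : Submodule K L) (u v : L), u ∈ S → v ∈ S →
      LinearIndependent K ![u, v] → 2 ≤ finrank K S := by
    intro S u v hu hv hli2
    have hcomp : (S.subtype ∘ ![(⟨u, hu⟩ : S), ⟨v, hv⟩] : Fin 2 → L) = ![u, v] := by
      funext i; fin_cases i <;> rfl
    have h2 := (LinearIndependent.of_comp S.subtype
      (by rw [hcomp]; exact hli2)).fintype_card_le_finrank
    simpa using h2
  -- linear independence of subpairs
  have subpair : ∀ (p q : Fin 6), p ≠ q → LinearIndependent K ![x (p.1+1), x (q.1+1)] := by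
    intro p q hpq
    have hinj : Function.Injective ![p, q] := by
      intro a c hac
      fin_cases a <;> fin_cases c
      · rfl
      · exact absurd hac hpq
      · exact absurd hac.symm hpq
      · rfl
    have h := hli.comp ![p, q] hinj
    have : ((fun i : Fin 6 => x (i.1 + 1)) ∘ ![p, q] : Fin 2 → L) = ![x (p.1+1), x (q.1+1)] := by
      funext i; fin_cases i <;> rfl
    rwa [this] at h
  -- lower bound
  have lb : ∀ f : Module.Dual K L, 2 ≤ finrank K (lieStab K f) := by
    intro f
    have hx6 : x 6 ∈ lieStab K f := by
      refine memStab f (x 6) fun i => ?_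
      fin_cases i
      · show f ⁅x 6, x 1⁆ = 0; rw [B61]; simp
      · show f ⁅x 6, x 2⁆ = 0; rw [B62]; simp
      · show f ⁅x 6, x 3⁆ = 0; rw [B63]; simp
      · show f ⁅x 6, x 4⁆ = 0; rw [B64]; simp
      · show f ⁅x 6, x 5⁆ = 0; rw [B65]; simp
      · show f ⁅x 6, x 6⁆ = 0; rw [B66]; simp
    by_cases h6 : f (x 6) = 0
    · have hx5 : x 5 ∈ lieStab K f := by
        refine memStab f (x 5) fun i => ?_
        fin_cases i
        · show f ⁅x 5, x 1⁆ = 0; rw [B51]; simp [h6]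
        · show f ⁅x 5, x 2⁆ = 0; rw [B52]; simp
        · show f ⁅x 5, x 3⁆ = 0; rw [B53]; simp
        · show f ⁅x 5, x 4⁆ = 0; rw [B54]; simp
        · show f ⁅x 5, x 5⁆ = 0; rw [B55]; simp
        · show f ⁅x 5, x 6⁆ = 0; rw [B56]; simp
      exact key _ _ _ hx5 hx6 (by simpa using subpair 4 5 (by decide))
    · set a := (f (x 6))^2 with ha
      set c := (f (x 5))^2 - f (x 4) * f (x 6) with hc
      set d := -(f (x 5) * f (x 6)) with hd
      set w := a • x 3 + d • x 4 + c • x 5 with hw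
      have hwmem : w ∈ lieStab K f := by
        refine memStab f w fun i => ?_
        fin_cases i
        · show f ⁅w, x 1⁆ = 0
          rw [hw]; simp only [add_lie, smul_lie, B31, B41, B51, map_add, map_smul, smul_eq_mul,
            map_neg, mul_neg, smul_neg]
          rw [ha, hc, hd]; ring
        · show f ⁅w, x 2⁆ = 0
          rw [hw]; simp only [add_lie, smul_lie, B32, B42, B52, map_add, map_smul, smul_eq_mul,
            map_neg, mul_neg, smul_neg, smul_zero, map_zero]
          rw [ha, hd]; ring
        · show f ⁅w, x 3⁆ = 0
          rw [hw]; simp [add_lie, smul_lie, B33, B43, B53]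
        · show f ⁅w, x 4⁆ = 0
          rw [hw]; simp [add_lie, smul_lie, B34, B44, B54]
        · show f ⁅w, x 5⁆ = 0
          rw [hw]; simp [add_lie, smul_lie, B35, B45, B55]
        · show f ⁅w, x 6⁆ = 0
          rw [hw]; simp [add_lie, smul_lie, B36, B46, B56]
      have hliw : LinearIndependent K ![x 6, w] := by
        rw [LinearIndependent.pair_iff]
        intro s t hst
        have hsum : ∑ i : Fin 6, (![0, 0, t * a, t * d, t * c, s]) i • x (i.1 + 1) = 0 := by
          rw [Fin.sum_univ_six]
          show (0:K) • x 1 + (0:K) • x 2 + (t * a) • x 3 + (t * d) • x 4 + (t * c) • x 5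
              + s • x 6 = 0
          rw [← hst, hw]; module
        have hg := Fintype.linearIndependent_iff.mp hli _ hsum
        have h2 : t * a = 0 := hg 2
        have h5 : s = 0 := hg 5
        have ht : t = 0 := by
          rcases mul_eq_zero.mp h2 with h | h
          · exact h
          · exact absurd (pow_eq_zero_iff (n := 2) (by norm_num) |>.mp (ha ▸ h)) h6
        exact ⟨h5, ht⟩
      exact key _ _ _ hx6 hwmem hliw
  -- upper bound: the coordinate functional of x 6
  set f0 : Module.Dual K L := b.coord 5 with hf0
  have key5 : ∀ j : Fin 6, f0 (b j) = if j = (5 : Fin 6) then 1 else 0 := fun j => by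
    rw [hf0, Basis.coord_apply, Basis.repr_self_apply]
  have e1 : f0 (x 1) = 0 := by
    rw [show x 1 = b 0 from (hb 0).symm]; exact (key5 0).trans (if_neg (by decide))
  have e2 : f0 (x 2) = 0 := by
    rw [show x 2 = b 1 from (hb 1).symm]; exact (key5 1).trans (if_neg (by decide))
  have e3 : f0 (x 3) = 0 := by
    rw [show x 3 = b 2 from (hb 2).symm]; exact (key5 2).trans (if_neg (by decide))
  have e4 : f0 (x 4) = 0 := by
    rw [show x 4 = b 3 from (hb 3).symm]; exact (key5 3).trans (if_neg (by decide))
  have e5 : f0 (x 5) = 0 := by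
    rw [show x 5 = b 4 from (hb 4).symm]; exact (key5 4).trans (if_neg (by decide))
  have e6 : f0 (x 6) = 1 := by
    rw [show x 6 = b 5 from (hb 5).symm]; exact (key5 5).trans (if_pos rfl)
  have hx3 : x 3 ∈ lieStab K f0 := by
    refine memStab f0 (x 3) fun i => ?_
    fin_cases i
    · show f0 ⁅x 3, x 1⁆ = 0; rw [B31, map_neg, e4, neg_zero]
    · show f0 ⁅x 3, x 2⁆ = 0; rw [B32, map_neg, e5, neg_zero]
    · show f0 ⁅x 3, x 3⁆ = 0; rw [B33, map_zero]
    · show f0 ⁅x 3, x 4⁆ = 0; rw [B34, map_zero]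
    · show f0 ⁅x 3, x 5⁆ = 0; rw [B35, map_zero]
    · show f0 ⁅x 3, x 6⁆ = 0; rw [B36, map_zero]
  have hx6' : x 6 ∈ lieStab K f0 := by
    refine memStab f0 (x 6) fun i => ?_
    fin_cases i
    · show f0 ⁅x 6, x 1⁆ = 0; rw [B61, map_zero]
    · show f0 ⁅x 6, x 2⁆ = 0; rw [B62, map_zero]
    · show f0 ⁅x 6, x 3⁆ = 0; rw [B63, map_zero]
    · show f0 ⁅x 6, x 4⁆ = 0; rw [B64, map_zero]
    · show f0 ⁅x 6, x 5⁆ = 0; rw [B65, map_zero]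
    · show f0 ⁅x 6, x 6⁆ = 0; rw [B66, map_zero]
  set T : Submodule K L := Submodule.span K (Set.range ![x 3, x 6]) with hT
  have hT_le : T ≤ lieStab K f0 := by
    rw [hT, Submodule.span_le]
    rintro y ⟨i, rfl⟩
    fin_cases i
    · exact hx3
    · exact hx6'
  have hle_T : lieStab K f0 ≤ T := by
    intro v hv
    obtain ⟨c, hv6⟩ : ∃ c : Fin 6 → K, c 0 • x 1 + c 1 • x 2 + c 2 • x 3 + c 3 • x 4
        + c 4 • x 5 + c 5 • x 6 = v := by
      refine ⟨fun i => b.repr v i, ?_⟩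
      have h := b.sum_repr v
      rw [Fin.sum_univ_six, hb 0, hb 1, hb 2, hb 3, hb 4, hb 5] at h
      exact h
    have hvy := stabmem f0 v hv
    have h1 : c 4 = 0 := by
      have h := hvy (x 1)
      rw [← hv6] at h
      simpa [add_lie, smul_lie, B11, B21, B31, B41, B51, B61, e3, e4, e5, e6, smul_neg] using h
    have h2 : c 3 = 0 := by
      have h := hvy (x 2)
      rw [← hv6] at h
      simpa [add_lie, smul_lie, B12, B22, B32, B42, B52, B62, e3, e5, e6, smul_neg] using h
    have h3 : c 1 = 0 := by
      have h := hvy (x 4)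
      rw [← hv6] at h
      simpa [add_lie, smul_lie, B14, B24, B34, B44, B54, B64, e5, e6] using h
    have h4 : c 0 = 0 := by
      have h := hvy (x 5)
      rw [← hv6] at h
      simpa [add_lie, smul_lie, B15, B25, B35, B45, B55, B65, e6] using h
    have hm : c 2 • x 3 + c 5 • x 6 ∈ T := by
      refine add_mem ?_ ?_
      · exact Submodule.smul_mem _ _
          (Submodule.subset_span (show x 3 ∈ Set.range ![x 3, x 6] from ⟨0, rfl⟩))
      · exact Submodule.smul_mem _ _
          (Submodule.subset_span (show x 6 ∈ Set.range ![x 3, x 6] from ⟨1, rfl⟩))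
    rw [← hv6, h1, h2, h3, h4]
    simpa using hm
  have hEq : lieStab K f0 = T := le_antisymm hle_T hT_le
  have li36 : LinearIndependent K ![x 3, x 6] := subpair 2 5 (by decide)
  have hfr : finrank K (lieStab K f0) = 2 := by
    rw [hEq, hT]
    simpa using finrank_span_eq_card li36
  show (⨅ f : Module.Dual K L, finrank K (lieStab K f)) = 2
  refine le_antisymm ?_ (le_ciInf lb)
  calc (⨅ f : Module.Dual K L, finrank K (lieStab K f)) ≤ finrank K (lieStab K f0) :=
        ciInf_le (OrderBot.bddBelow _) f0
    _ = 2 := hfr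
end

section
/- The 7-dimensional filiform Lie algebra F_7^4 with nonzero brackets [x_1,x_i] = x_{i+1} for i = 2,...,6, [x_2,x_3] = x_6, [x_2,x_4] = x_7, [x_2,x_5] = x_7, [x_3,x_4] = −x_7 has index 1. -/
open Module

theorem stmt13 (K : Type*) [Field K] [IsAlgClosed K] [CharZero K]
    (L : Type*) [LieRing L] [LieAlgebra K L]
    (x : ℕ → L)
    (hli : LinearIndependent K fun i : Fin 7 => x (i.1 + 1))
    (hsp : Submodule.span K (Set.range fun i : Fin 7 => x (i.1 + 1)) = ⊤)
    (hbr1 : ∀ i, 2 ≤ i → i ≤ 6 → ⁅x 1, x i⁆ = x (i + 1))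
    (hbr2 : ⁅x 2, x 3⁆ = x 6)
    (hbr3 : ⁅x 2, x 4⁆ = x 7)
    (hbr4 : ⁅x 2, x 5⁆ = x 7)
    (hbr5 : ⁅x 3, x 4⁆ = -x 7)
    (hz : ∀ i j, 1 ≤ i → i ≤ 7 → 1 ≤ j → j ≤ 7 →
      ¬(i = 1 ∧ 2 ≤ j ∧ j ≤ 6) → ¬(j = 1 ∧ 2 ≤ i ∧ i ≤ 6) → ¬(i = 2 ∧ j = 3) → ¬(i = 3 ∧ j = 2) → ¬(i = 2 ∧ j = 4) → ¬(i = 4 ∧ j = 2) → ¬(i = 2 ∧ j = 5) → ¬(i = 5 ∧ j = 2) → ¬(i = 3 ∧ j = 4) → ¬(i = 4 ∧ j = 3) →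
      ⁅x i, x j⁆ = 0) :
    lieIndex K L = 1 := by
  classical
  -- basis
  let b : Basis (Fin 7) K L := Basis.mk hli hsp.ge
  haveI : FiniteDimensional K L := Module.Finite.of_basis b
  have hb : ∀ i : Fin 7, b i = x (i.1 + 1) := fun i => by
    simp [b, Basis.coe_mk]
  have hx7 : x 7 ≠ 0 := by
    have := b.ne_zero ⟨6, by norm_num⟩
    rwa [hb ⟨6, by norm_num⟩] at this
  -- bracket table
  have h12 : ⁅x 1, x 2⁆ = x 3 := hbr1 2 (by norm_num) (by norm_num)
  have h13 : ⁅x 1, x 3⁆ = x 4 := hbr1 3 (by norm_num) (by norm_num)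
  have h14 : ⁅x 1, x 4⁆ = x 5 := hbr1 4 (by norm_num) (by norm_num)
  have h15 : ⁅x 1, x 5⁆ = x 6 := hbr1 5 (by norm_num) (by norm_num)
  have h16 : ⁅x 1, x 6⁆ = x 7 := hbr1 6 (by norm_num) (by norm_num)
  have h21 : ⁅x 2, x 1⁆ = -x 3 := by rw [← lie_skew, h12]
  have h31 : ⁅x 3, x 1⁆ = -x 4 := by rw [← lie_skew, h13]
  have h41 : ⁅x 4, x 1⁆ = -x 5 := by rw [← lie_skew, h14]
  have h51 : ⁅x 5, x 1⁆ = -x 6 := by rw [← lie_skew, h15]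
  have h61 : ⁅x 6, x 1⁆ = -x 7 := by rw [← lie_skew, h16]
  have h32 : ⁅x 3, x 2⁆ = -x 6 := by rw [← lie_skew, hbr2]
  have h42 : ⁅x 4, x 2⁆ = -x 7 := by rw [← lie_skew, hbr3]
  have h52 : ⁅x 5, x 2⁆ = -x 7 := by rw [← lie_skew, hbr4]
  have h43 : ⁅x 4, x 3⁆ = x 7 := by rw [← lie_skew, hbr5, neg_neg]
  have z17 : ⁅x 1, x 7⁆ = 0 := by apply hz <;> omega
  have z71 : ⁅x 7, x 1⁆ = 0 := by apply hz <;> omega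
  have z26 : ⁅x 2, x 6⁆ = 0 := by apply hz <;> omega
  have z62 : ⁅x 6, x 2⁆ = 0 := by apply hz <;> omega
  have z27 : ⁅x 2, x 7⁆ = 0 := by apply hz <;> omega
  have z72 : ⁅x 7, x 2⁆ = 0 := by apply hz <;> omega
  have z35 : ⁅x 3, x 5⁆ = 0 := by apply hz <;> omega
  have z53 : ⁅x 5, x 3⁆ = 0 := by apply hz <;> omega
  have z36 : ⁅x 3, x 6⁆ = 0 := by apply hz <;> omega
  have z63 : ⁅x 6, x 3⁆ = 0 := by apply hz <;> omega
  have z37 : ⁅x 3, x 7⁆ = 0 := by apply hz <;> omega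
  have z73 : ⁅x 7, x 3⁆ = 0 := by apply hz <;> omega
  have z45 : ⁅x 4, x 5⁆ = 0 := by apply hz <;> omega
  have z54 : ⁅x 5, x 4⁆ = 0 := by apply hz <;> omega
  have z46 : ⁅x 4, x 6⁆ = 0 := by apply hz <;> omega
  have z64 : ⁅x 6, x 4⁆ = 0 := by apply hz <;> omega
  have z47 : ⁅x 4, x 7⁆ = 0 := by apply hz <;> omega
  have z74 : ⁅x 7, x 4⁆ = 0 := by apply hz <;> omega
  have z56 : ⁅x 5, x 6⁆ = 0 := by apply hz <;> omega
  have z65 : ⁅x 6, x 5⁆ = 0 := by apply hz <;> omega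
  have z57 : ⁅x 5, x 7⁆ = 0 := by apply hz <;> omega
  have z75 : ⁅x 7, x 5⁆ = 0 := by apply hz <;> omega
  have z67 : ⁅x 6, x 7⁆ = 0 := by apply hz <;> omega
  have z76 : ⁅x 7, x 6⁆ = 0 := by apply hz <;> omega
  have z77 : ⁅x 7, x 7⁆ = 0 := lie_self _
  -- x7 is central
  have hcent : ∀ y : L, ⁅x 7, y⁆ = 0 := by
    intro y
    have hy : y ∈ Submodule.span K (Set.range fun i : Fin 7 => x (i.1 + 1)) := by
      rw [hsp]; trivial
    induction hy using Submodule.span_induction with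
    | mem v hv =>
      obtain ⟨i, rfl⟩ := hv
      fin_cases i
      · exact z71
      · exact z72
      · exact z73
      · exact z74
      · exact z75
      · exact z76
      · exact z77
    | zero => simp
    | add u v _ _ hu hv => rw [lie_add, hu, hv, add_zero]
    | smul t u _ hu => rw [lie_smul, hu, smul_zero]
  -- the distinguished functional
  let f : Module.Dual K L := b.coord ⟨6, by norm_num⟩
  have fv : ∀ i : Fin 7, f (x (i.1 + 1)) = if i = ⟨6, by norm_num⟩ then 1 else 0 := by
    intro i
    rw [← hb i]
    simp [f, Basis.coord_apply, Basis.repr_self, Finsupp.single_apply, eq_comm]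
  have f1 : f (x 1) = 0 := fv ⟨0, by norm_num⟩
  have f2 : f (x 2) = 0 := fv ⟨1, by norm_num⟩
  have f3 : f (x 3) = 0 := fv ⟨2, by norm_num⟩
  have f4 : f (x 4) = 0 := fv ⟨3, by norm_num⟩
  have f5 : f (x 5) = 0 := fv ⟨4, by norm_num⟩
  have f6 : f (x 6) = 0 := fv ⟨5, by norm_num⟩
  have f7 : f (x 7) = 1 := fv ⟨6, by norm_num⟩
  -- the stabilizer of f is span of x 7
  have hstab : lieStab K f = Submodule.span K {x 7} := by
    apply le_antisymm
    · intro v hv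
      have hrep := b.sum_repr v
      rw [Fin.sum_univ_seven] at hrep
      simp only [hb] at hrep
      have hv3 : ((3 : Fin 7) : ℕ) = 3 := rfl
      have hv4 : ((4 : Fin 7) : ℕ) = 4 := rfl
      have hv5 : ((5 : Fin 7) : ℕ) = 5 := rfl
      have hv6 : ((6 : Fin 7) : ℕ) = 6 := rfl
      norm_num [hv3, hv4, hv5, hv6] at hrep
      set a0 := b.repr v 0 with ha0
      set a1 := b.repr v 1 with ha1
      set a2 := b.repr v 2 with ha2
      set a3 := b.repr v 3 with ha3
      set a4 := b.repr v 4 with ha4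
      set a5 := b.repr v 5 with ha5
      set a6 := b.repr v 6 with ha6
      -- hrep : a0 • x 1 + ... + a6 • x 7 = v
      have key : ∀ j, f ⁅v, x j⁆ = 0 := fun j => hv (x j)
      have e1 := key 1
      have e2 := key 2
      have e3 := key 3
      have e4 := key 4
      have e5 := key 5
      have e6 := key 6
      rw [← hrep] at e1 e2 e3 e4 e5 e6
      simp only [add_lie, smul_lie, map_add, map_smul, lie_self,
        h12, h13, h14, h15, h16, h21, h31, h41, h51, h61, h32, h42, h52, h43,
        hbr2, hbr3, hbr4, hbr5,
        z17, z71, z26, z62, z27, z72, z35, z53, z36, z63, z37, z73,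
        z45, z54, z46, z64, z47, z74, z56, z65, z57, z75, z67, z76, z77,
        f1, f2, f3, f4, f5, f6, f7, map_zero, map_neg, smul_eq_mul,
        mul_zero, mul_one, mul_neg, add_zero, zero_add, neg_zero] at e1 e2 e3 e4 e5 e6
      -- e6 : a0 = 0 ; e5 : a1 = 0 ; e4 : a1 - a2 = 0 ; e3 : a3 = 0 ; e2 : -(a3+a4)=0 ; e1 : -a5 = 0
      have ha0' : a0 = 0 := by linear_combination e6
      have ha1' : a1 = 0 := by linear_combination e5
      have ha2' : a2 = 0 := by linear_combination e5 - e4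
      have ha3' : a3 = 0 := by linear_combination e3
      have ha4' : a4 = 0 := by linear_combination -e2 - e3
      have ha5' : a5 = 0 := by linear_combination -e1
      rw [Submodule.mem_span_singleton]
      exact ⟨a6, by rw [← hrep, ha0', ha1', ha2', ha3', ha4', ha5']; simp⟩
    · rw [Submodule.span_le, Set.singleton_subset_iff]
      intro y
      rw [hcent y, map_zero]
  have hfr : finrank K (lieStab K f) = 1 := by
    rw [hstab, finrank_span_singleton hx7]
  -- conclude
  apply le_antisymm
  · calc lieIndex K L ≤ finrank K (lieStab K f) := ciInf_le (OrderBot.bddBelow _) f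
    _ = 1 := hfr
  · rw [lieIndex]
    apply le_ciInf
    intro g
    have hmem : x 7 ∈ lieStab K g := fun y => by rw [hcent y, map_zero]
    have : Submodule.span K {x 7} ≤ lieStab K g := by
      rw [Submodule.span_le, Set.singleton_subset_iff]; exact hmem
    calc (1 : ℕ) = finrank K (Submodule.span K {x 7}) := (finrank_span_singleton hx7).symm
    _ ≤ finrank K (lieStab K g) := Submodule.finrank_mono this
end

section
/- The 7-dimensional filiform Lie algebra F_7^7 with nonzero brackets [x_1,x_i] = x_{i+1} for i = 2,...,6 and [x_2,x_3] = x_7 has index 3. -/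
open Module

set_option maxHeartbeats 4000000 in
theorem stmt14 (K : Type*) [Field K] [IsAlgClosed K] [CharZero K]
    (L : Type*) [LieRing L] [LieAlgebra K L]
    (x : ℕ → L)
    (hli : LinearIndependent K fun i : Fin 7 => x (i.1 + 1))
    (hsp : Submodule.span K (Set.range fun i : Fin 7 => x (i.1 + 1)) = ⊤)
    (hbr1 : ∀ i, 2 ≤ i → i ≤ 6 → ⁅x 1, x i⁆ = x (i + 1))
    (hbr2 : ⁅x 2, x 3⁆ = x 7)
    (hz : ∀ i j, 1 ≤ i → i ≤ 7 → 1 ≤ j → j ≤ 7 →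
      ¬(i = 1 ∧ 2 ≤ j ∧ j ≤ 6) → ¬(j = 1 ∧ 2 ≤ i ∧ i ≤ 6) → ¬(i = 2 ∧ j = 3) → ¬(i = 3 ∧ j = 2) →
      ⁅x i, x j⁆ = 0) :
    lieIndex K L = 3 := by
  classical
  let b : Basis (Fin 7) K L := Basis.mk hli (by rw [hsp])
  have hb : ∀ i : Fin 7, b i = x (i.1 + 1) := fun i => Basis.mk_apply hli _ i
  have hfin : Module.Finite K L := Module.Finite.of_basis b
  have hdim : finrank K L = 7 := by rw [finrank_eq_card_basis b]; simp
  have key : ∀ i j, 1 ≤ i → i ≤ 7 → 1 ≤ j → j ≤ 7 → ⁅x i, x j⁆ =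
      if i = 1 ∧ 2 ≤ j ∧ j ≤ 6 then x (j+1)
      else if j = 1 ∧ 2 ≤ i ∧ i ≤ 6 then -x (i+1)
      else if i = 2 ∧ j = 3 then x 7
      else if i = 3 ∧ j = 2 then -x 7
      else 0 := by
    intro i j h1 h2 h3 h4
    split_ifs with h5 h6 h7 h8
    · obtain ⟨rfl, hj⟩ := h5; exact hbr1 j hj.1 hj.2
    · obtain ⟨rfl, hi⟩ := h6
      rw [← lie_skew, hbr1 i hi.1 hi.2]
    · obtain ⟨rfl, rfl⟩ := h7; exact hbr2
    · obtain ⟨rfl, rfl⟩ := h8; rw [← lie_skew, hbr2]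
    · exact hz i j h1 h2 h3 h4 h5 h6 h7 h8
  have mem_stab : ∀ (f : Module.Dual K L) (v : L),
      v ∈ lieStab K f ↔ ∀ i : Fin 7, f ⁅v, x (i.1+1)⁆ = 0 := by
    intro f v
    constructor
    · intro h i; exact h _
    · intro h y
      have hy : y ∈ Submodule.span K (Set.range fun i : Fin 7 => x (i.1+1)) := by
        rw [hsp]; trivial
      induction hy using Submodule.span_induction with
      | mem z hzz => obtain ⟨i, rfl⟩ := hzz; exact h i
      | zero => simp
      | add a c _ _ ha hc => rw [lie_add, map_add, ha, hc, add_zero]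
      | smul t a _ ha => rw [lie_smul, map_smul, ha, smul_zero]
  -- LOWER BOUND
  have lower : ∀ f : Module.Dual K L, 3 ≤ finrank K (lieStab K f) := by
    intro f
    let Φ : L →ₗ[K] (Fin 7 → K) :=
      LinearMap.pi fun i => f ∘ₗ (-(LieAlgebra.ad K L (x (i.1 + 1))))
    have hΦ : ∀ v i, Φ v i = f ⁅v, x (i.1+1)⁆ := by
      intro v i
      show f ((-(LieAlgebra.ad K L (x (i.1 + 1)))) v) = _
      rw [LinearMap.neg_apply, LieAlgebra.ad_apply, ← lie_skew]
      simp
    have hker : lieStab K f = LinearMap.ker Φ := by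
      ext v
      rw [mem_stab, LinearMap.mem_ker, funext_iff]
      simp only [hΦ, Pi.zero_apply]
    -- range bound
    set G : Fin 4 → (Fin 7 → K) :=
      ![Φ (x 1), Φ (x 2), Φ (x 3), (Pi.single (0:Fin 7) (1:K) : Fin 7 → K)] with hG
    have e0 : ∀ c : K, ∀ w : Fin 7 → K, (∀ k : Fin 7, w k = if k = 0 then c else 0) →
        w = c • (Pi.single (0:Fin 7) (1:K) : Fin 7 → K) := by
      intro c w hw
      funext k
      rw [hw k, Pi.smul_apply, Pi.single_apply]
      split_ifs <;> simp
    have hent4 : ∀ k : Fin 7, f ⁅x 4, x (k.1+1)⁆ = if k = 0 then -(f (x 5)) else 0 := by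
      intro k
      fin_cases k
      · norm_num [key 4 1 (by norm_num) (by norm_num) (by norm_num) (by norm_num), map_neg, Fin.ext_iff]
      · norm_num [key 4 2 (by norm_num) (by norm_num) (by norm_num) (by norm_num), Fin.ext_iff]
      · norm_num [key 4 3 (by norm_num) (by norm_num) (by norm_num) (by norm_num), Fin.ext_iff]
      · norm_num [key 4 4 (by norm_num) (by norm_num) (by norm_num) (by norm_num), Fin.ext_iff]
      · norm_num [key 4 5 (by norm_num) (by norm_num) (by norm_num) (by norm_num), Fin.ext_iff]
      · norm_num [key 4 6 (by norm_num) (by norm_num) (by norm_num) (by norm_num), Fin.ext_iff]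
      · norm_num [key 4 7 (by norm_num) (by norm_num) (by norm_num) (by norm_num), Fin.ext_iff]
    have hx4 : Φ (x 4) = (-(f (x 5))) • (Pi.single (0:Fin 7) (1:K) : Fin 7 → K) :=
      e0 _ _ (fun k => by rw [hΦ]; exact hent4 k)
    have hent5 : ∀ k : Fin 7, f ⁅x 5, x (k.1+1)⁆ = if k = 0 then -(f (x 6)) else 0 := by
      intro k
      fin_cases k
      · norm_num [key 5 1 (by norm_num) (by norm_num) (by norm_num) (by norm_num), map_neg, Fin.ext_iff]
      · norm_num [key 5 2 (by norm_num) (by norm_num) (by norm_num) (by norm_num), Fin.ext_iff]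
      · norm_num [key 5 3 (by norm_num) (by norm_num) (by norm_num) (by norm_num), Fin.ext_iff]
      · norm_num [key 5 4 (by norm_num) (by norm_num) (by norm_num) (by norm_num), Fin.ext_iff]
      · norm_num [key 5 5 (by norm_num) (by norm_num) (by norm_num) (by norm_num), Fin.ext_iff]
      · norm_num [key 5 6 (by norm_num) (by norm_num) (by norm_num) (by norm_num), Fin.ext_iff]
      · norm_num [key 5 7 (by norm_num) (by norm_num) (by norm_num) (by norm_num), Fin.ext_iff]
    have hx5 : Φ (x 5) = (-(f (x 6))) • (Pi.single (0:Fin 7) (1:K) : Fin 7 → K) :=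
      e0 _ _ (fun k => by rw [hΦ]; exact hent5 k)
    have hent6 : ∀ k : Fin 7, f ⁅x 6, x (k.1+1)⁆ = if k = 0 then -(f (x 7)) else 0 := by
      intro k
      fin_cases k
      · norm_num [key 6 1 (by norm_num) (by norm_num) (by norm_num) (by norm_num), map_neg, Fin.ext_iff]
      · norm_num [key 6 2 (by norm_num) (by norm_num) (by norm_num) (by norm_num), Fin.ext_iff]
      · norm_num [key 6 3 (by norm_num) (by norm_num) (by norm_num) (by norm_num), Fin.ext_iff]
      · norm_num [key 6 4 (by norm_num) (by norm_num) (by norm_num) (by norm_num), Fin.ext_iff]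
      · norm_num [key 6 5 (by norm_num) (by norm_num) (by norm_num) (by norm_num), Fin.ext_iff]
      · norm_num [key 6 6 (by norm_num) (by norm_num) (by norm_num) (by norm_num), Fin.ext_iff]
      · norm_num [key 6 7 (by norm_num) (by norm_num) (by norm_num) (by norm_num), Fin.ext_iff]
    have hx6 : Φ (x 6) = (-(f (x 7))) • (Pi.single (0:Fin 7) (1:K) : Fin 7 → K) :=
      e0 _ _ (fun k => by rw [hΦ]; exact hent6 k)
    have hx7 : Φ (x 7) = 0 := by
      funext k
      rw [hΦ]
      fin_cases k
      · norm_num [key 7 1 (by norm_num) (by norm_num) (by norm_num) (by norm_num), Fin.ext_iff]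
      · norm_num [key 7 2 (by norm_num) (by norm_num) (by norm_num) (by norm_num), Fin.ext_iff]
      · norm_num [key 7 3 (by norm_num) (by norm_num) (by norm_num) (by norm_num), Fin.ext_iff]
      · norm_num [key 7 4 (by norm_num) (by norm_num) (by norm_num) (by norm_num), Fin.ext_iff]
      · norm_num [key 7 5 (by norm_num) (by norm_num) (by norm_num) (by norm_num), Fin.ext_iff]
      · norm_num [key 7 6 (by norm_num) (by norm_num) (by norm_num) (by norm_num), Fin.ext_iff]
      · norm_num [key 7 7 (by norm_num) (by norm_num) (by norm_num) (by norm_num), Fin.ext_iff]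
    have hrange : LinearMap.range Φ ≤ Submodule.span K (Set.range G) := by
      rw [LinearMap.range_eq_map, ← hsp, Submodule.map_span]
      refine Submodule.span_le.2 ?_
      rintro _ ⟨_, ⟨i, rfl⟩, rfl⟩
      fin_cases i
      · exact Submodule.subset_span ⟨0, rfl⟩
      · exact Submodule.subset_span ⟨1, rfl⟩
      · exact Submodule.subset_span ⟨2, rfl⟩
      · show Φ (x 4) ∈ _
        rw [hx4]
        exact Submodule.smul_mem _ _ (Submodule.subset_span ⟨3, rfl⟩)
      · show Φ (x 5) ∈ _
        rw [hx5]
        exact Submodule.smul_mem _ _ (Submodule.subset_span ⟨3, rfl⟩)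
      · show Φ (x 6) ∈ _
        rw [hx6]
        exact Submodule.smul_mem _ _ (Submodule.subset_span ⟨3, rfl⟩)
      · show Φ (x 7) ∈ _
        rw [hx7]
        exact Submodule.zero_mem _
    have h1 : finrank K (LinearMap.range Φ) ≤ 4 := by
      have h4 := finrank_range_le_card (R := K) G
      simp only [Set.finrank, Fintype.card_fin] at h4
      exact le_trans (Submodule.finrank_mono hrange) h4
    have h2 := LinearMap.finrank_range_add_finrank_ker Φ
    rw [hdim] at h2
    rw [hker]
    omega
  -- expansion lemma
  have hexp : ∀ (g : Module.Dual K L) (v y : L),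
      g ⁅v, y⁆ = ∑ j : Fin 7, b.repr v j * g ⁅x (j.1+1), y⁆ := by
    intro g v y
    have hy : ∀ w : L, (g ∘ₗ (-(LieAlgebra.ad K L y))) w = g ⁅w, y⁆ := by
      intro w
      show g ((-(LieAlgebra.ad K L y)) w) = _
      rw [LinearMap.neg_apply, LieAlgebra.ad_apply, ← lie_skew]
      simp
    rw [← hy v]
    conv_lhs => rw [← b.sum_repr v]
    rw [map_sum]
    refine Finset.sum_congr rfl fun j _ => ?_
    rw [map_smul, smul_eq_mul, hy, hb]
  -- the distinguished functional
  set f0 : Module.Dual K L := b.coord 6 with hf0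
  have hfv : ∀ k : Fin 7, f0 (x (k.1+1)) = if k = 6 then 1 else 0 := by
    intro k
    rw [← hb k, hf0, Basis.coord_apply, b.repr_self, Finsupp.single_apply]
  have hfv1 : f0 (x 1) = 0 := by have := hfv 0; norm_num [Fin.ext_iff] at this ⊢; exact this
  have hfv2 : f0 (x 2) = 0 := by have := hfv 1; norm_num [Fin.ext_iff] at this ⊢; exact this
  have hfv3 : f0 (x 3) = 0 := by have := hfv 2; norm_num [Fin.ext_iff] at this ⊢; exact this
  have hfv4 : f0 (x 4) = 0 := by have := hfv 3; norm_num [Fin.ext_iff] at this ⊢; exact this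
  have hfv5 : f0 (x 5) = 0 := by have := hfv 4; norm_num [Fin.ext_iff] at this ⊢; exact this
  have hfv6 : f0 (x 6) = 0 := by have := hfv 5; norm_num [Fin.ext_iff] at this ⊢; exact this
  have hfv7 : f0 (x 7) = 1 := by have := hfv 6; norm_num [Fin.ext_iff] at this ⊢; exact this
  -- the candidate subspace
  let g : Fin 3 → L := ![x 4, x 5, x 7]
  have hstab : lieStab K f0 = Submodule.span K (Set.range g) := by
    apply le_antisymm
    · intro v hv
      rw [mem_stab] at hv
      have E1 := hv 0
      have E2 := hv 1
      have E3 := hv 2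
      have E6 := hv 5
      rw [hexp, Fin.sum_univ_seven] at E1 E2 E3 E6
      have v3 : ((3:Fin 7):ℕ) = 3 := rfl
      have v4 : ((4:Fin 7):ℕ) = 4 := rfl
      have v5 : ((5:Fin 7):ℕ) = 5 := rfl
      have v6 : ((6:Fin 7):ℕ) = 6 := rfl
      -- E1 : y = x 1 : gives c5 = 0
      norm_num [key 1 1 (by norm_num) (by norm_num) (by norm_num) (by norm_num),
        key 2 1 (by norm_num) (by norm_num) (by norm_num) (by norm_num),
        key 3 1 (by norm_num) (by norm_num) (by norm_num) (by norm_num),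
        key 4 1 (by norm_num) (by norm_num) (by norm_num) (by norm_num),
        key 5 1 (by norm_num) (by norm_num) (by norm_num) (by norm_num),
        key 6 1 (by norm_num) (by norm_num) (by norm_num) (by norm_num),
        key 7 1 (by norm_num) (by norm_num) (by norm_num) (by norm_num),
        map_neg, hfv1, hfv2, hfv3, hfv4, hfv5, hfv6, hfv7, v3, v4, v5, v6] at E1
      norm_num [key 1 2 (by norm_num) (by norm_num) (by norm_num) (by norm_num),
        key 2 2 (by norm_num) (by norm_num) (by norm_num) (by norm_num),
        key 3 2 (by norm_num) (by norm_num) (by norm_num) (by norm_num),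
        key 4 2 (by norm_num) (by norm_num) (by norm_num) (by norm_num),
        key 5 2 (by norm_num) (by norm_num) (by norm_num) (by norm_num),
        key 6 2 (by norm_num) (by norm_num) (by norm_num) (by norm_num),
        key 7 2 (by norm_num) (by norm_num) (by norm_num) (by norm_num),
        map_neg, hfv1, hfv2, hfv3, hfv4, hfv5, hfv6, hfv7, v3, v4, v5, v6] at E2
      norm_num [key 1 3 (by norm_num) (by norm_num) (by norm_num) (by norm_num),
        key 2 3 (by norm_num) (by norm_num) (by norm_num) (by norm_num),
        key 3 3 (by norm_num) (by norm_num) (by norm_num) (by norm_num),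
        key 4 3 (by norm_num) (by norm_num) (by norm_num) (by norm_num),
        key 5 3 (by norm_num) (by norm_num) (by norm_num) (by norm_num),
        key 6 3 (by norm_num) (by norm_num) (by norm_num) (by norm_num),
        key 7 3 (by norm_num) (by norm_num) (by norm_num) (by norm_num),
        map_neg, hfv1, hfv2, hfv3, hfv4, hfv5, hfv6, hfv7, v3, v4, v5, v6] at E3
      norm_num [key 1 6 (by norm_num) (by norm_num) (by norm_num) (by norm_num),
        key 2 6 (by norm_num) (by norm_num) (by norm_num) (by norm_num),
        key 3 6 (by norm_num) (by norm_num) (by norm_num) (by norm_num),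
        key 4 6 (by norm_num) (by norm_num) (by norm_num) (by norm_num),
        key 5 6 (by norm_num) (by norm_num) (by norm_num) (by norm_num),
        key 6 6 (by norm_num) (by norm_num) (by norm_num) (by norm_num),
        key 7 6 (by norm_num) (by norm_num) (by norm_num) (by norm_num),
        map_neg, hfv1, hfv2, hfv3, hfv4, hfv5, hfv6, hfv7, v3, v4, v5, v6] at E6
      have hrw : v = b.repr v 3 • x 4 + b.repr v 4 • x 5 + b.repr v 6 • x 7 := by
        conv_lhs => rw [← b.sum_repr v]
        rw [Fin.sum_univ_seven]
        rw [E1, E2, E3, E6]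
        norm_num [hb, v3, v4, v6]
      rw [hrw]
      refine Submodule.add_mem _ (Submodule.add_mem _ ?_ ?_) ?_ <;>
        refine Submodule.smul_mem _ _ (Submodule.subset_span ?_)
      · exact ⟨0, rfl⟩
      · exact ⟨1, rfl⟩
      · exact ⟨2, rfl⟩
    · rw [Submodule.span_le]
      rintro _ ⟨i, rfl⟩
      fin_cases i
      · show x 4 ∈ (lieStab K f0 : Set L)
        rw [SetLike.mem_coe, mem_stab]
        intro k
        fin_cases k <;>
          norm_num [key 4 1 (by norm_num) (by norm_num) (by norm_num) (by norm_num),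
            key 4 2 (by norm_num) (by norm_num) (by norm_num) (by norm_num),
            key 4 3 (by norm_num) (by norm_num) (by norm_num) (by norm_num),
            key 4 4 (by norm_num) (by norm_num) (by norm_num) (by norm_num),
            key 4 5 (by norm_num) (by norm_num) (by norm_num) (by norm_num),
            key 4 6 (by norm_num) (by norm_num) (by norm_num) (by norm_num),
            key 4 7 (by norm_num) (by norm_num) (by norm_num) (by norm_num),
            map_neg, hfv5]
      · show x 5 ∈ (lieStab K f0 : Set L)
        rw [SetLike.mem_coe, mem_stab]
        intro k
        fin_cases k <;>
          norm_num [key 5 1 (by norm_num) (by norm_num) (by norm_num) (by norm_num),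
            key 5 2 (by norm_num) (by norm_num) (by norm_num) (by norm_num),
            key 5 3 (by norm_num) (by norm_num) (by norm_num) (by norm_num),
            key 5 4 (by norm_num) (by norm_num) (by norm_num) (by norm_num),
            key 5 5 (by norm_num) (by norm_num) (by norm_num) (by norm_num),
            key 5 6 (by norm_num) (by norm_num) (by norm_num) (by norm_num),
            key 5 7 (by norm_num) (by norm_num) (by norm_num) (by norm_num),
            map_neg, hfv6]
      · show x 7 ∈ (lieStab K f0 : Set L)
        rw [SetLike.mem_coe, mem_stab]
        intro k
        fin_cases k <;>
          norm_num [key 7 1 (by norm_num) (by norm_num) (by norm_num) (by norm_num),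
            key 7 2 (by norm_num) (by norm_num) (by norm_num) (by norm_num),
            key 7 3 (by norm_num) (by norm_num) (by norm_num) (by norm_num),
            key 7 4 (by norm_num) (by norm_num) (by norm_num) (by norm_num),
            key 7 5 (by norm_num) (by norm_num) (by norm_num) (by norm_num),
            key 7 6 (by norm_num) (by norm_num) (by norm_num) (by norm_num),
            key 7 7 (by norm_num) (by norm_num) (by norm_num) (by norm_num)]
  have upper : finrank K (lieStab K f0) = 3 := by
    rw [hstab]
    have hg : g = (fun i : Fin 7 => x (i.1+1)) ∘ (![3,4,6] : Fin 3 → Fin 7) := by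
      funext i; fin_cases i <;> rfl
    have einj : Function.Injective (![3,4,6] : Fin 3 → Fin 7) := by decide
    have hli3 : LinearIndependent K g := by rw [hg]; exact hli.comp _ einj
    rw [finrank_span_eq_card hli3, Fintype.card_fin]
  -- conclude
  show (⨅ f : Module.Dual K L, finrank K (lieStab K f)) = 3
  apply le_antisymm
  · exact le_trans (ciInf_le (OrderBot.bddBelow _) f0) (le_of_eq upper)
  · exact le_ciInf lower
end

section
/- For n ≥ 4 even and r odd with 3 ≤ r ≤ n−3, the index of the n-dimensional graded quasi-filiform Lie algebra L_{(n,r)} equals n − r − 1. -/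
open Module

theorem stmt15 (K : Type*) [Field K] [IsAlgClosed K] [CharZero K]
    (L : Type*) [LieRing L] [LieAlgebra K L]
    (n r : ℕ) (hn : 4 ≤ n) (hne : Even n) (hro : Odd r) (hr1 : 3 ≤ r) (hr2 : r ≤ n - 3)
    (x : ℕ → L)
    (hli : LinearIndependent K fun i : Fin n => x i.1)
    (hsp : Submodule.span K (Set.range fun i : Fin n => x i.1) = ⊤)
    (hbr1 : ∀ i, 1 ≤ i → i ≤ n - 3 → ⁅x 0, x i⁆ = x (i + 1))
    (hbr2 : ∀ i, 1 ≤ i → i ≤ (r - 1) / 2 → ⁅x i, x (r - i)⁆ = ((-1 : K)) ^ (i - 1) • x (n - 1))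
    (hz : ∀ i j, i ≤ n - 1 → j ≤ n - 1 →
      ¬(i = 0 ∧ 1 ≤ j ∧ j ≤ n - 3) → ¬(j = 0 ∧ 1 ≤ i ∧ i ≤ n - 3) →
      ¬(1 ≤ i ∧ i ≤ (r - 1) / 2 ∧ j = r - i) → ¬(1 ≤ j ∧ j ≤ (r - 1) / 2 ∧ i = r - j) →
      ⁅x i, x j⁆ = 0) :
    lieIndex K L = n - r - 1 := by
  classical
  obtain ⟨m, hm⟩ := hro
  have hm2 : (r - 1) / 2 = m := by omega
  rw [hm2] at hbr2 hz
  have hn6 : r + 3 ≤ n := by omega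
  set bb : Basis (Fin n) K L := Basis.mk hli hsp.ge with hbb
  have hbbx : ∀ i : Fin n, bb i = x i.1 := fun i => by rw [hbb, Basis.coe_mk]
  haveI : FiniteDimensional K L := Module.Finite.of_basis bb
  have hfr : finrank K L = n := by rw [finrank_eq_card_basis bb, Fintype.card_fin]
  have hco : ∀ k j : Fin n, bb.coord k (x j.1) = if j = k then (1:K) else 0 := by
    intro k j
    rw [← hbbx, Basis.coord_apply, Basis.repr_self, Finsupp.single_apply]
  set Bf : Module.Dual K L → (L →ₗ[K] Module.Dual K L) :=
    fun f => (LinearMap.llcomp K L L K f).comp (LinearMap.mk₂ K (fun a b : L => ⁅a, b⁆) add_lie smul_lie lie_add lie_smul) with hBf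
  have hBfapp : ∀ f v y, Bf f v y = f ⁅v, y⁆ := fun f v y => rfl
  have hstabmem : ∀ (f : Module.Dual K L) (v : L),
      v ∈ lieStab K f ↔ ∀ y, f ⁅v, y⁆ = 0 := fun f v => Iff.rfl
  have hstab : ∀ f, lieStab K f = LinearMap.ker (Bf f) := by
    intro f
    ext v
    rw [hstabmem, LinearMap.mem_ker]
    constructor
    · intro hv
      exact LinearMap.ext fun y => hv y
    · intro hv y
      rw [← hBfapp, hv, LinearMap.zero_apply]
  -- lower bound
  have key_low : ∀ f : Module.Dual K L, n - r - 1 ≤ finrank K (lieStab K f) := by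
    intro f
    rw [hstab f]
    set g : Fin (r+1) → Module.Dual K L :=
      fun i => if i.1 < r then Bf f (x i.1) else bb.coord ⟨0, by omega⟩ with hg
    set W := Submodule.span K (Set.range g) with hW
    have hWle : finrank K W ≤ r + 1 := by
      have := finrank_range_le_card (R := K) g
      rw [Set.finrank, Fintype.card_fin] at this
      exact this
    have hrow : ∀ i : Fin n, r ≤ i.1 → i.1 ≤ n - 3 →
        Bf f (x i.1) = (-f (x (i.1+1))) • bb.coord ⟨0, by omega⟩ := by
      intro i hi1 hi2
      refine bb.ext fun j => ?_
      have hj2 := j.2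
      rw [hbbx, hBfapp, LinearMap.smul_apply, hco]
      rcases eq_or_ne j.1 0 with h0 | h0
      · have : j = (⟨0, by omega⟩ : Fin n) := Fin.ext h0
        rw [if_pos this, h0, ← lie_skew, hbr1 i.1 (by omega) hi2, map_neg, smul_eq_mul, mul_one]
      · have : j ≠ (⟨0, by omega⟩ : Fin n) := fun h => h0 (by rw [h])
        rw [if_neg this, hz i.1 j.1 (by omega) (by omega) (by omega) (by omega) (by omega)
          (by omega), map_zero, smul_zero]
    have hrow2 : ∀ i : Fin n, n - 2 ≤ i.1 → Bf f (x i.1) = 0 := by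
      intro i hi1
      have hi2 := i.2
      refine bb.ext fun j => ?_
      have hj2 := j.2
      rw [hbbx, hBfapp, hz i.1 j.1 (by omega) (by omega) (by omega) (by omega) (by omega)
        (by omega), map_zero, LinearMap.zero_apply]
    have hrange : LinearMap.range (Bf f) ≤ W := by
      rw [LinearMap.range_eq_map, ← hsp, Submodule.map_span, Submodule.span_le]
      rintro _ ⟨_, ⟨i, rfl⟩, rfl⟩
      have hi2 := i.2
      rcases lt_or_ge i.1 r with hir | hir
      · have : Bf f (x i.1) = g ⟨i.1, by omega⟩ := by rw [hg]; simp [hir]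
        rw [this]
        exact Submodule.subset_span ⟨_, rfl⟩
      · have hg0 : bb.coord ⟨0, by omega⟩ ∈ W := by
          have : bb.coord ⟨0, by omega⟩ = g ⟨r, by omega⟩ := by rw [hg]; simp
          rw [this]; exact Submodule.subset_span ⟨_, rfl⟩
        rcases le_or_gt i.1 (n-3) with hir2 | hir2
        · rw [hrow i hir hir2]
          exact Submodule.smul_mem _ _ hg0
        · rw [hrow2 i (by omega)]
          exact Submodule.zero_mem _
    have hrn := LinearMap.finrank_range_add_finrank_ker (Bf f)
    have hrle : finrank K (LinearMap.range (Bf f)) ≤ r + 1 :=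
      le_trans (Submodule.finrank_mono hrange) hWle
    omega
    -- upper bound: specific functional
  set f₀ : Module.Dual K L := bb.coord ⟨r+1, by omega⟩ + bb.coord ⟨n-1, by omega⟩ with hf₀
  have ha : ∀ k, k < n → f₀ (x k) = if k = r+1 ∨ k = n-1 then (1:K) else 0 := by
    intro k hk
    have h1 := hco ⟨r+1, by omega⟩ ⟨k, hk⟩
    have h2 := hco ⟨n-1, by omega⟩ ⟨k, hk⟩
    simp only [Fin.mk.injEq] at h1 h2
    rw [hf₀, LinearMap.add_apply]
    show bb.coord _ (x k) + bb.coord _ (x k) = _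
    rw [h1, h2]
    split_ifs with a b c d e <;> first | omega | norm_num
  set U : Submodule K L := Submodule.span K (Set.range fun i : Fin (r+1) => x i.1) with hU
  have hliU : LinearIndependent K fun i : Fin (r+1) => x i.1 := by
    have := hli.comp (Fin.castLE (by omega : r + 1 ≤ n)) (Fin.castLE_injective _)
    exact this
  have hfrU : finrank K U = r + 1 := by
    rw [hU, finrank_span_eq_card hliU, Fintype.card_fin]
  have hdisj : Disjoint (lieStab K f₀) U := by
    rw [Submodule.disjoint_def]
    intro v hv1 hv2
    obtain ⟨c, hc⟩ := (Submodule.mem_span_range_iff_exists_fun K).mp hv2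
    have hv1' : ∀ y, f₀ ⁅v, y⁆ = 0 := hv1
    -- master sum identity
    have hsum : ∀ j, j < n → ∑ i : Fin (r+1), c i * f₀ ⁅x i.1, x j⁆ = 0 := by
      intro j hj
      have h0 := hv1' (x j)
      rw [← hc] at h0
      rw [show ⁅∑ i : Fin (r+1), c i • x i.1, x j⁆
          = ∑ i : Fin (r+1), c i • ⁅x i.1, x j⁆ by
        rw [show ⁅∑ i : Fin (r+1), c i • x i.1, x j⁆
            = ((LinearMap.mk₂ K (fun a b : L => ⁅a, b⁆) add_lie smul_lie lie_add lie_smul).flip (x j)) (∑ i : Fin (r+1), c i • x i.1)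
            from rfl, map_sum]
        simp only [map_smul]
        rfl] at h0
      rw [map_sum] at h0
      simpa [smul_eq_mul] using h0
    -- Step B : c 0 = 0 (j = r)
    have hcB : c ⟨0, by omega⟩ = 0 := by
      have h0 := hsum r (by omega)
      rw [Finset.sum_eq_single (⟨0, by omega⟩ : Fin (r+1))] at h0
      · rw [hbr1 r (by omega) hr2, ha (r+1) (by omega), if_pos (Or.inl rfl), mul_one] at h0
        exact h0
      · intro b _ hb
        have hb2 := b.2
        have hb1 : 1 ≤ b.1 := by
          rcases Nat.eq_zero_or_pos b.1 with h | h
          · exact absurd (Fin.ext h) hb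
          · exact h
        rw [hz b.1 r (by omega) (by omega) (by omega) (by omega) (by omega) (by omega),
          map_zero, mul_zero]
      · intro h; exact absurd (Finset.mem_univ _) h
    -- Step A : c r = 0 (j = 0)
    have hcA : c ⟨r, by omega⟩ = 0 := by
      have h0 := hsum 0 (by omega)
      rw [Finset.sum_eq_single (⟨r, by omega⟩ : Fin (r+1))] at h0
      · rw [show ⁅x r, x 0⁆ = -x (r+1) by
            rw [← lie_skew, hbr1 r (by omega) hr2],
          map_neg, ha (r+1) (by omega), if_pos (Or.inl rfl)] at h0
        simpa using h0
      · intro b _ hb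
        have hb2 := b.2
        rcases Nat.eq_zero_or_pos b.1 with h | h
        · rw [h, lie_self, map_zero, mul_zero]
        · have hbr : b.1 < r := by
            rcases lt_or_eq_of_le (Nat.lt_succ_iff.mp hb2) with h' | h'
            · exact h'
            · exact absurd (Fin.ext h') hb
          rw [show ⁅x b.1, x 0⁆ = -x (b.1+1) by
              rw [← lie_skew, hbr1 b.1 h (by omega)],
            map_neg, ha (b.1+1) (by omega), if_neg (by omega), neg_zero, mul_zero]
      · intro h; exact absurd (Finset.mem_univ _) h
    -- Step C : c i0 = 0 for 1 ≤ i0 ≤ m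
    have hcC : ∀ i0, ∀ _ : 1 ≤ i0, ∀ _ : i0 ≤ m, c ⟨i0, by omega⟩ = 0 := by
      intro i0 h1 h2
      have h0 := hsum (r - i0) (by omega)
      rw [Finset.sum_eq_single (⟨i0, by omega⟩ : Fin (r+1))] at h0
      · rw [hbr2 i0 h1 h2, map_smul, ha (n-1) (by omega), if_pos (Or.inr rfl),
          smul_eq_mul, mul_one] at h0
        have hp : ((-1:K)) ^ (i0-1) ≠ 0 := pow_ne_zero _ (by norm_num)
        exact (mul_eq_zero.mp h0).resolve_right hp
      · intro b _ hb
        have hb2 := b.2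
        rcases Nat.eq_zero_or_pos b.1 with h | h
        · rw [h, hbr1 (r - i0) (by omega) (by omega), ha (r - i0 + 1) (by omega),
            if_neg (by omega), mul_zero]
        · have hbne : b.1 ≠ i0 := fun hh => hb (Fin.ext hh)
          rw [hz b.1 (r - i0) (by omega) (by omega) (by omega) (by omega) (by omega)
            (by omega), map_zero, mul_zero]
      · intro h; exact absurd (Finset.mem_univ _) h
    -- Step D : c (r - i0) = 0 for 1 ≤ i0 ≤ m
    have hcD : ∀ i0, ∀ _ : 1 ≤ i0, ∀ _ : i0 ≤ m, c ⟨r - i0, by omega⟩ = 0 := by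
      intro i0 h1 h2
      have h0 := hsum i0 (by omega)
      rw [Finset.sum_eq_single (⟨r - i0, by omega⟩ : Fin (r+1))] at h0
      · rw [show ⁅x (r - i0), x i0⁆ = (-((-1:K)) ^ (i0-1)) • x (n-1) by
            rw [← lie_skew, hbr2 i0 h1 h2, neg_smul],
          map_smul, ha (n-1) (by omega), if_pos (Or.inr rfl), smul_eq_mul, mul_one] at h0
        have hp : -((-1:K)) ^ (i0-1) ≠ 0 := neg_ne_zero.mpr (pow_ne_zero _ (by norm_num))
        exact (mul_eq_zero.mp h0).resolve_right hp
      · intro b _ hb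
        have hb2 := b.2
        rcases Nat.eq_zero_or_pos b.1 with h | h
        · rw [h, hbr1 i0 h1 (by omega), ha (i0 + 1) (by omega), if_neg (by omega), mul_zero]
        · have hbne : b.1 ≠ r - i0 := fun hh => hb (Fin.ext hh)
          rw [hz b.1 i0 (by omega) (by omega) (by omega) (by omega) (by omega)
            (by omega), map_zero, mul_zero]
      · intro h; exact absurd (Finset.mem_univ _) h
    -- all coefficients vanish
    have hcall : ∀ i : Fin (r+1), c i = 0 := by
      intro i
      have hi2 := i.2
      rcases Nat.eq_zero_or_pos i.1 with h | h
      · have : i = (⟨0, by omega⟩ : Fin (r+1)) := Fin.ext h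
        rw [this]; exact hcB
      rcases eq_or_ne i.1 r with h' | h'
      · have : i = (⟨r, by omega⟩ : Fin (r+1)) := Fin.ext h'
        rw [this]; exact hcA
      rcases le_or_gt i.1 m with h'' | h''
      · have : i = (⟨i.1, by omega⟩ : Fin (r+1)) := Fin.ext rfl
        rw [this]; exact hcC i.1 h h''
      · have h3 : 1 ≤ r - i.1 ∧ r - i.1 ≤ m := by omega
        have : i = (⟨r - (r - i.1), by omega⟩ : Fin (r+1)) := Fin.ext (show i.1 = r - (r - i.1) by omega)
        rw [this]; exact hcD (r - i.1) h3.1 h3.2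
    rw [← hc]
    exact Finset.sum_eq_zero fun i _ => by rw [hcall i, zero_smul]
  have hUB : finrank K (lieStab K f₀) ≤ n - r - 1 := by
    have hsup := Submodule.finrank_sup_add_finrank_inf_eq (lieStab K f₀) U
    rw [disjoint_iff.mp hdisj] at hsup
    rw [show finrank K (⊥ : Submodule K L) = 0 from finrank_bot K L] at hsup
    have hle : finrank K ↥(lieStab K f₀ ⊔ U) ≤ n := hfr ▸ Submodule.finrank_le _
    omega
  unfold lieIndex
  refine le_antisymm (le_trans (ciInf_le (OrderBot.bddBelow _) f₀) hUB) (le_ciInf key_low)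
end

section
/- For n ≥ 7 odd and r odd with 3 ≤ r ≤ n−4, the index of the graded quasi-filiform Lie algebra Q_{(n,r)} equals 3. -/
open Module

set_option maxHeartbeats 4000000

theorem stmt16 (K : Type*) [Field K] [IsAlgClosed K] [CharZero K]
    (L : Type*) [LieRing L] [LieAlgebra K L]
    (n r : ℕ) (hn : 7 ≤ n) (hno : Odd n) (hro : Odd r) (hr1 : 3 ≤ r) (hr2 : r ≤ n - 4)
    (x : ℕ → L)
    (hli : LinearIndependent K fun i : Fin n => x i.1)
    (hsp : Submodule.span K (Set.range fun i : Fin n => x i.1) = ⊤)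
    (hbr1 : ∀ i, 1 ≤ i → i ≤ n - 3 → ⁅x 0, x i⁆ = x (i + 1))
    (hbr2 : ∀ i, 1 ≤ i → i ≤ (r - 1) / 2 → ⁅x i, x (r - i)⁆ = ((-1 : K)) ^ (i - 1) • x (n - 1))
    (hbr3 : ∀ i, 1 ≤ i → i ≤ (n - 3) / 2 →
      ⁅x i, x (n - 2 - i)⁆ = ((-1 : K)) ^ (i - 1) • x (n - 2))
    (hz : ∀ i j, i ≤ n - 1 → j ≤ n - 1 →
      ¬(i = 0 ∧ 1 ≤ j ∧ j ≤ n - 3) → ¬(j = 0 ∧ 1 ≤ i ∧ i ≤ n - 3) →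
      ¬(1 ≤ i ∧ i ≤ (r - 1) / 2 ∧ j = r - i) → ¬(1 ≤ j ∧ j ≤ (r - 1) / 2 ∧ i = r - j) →
      ¬(1 ≤ i ∧ i ≤ (n - 3) / 2 ∧ j = n - 2 - i) → ¬(1 ≤ j ∧ j ≤ (n - 3) / 2 ∧ i = n - 2 - j) →
      ⁅x i, x j⁆ = 0) :
    lieIndex K L = 3 := by
  classical
  obtain ⟨m, hm⟩ := hno
  obtain ⟨s, hs⟩ := hro
  -- basis
  let b : Basis (Fin n) K L := Basis.mk hli (by rw [hsp])
  have hb : ∀ i : Fin n, b i = x i.1 := fun i => Basis.mk_apply _ _ i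
  have hxb : ∀ (k : ℕ) (hk : k < n), x k = b ⟨k, hk⟩ := fun k hk => (hb ⟨k, hk⟩).symm
  haveI : FiniteDimensional K L := Module.Finite.of_basis b
  -- sums of brackets
  have sum_lie' : ∀ {ι : Type} (t : Finset ι) (g : ι → L) (y : L),
      ⁅∑ i ∈ t, g i, y⁆ = ∑ i ∈ t, ⁅g i, y⁆ := by
    intro ι t g y
    exact map_sum (AddMonoidHom.mk' (fun v => ⁅v, y⁆) (fun a c => add_lie a c y)) g t
  -- brackets with the last two basis vectors vanish
  have hzc : ∀ i j, i ≤ n - 1 → n - 2 ≤ j → j ≤ n - 1 → ⁅x i, x j⁆ = 0 := by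
    intro i j hi hj1 hj2
    exact hz i j hi hj2 (by omega) (by omega) (by omega) (by omega) (by omega) (by omega)
  -- membership criterion for the stabilizer
  have mem_stab : ∀ (f : Module.Dual K L) (v : L),
      (∀ j : Fin n, f ⁅v, x j.1⁆ = 0) → v ∈ lieStab K f := by
    intro f v hv y
    have hy : y ∈ Submodule.span K (Set.range fun i : Fin n => x i.1) := by
      rw [hsp]; exact Submodule.mem_top
    induction hy using Submodule.span_induction with
    | mem z hz' => obtain ⟨j, rfl⟩ := hz'; exact hv j
    | zero => rw [lie_zero, map_zero]
    | add _ _ _ _ h1 h2 => rw [lie_add, map_add, h1, h2, add_zero]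
    | smul t _ _ h1 => rw [lie_smul, map_smul, h1, smul_zero]
  have hstab_center : ∀ (f : Module.Dual K L) (k : ℕ), n - 2 ≤ k → k ≤ n - 1 →
      x k ∈ lieStab K f := by
    intro f k hk1 hk2
    apply mem_stab
    intro j
    have hj := j.2
    rw [← lie_skew, hzc j.1 k (by omega) hk1 hk2, neg_zero, map_zero]
  -- lower bound
  have hlow : ∀ f : Module.Dual K L, 3 ≤ finrank K (lieStab K f) := by
    intro f
    set M : Matrix (Fin (n-2)) (Fin (n-2)) K := Matrix.of fun i j => f ⁅x i.1, x j.1⁆ with hMdef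
    have hdet : M.det = 0 := by
      have h1 : M.transpose = -M := by
        ext i j
        simp only [Matrix.transpose_apply, Matrix.neg_apply, hMdef, Matrix.of_apply]
        rw [← lie_skew, map_neg]
      have h2 := M.det_transpose
      rw [h1, Matrix.det_neg, Fintype.card_fin] at h2
      have hodd : Odd (n - 2) := ⟨m - 1, by omega⟩
      rw [Odd.neg_one_pow hodd, neg_one_mul] at h2
      have h3 : (2 : K) * M.det = 0 := by linear_combination - h2
      exact (mul_eq_zero.mp h3).resolve_left two_ne_zero
    have hdet' : (M.transpose).det = 0 := by rw [Matrix.det_transpose]; exact hdet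
    obtain ⟨w, hw0, hww⟩ := Matrix.exists_mulVec_eq_zero_iff.mpr hdet'
    set v : L := ∑ i : Fin (n-2), w i • x i.1 with hvdef
    have hvmem : v ∈ lieStab K f := by
      apply mem_stab f
      intro j
      have hexp : f ⁅v, x j.1⁆ = ∑ i : Fin (n-2), w i * f ⁅x i.1, x j.1⁆ := by
        rw [hvdef, sum_lie', map_sum]
        exact Finset.sum_congr rfl fun i _ => by rw [smul_lie, map_smul, smul_eq_mul]
      by_cases hj : j.1 < n - 2
      · have h0 := congr_fun hww ⟨j.1, hj⟩
        simp only [Matrix.mulVec, dotProduct, Matrix.transpose_apply, hMdef,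
          Matrix.of_apply, Pi.zero_apply] at h0
        rw [hexp]
        rw [show (∑ i : Fin (n-2), w i * f ⁅x i.1, x j.1⁆)
            = ∑ i : Fin (n-2), f ⁅x i.1, x j.1⁆ * w i from
          Finset.sum_congr rfl fun i _ => mul_comm _ _]
        exact h0
      · rw [hexp]
        apply Finset.sum_eq_zero
        intro i _
        have hi := i.2
        have hj2 := j.2
        rw [hzc i.1 j.1 (by omega) (by omega) (by omega), map_zero, mul_zero]
    have hwi : ∃ i0, w i0 ≠ 0 := by
      by_contra hc; push_neg at hc; exact hw0 (funext hc)
    obtain ⟨i0, hi0⟩ := hwi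
    -- repr of v
    have hrepr : b.repr v = ∑ i : Fin (n-2), w i • Finsupp.single (⟨i.1, by omega⟩ : Fin n) 1 := by
      rw [hvdef, map_sum]
      refine Finset.sum_congr rfl fun i _ => ?_
      have hi := i.2
      rw [map_smul, show x i.1 = b ⟨i.1, by omega⟩ from (hb ⟨i.1, by omega⟩).symm, Basis.repr_self]
    have hrv1 : ∀ p : Fin n, n - 2 ≤ p.1 → b.repr v p = 0 := by
      intro p hp
      rw [hrepr, Finsupp.finset_sum_apply]
      apply Finset.sum_eq_zero
      intro i _
      have hi := i.2
      rw [Finsupp.smul_apply, Finsupp.single_apply, if_neg, smul_zero]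
      intro hcon
      have := congrArg Fin.val hcon
      simp at this
      omega
    have hrv2 : b.repr v ⟨i0.1, by omega⟩ = w i0 := by
      rw [hrepr, Finsupp.finset_sum_apply]
      rw [Finset.sum_eq_single_of_mem i0 (Finset.mem_univ _)]
      · rw [Finsupp.smul_apply, Finsupp.single_apply, if_pos (by exact Fin.ext rfl), smul_eq_mul,
          mul_one]
      · intro i _ hne
        rw [Finsupp.smul_apply, Finsupp.single_apply, if_neg, smul_zero]
        intro hcon
        exact hne (Fin.ext (by simpa using congrArg Fin.val hcon))
    -- independence
    have hind : LinearIndependent K ![v, x (n-2), x (n-1)] := by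
      rw [Fintype.linearIndependent_iff]
      intro g hg
      rw [Fin.sum_univ_three] at hg
      simp only [Matrix.cons_val_zero, Matrix.cons_val_one, Matrix.head_cons,
        Matrix.cons_val_two, Matrix.tail_cons] at hg
      have happ : ∀ p : Fin n,
          g 0 * b.repr v p + g 1 * b.repr (x (n-2)) p + g 2 * b.repr (x (n-1)) p = 0 := by
        intro p
        have h4 := congrArg (fun z => b.repr z p) hg
        simpa [map_add, map_smul] using h4
      have hrA : b.repr (x (n-2)) = Finsupp.single (⟨n-2, by omega⟩ : Fin n) 1 := by
        rw [show x (n-2) = b ⟨n-2, by omega⟩ from (hb ⟨n-2, by omega⟩).symm, Basis.repr_self]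
      have hrB : b.repr (x (n-1)) = Finsupp.single (⟨n-1, by omega⟩ : Fin n) 1 := by
        rw [show x (n-1) = b ⟨n-1, by omega⟩ from (hb ⟨n-1, by omega⟩).symm, Basis.repr_self]
      have e2 : g 2 = 0 := by
        have h5 := happ ⟨n-1, by omega⟩
        rw [hrv1 ⟨n-1, by omega⟩ (by show n-2 ≤ n-1; omega), hrA, hrB, Finsupp.single_apply, Finsupp.single_apply,
          if_neg (by simp [Fin.ext_iff]; omega), if_pos rfl] at h5
        simpa using h5
      have e1 : g 1 = 0 := by
        have h5 := happ ⟨n-2, by omega⟩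
        rw [hrv1 ⟨n-2, by omega⟩ (by show n-2 ≤ n-2; omega), hrA, hrB, Finsupp.single_apply, Finsupp.single_apply,
          if_pos rfl, if_neg (by simp [Fin.ext_iff]; omega)] at h5
        simpa using h5
      have e0 : g 0 = 0 := by
        have hi0lt := i0.2
        have h5 := happ ⟨i0.1, by omega⟩
        rw [hrv2, hrA, hrB, Finsupp.single_apply, Finsupp.single_apply,
          if_neg (by simp [Fin.ext_iff]; omega), if_neg (by simp [Fin.ext_iff]; omega)] at h5
        have h6 : g 0 * w i0 = 0 := by simpa using h5
        exact (mul_eq_zero.mp h6).resolve_right hi0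
      intro i
      fin_cases i
      · exact e0
      · exact e1
      · exact e2
    have hsub : Submodule.span K (Set.range ![v, x (n-2), x (n-1)]) ≤ lieStab K f := by
      rw [Submodule.span_le]
      rintro z ⟨i, rfl⟩
      fin_cases i
      · exact hvmem
      · exact hstab_center f (n-2) le_rfl (by omega)
      · exact hstab_center f (n-1) (by omega) le_rfl
    calc (3:ℕ) = finrank K (Submodule.span K (Set.range ![v, x (n-2), x (n-1)])) := by
          rw [finrank_span_eq_card hind, Fintype.card_fin]
      _ ≤ finrank K (lieStab K f) := Submodule.finrank_mono hsub
  -- upper bound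
  have hup : ∃ f0 : Module.Dual K L, finrank K (lieStab K f0) ≤ 3 := by
    set p2 : Fin n := ⟨n-2, by omega⟩ with hp2
    refine ⟨b.coord p2, ?_⟩
    set f0 : Module.Dual K L := b.coord p2 with hf0def
    have hf0x : ∀ k, k < n → f0 (x k) = if k = n - 2 then 1 else 0 := by
      intro k hk
      rw [show x k = b ⟨k, hk⟩ from (hb ⟨k, hk⟩).symm, hf0def, Basis.coord_apply,
        Basis.repr_self, Finsupp.single_apply]
      simp only [hp2, Fin.ext_iff]
    -- zero entries in column n-2-k
    have hcol0 : ∀ k, 1 ≤ k → k ≤ n-3 → ∀ j, j = n-2-k → ∀ i, i ≤ n-1 → i ≠ k →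
        ¬(i = 0 ∧ k = 1) → f0 ⁅x i, x j⁆ = 0 := by
      intro k hk1 hk3 j hj i hi hik hi0
      by_cases h0 : i = 0
      · subst h0
        have hk1' : k ≠ 1 := fun h => hi0 ⟨rfl, h⟩
        rw [hj, hbr1 (n-2-k) (by omega) (by omega), hf0x _ (by omega), if_neg (by omega)]
      · by_cases hA : 1 ≤ i ∧ i ≤ (r-1)/2 ∧ j = r - i
        · obtain ⟨h1, h2, h3⟩ := hA
          rw [h3, hbr2 i h1 h2, map_smul, hf0x (n-1) (by omega), if_neg (by omega), smul_zero]
        · by_cases hB : 1 ≤ j ∧ j ≤ (r-1)/2 ∧ i = r - j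
          · obtain ⟨h1, h2, h3⟩ := hB
            rw [h3, ← lie_skew, hbr2 j h1 h2, map_neg, map_smul, hf0x (n-1) (by omega),
              if_neg (by omega), smul_zero, neg_zero]
          · rw [hz i j hi (by omega) (by omega) (by omega) hA hB (by omega) (by omega), map_zero]
    -- nonzero diagonal-pair entry
    have hcolk : ∀ k, 2 ≤ k → k ≤ n-3 → ∃ c : K, c ≠ 0 ∧ f0 ⁅x k, x (n-2-k)⁆ = c := by
      intro k hk2 hk3
      by_cases h : k ≤ (n-3)/2
      · refine ⟨(-1)^(k-1), pow_ne_zero _ (by norm_num), ?_⟩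
        rw [hbr3 k (by omega) h, map_smul, hf0x (n-2) (by omega), if_pos rfl, smul_eq_mul, mul_one]
      · have hj1 : 1 ≤ n-2-k := by omega
        have hj2 : n-2-k ≤ (n-3)/2 := by omega
        refine ⟨-(-1)^(n-2-k-1), neg_ne_zero.mpr (pow_ne_zero _ (by norm_num)), ?_⟩
        rw [show x k = x (n-2-(n-2-k)) from by rw [show n-2-(n-2-k) = k from by omega],
          ← lie_skew, hbr3 (n-2-k) hj1 hj2, map_neg, map_smul, hf0x (n-2) (by omega),
          if_pos rfl, smul_eq_mul, mul_one]
    -- values in column n-3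
    have hval0 : f0 ⁅x 0, x (n-3)⁆ = 1 := by
      rw [hbr1 (n-3) (by omega) le_rfl, show n-3+1 = n-2 from by omega, hf0x (n-2) (by omega),
        if_pos rfl]
    have hval1 : f0 ⁅x 1, x (n-3)⁆ = 1 := by
      have h := hbr3 1 le_rfl (by omega)
      rw [show n-2-1 = n-3 from by omega] at h
      rw [h, pow_zero, one_smul, hf0x (n-2) (by omega), if_pos rfl]
    -- stabilizer is contained in a 3-dim span
    have hstabs : lieStab K f0 ≤
        Submodule.span K (Set.range ![x 0 - x 1, x (n-2), x (n-1)]) := by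
      intro v hv
      set c := b.repr v with hcdef
      have h2 : v = ∑ i : Fin n, c i • x i.1 := by
        conv_lhs => rw [← Basis.sum_repr b v]
        exact Finset.sum_congr rfl fun i _ => by rw [hb]
      have hcond : ∀ j : ℕ, j < n → ∑ i : Fin n, c i * f0 ⁅x i.1, x j⁆ = 0 := by
        intro j hj
        have h1 : f0 ⁅v, x j⁆ = 0 := hv (x j)
        rw [h2, sum_lie', map_sum] at h1
        rw [← h1]
        exact Finset.sum_congr rfl fun i _ => by rw [smul_lie, map_smul, smul_eq_mul]
      have hck : ∀ k (hk : k < n), 2 ≤ k → k ≤ n-3 → c ⟨k, hk⟩ = 0 := by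
        intro k hk hk2 hk3
        obtain ⟨cc, hcc0, hccv⟩ := hcolk k hk2 hk3
        have h1 := hcond (n-2-k) (by omega)
        rw [Finset.sum_eq_single_of_mem (⟨k, hk⟩ : Fin n) (Finset.mem_univ _)] at h1
        · have h1' : c ⟨k, hk⟩ * cc = 0 := by rw [← hccv]; exact h1
          exact (mul_eq_zero.mp h1').resolve_right hcc0
        · intro i _ hne
          rw [hcol0 k (by omega) hk3 (n-2-k) rfl i.1 (by have := i.2; omega)
            (fun hcon => hne (Fin.ext hcon)) (by omega), mul_zero]
      have hc01 : c ⟨0, by omega⟩ + c ⟨1, by omega⟩ = 0 := by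
        have h1 := hcond (n-3) (by omega)
        rw [← Finset.sum_erase_add _ _ (Finset.mem_univ (⟨0, by omega⟩ : Fin n))] at h1
        rw [Finset.sum_eq_single_of_mem (⟨1, by omega⟩ : Fin n)
          (Finset.mem_erase.mpr ⟨by simp [Fin.ext_iff], Finset.mem_univ _⟩)] at h1
        · have hv1 : c ⟨1, by omega⟩ * f0 ⁅x 1, x (n-3)⁆ + c ⟨0, by omega⟩ * f0 ⁅x 0, x (n-3)⁆
              = 0 := h1
          rw [hval0, hval1, mul_one, mul_one] at hv1
          linear_combination hv1
        · intro i hi hne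
          have hi0 : i.1 ≠ 0 := fun hcon => (Finset.mem_erase.mp hi).1 (Fin.ext hcon)
          have hi1 : i.1 ≠ 1 := fun hcon => hne (Fin.ext hcon)
          rw [hcol0 1 le_rfl (by omega) (n-3) (by omega) i.1 (by have := i.2; omega) hi1
            (by omega), mul_zero]
      -- assemble
      rw [h2]
      rw [show (∑ i : Fin n, c i • x i.1)
          = ∑ i ∈ ({⟨0, by omega⟩, ⟨1, by omega⟩, ⟨n-2, by omega⟩, ⟨n-1, by omega⟩} :
              Finset (Fin n)), c i • x i.1 from by
        symm
        apply Finset.sum_subset (Finset.subset_univ _)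
        intro i _ hi
        simp only [Finset.mem_insert, Finset.mem_singleton, Fin.ext_iff] at hi
        push_neg at hi
        have hi' := i.2
        rw [hck i.1 (by omega) (by omega) (by omega), zero_smul]]
      rw [Finset.sum_insert (by simp [Fin.ext_iff]; omega),
        Finset.sum_insert (by simp [Fin.ext_iff]; omega),
        Finset.sum_insert (by simp [Fin.ext_iff]; omega),
        Finset.sum_singleton]
      have hc1 : c ⟨1, by omega⟩ = -c ⟨0, by omega⟩ := by linear_combination hc01
      rw [hc1]
      have hre : c ⟨0, by omega⟩ • x 0 + (-c ⟨0, by omega⟩) • x 1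
          = c ⟨0, by omega⟩ • (x 0 - x 1) := by
        rw [smul_sub, neg_smul]; abel
      rw [show (⟨0, by omega⟩ : Fin n).1 = 0 from rfl, show (⟨1, by omega⟩ : Fin n).1 = 1 from rfl,
        show ((⟨n-2, by omega⟩ : Fin n)).1 = n-2 from rfl,
        show ((⟨n-1, by omega⟩ : Fin n)).1 = n-1 from rfl, ← add_assoc, hre]
      apply Submodule.add_mem
      · exact Submodule.smul_mem _ _ (Submodule.subset_span ⟨0, rfl⟩)
      · apply Submodule.add_mem
        · exact Submodule.smul_mem _ _ (Submodule.subset_span ⟨1, rfl⟩)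
        · exact Submodule.smul_mem _ _ (Submodule.subset_span ⟨2, rfl⟩)
    refine le_trans (Submodule.finrank_mono hstabs) ?_
    have h3 := finrank_range_le_card (R := K) ![x 0 - x 1, x (n-2), x (n-1)]
    simpa [Set.finrank] using h3
  obtain ⟨f0, hf0⟩ := hup
  refine le_antisymm (le_trans (ciInf_le (OrderBot.bddBelow _) f0) hf0) (le_ciInf hlow)
end

section
/- For n ≥ 7 odd, the index of the direct sum Q_{n−1} ⊕ K (the (n−1)-dimensional algebra Q_{n−1} extended by a 1-dimensional center) equals 3. -/
set_option maxHeartbeats 1000000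

open Module

noncomputable def brkForm (K : Type*) {L : Type*} [Field K] [LieRing L] [LieAlgebra K L]
    (f : Module.Dual K L) : L →ₗ[K] L →ₗ[K] K :=
  LinearMap.mk₂ K (fun u v => f ⁅u, v⁆)
    (fun u u' v => by simp only [add_lie, map_add])
    (fun c u v => by simp only [smul_lie, _root_.map_smul, smul_eq_mul])
    (fun u v v' => by simp only [lie_add, map_add])
    (fun c u v => by simp only [lie_smul, _root_.map_smul, smul_eq_mul])

theorem brkForm_apply (K : Type*) {L : Type*} [Field K] [LieRing L] [LieAlgebra K L]
    (f : Module.Dual K L) (u v : L) : brkForm K f u v = f ⁅u, v⁆ := rfl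

open Matrix in
/-- A skew bilinear form on an odd-finrank space has a nonzero radical vector. -/
theorem odd_radical {K V : Type*} [Field K] [CharZero K] [AddCommGroup V] [Module K V]
    [FiniteDimensional K V] (hodd : Odd (finrank K V))
    (B : V →ₗ[K] V →ₗ[K] K) (hskew : ∀ u v, B u v = - B v u) :
    ∃ w : V, w ≠ 0 ∧ ∀ y, B w y = 0 := by
  classical
  set m := finrank K V with hm
  let e : Basis (Fin m) K V := finBasis K V
  let M : Matrix (Fin m) (Fin m) K := Matrix.of fun i j => B (e i) (e j)
  have hdet : M.det = 0 := by
    have h1 : M = -Mᵀ := by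
      ext i j
      simp only [Matrix.neg_apply, Matrix.transpose_apply, M, Matrix.of_apply]
      exact hskew _ _
    have h2 : M.det = -M.det := by
      conv_lhs => rw [h1]
      rw [Matrix.det_neg, Matrix.det_transpose, Fintype.card_fin, hodd.neg_one_pow]
      ring
    have h3 : (2:K) * M.det = 0 := by linear_combination h2
    exact (mul_eq_zero.mp h3).resolve_left two_ne_zero
  obtain ⟨v, hv, hMv⟩ := (Matrix.exists_mulVec_eq_zero_iff).mpr hdet
  refine ⟨e.equivFun.symm v, ?_, ?_⟩
  · intro h0
    exact hv (e.equivFun.symm.injective (by rw [h0]; simp))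
  · intro y
    have hy : ∀ j, B (e j) (e.equivFun.symm v) = 0 := by
      intro j
      rw [Basis.equivFun_symm_apply, map_sum]
      have hterm : ∀ i ∈ Finset.univ, (B (e j)) (v i • e i) = M j i * v i := by
        intro i _
        rw [_root_.map_smul, smul_eq_mul, mul_comm]
        rfl
      rw [Finset.sum_congr rfl hterm]
      have := congrFun hMv j
      simpa [Matrix.mulVec, dotProduct] using this
    have hflip : B.flip (e.equivFun.symm v) = 0 := by
      apply e.ext
      intro j
      simpa using hy j
    rw [hskew]
    have : B y (e.equivFun.symm v) = B.flip (e.equivFun.symm v) y := rfl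
    rw [this, hflip]
    simp

theorem stmt17 (K : Type*) [Field K] [IsAlgClosed K] [CharZero K]
    (L : Type*) [LieRing L] [LieAlgebra K L]
    (n : ℕ) (hn : 7 ≤ n) (hno : Odd n)
    (x : ℕ → L)
    (hli : LinearIndependent K fun i : Fin n => x (i.1 + 1))
    (hsp : Submodule.span K (Set.range fun i : Fin n => x (i.1 + 1)) = ⊤)
    (hbr1 : ∀ i, 2 ≤ i → i ≤ n - 2 → ⁅x 1, x i⁆ = x (i + 1))
    (hbr2 : ∀ i, 2 ≤ i → i ≤ (n - 1) / 2 → ⁅x i, x (n - i)⁆ = ((-1 : K)) ^ (i + 1) • x (n - 1))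
    (hz : ∀ i j, 1 ≤ i → i ≤ n → 1 ≤ j → j ≤ n →
      ¬(i = 1 ∧ 2 ≤ j ∧ j ≤ n - 2) → ¬(j = 1 ∧ 2 ≤ i ∧ i ≤ n - 2) →
      ¬(2 ≤ i ∧ i ≤ (n - 1) / 2 ∧ j = n - i) → ¬(2 ≤ j ∧ j ≤ (n - 1) / 2 ∧ i = n - j) →
      ⁅x i, x j⁆ = 0) :
    lieIndex K L = 3 := by
  classical
  have hn2 : n % 2 = 1 := Nat.odd_iff.mp hno
  have hsp' : ⊤ ≤ Submodule.span K (Set.range fun i : Fin n => x (i.1 + 1)) := hsp.ge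
  set b : Basis (Fin n) K L := Basis.mk hli hsp' with hbdef
  have hb : ∀ i : Fin n, b i = x (i.1 + 1) := fun i => Basis.mk_apply hli hsp' i
  haveI : FiniteDimensional K L := Module.Finite.of_basis b
  have hrank : finrank K L = n := by
    rw [finrank_eq_card_basis b, Fintype.card_fin]
  have hxb : ∀ k (h1 : 1 ≤ k) (h2 : k ≤ n), x k = b ⟨k - 1, by omega⟩ := by
    intro k h1 h2
    rw [hb]
    congr 1
    show k = k - 1 + 1
    omega
  -- centrality of x (n-1) and x n
  have hcent : ∀ k, k = n - 1 ∨ k = n → ∀ y : L, ⁅x k, y⁆ = 0 := by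
    intro k hk y
    have had : LieAlgebra.ad K L (x k) = 0 := by
      apply LinearMap.ext_on_range hsp
      intro j
      rw [LieAlgebra.ad_apply]
      have h1j : 1 ≤ j.1 + 1 := by omega
      have hjn : j.1 + 1 ≤ n := by omega
      refine hz k (j.1+1) (by omega) (by omega) h1j hjn ?_ ?_ ?_ ?_ <;> omega
    rw [← LieAlgebra.ad_apply (R := K), had]
    rfl
  -- lower bound
  have hlow : ∀ f : Module.Dual K L, 3 ≤ finrank K (lieStab K f) := by
    intro f
    set B := brkForm K f with hBdef
    have hskewB : ∀ u v : L, B u v = - B v u := by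
      intro u v
      rw [hBdef, brkForm_apply, brkForm_apply]
      conv_lhs => rw [← lie_skew]
      rw [map_neg]
    set Z : Submodule K L := Submodule.span K (Set.range ![x (n-1), x n]) with hZdef
    have hxn1 : x (n-1) ∈ Z := Submodule.subset_span ⟨0, rfl⟩
    have hxn : x n ∈ Z := Submodule.subset_span ⟨1, rfl⟩
    have hindep2 : LinearIndependent K ![x (n-1), x n] := by
      have hg : Function.Injective (![⟨n-2, by omega⟩, ⟨n-1, by omega⟩] : Fin 2 → Fin n) := by
        intro s t hst
        fin_cases s <;> fin_cases t <;> first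
          | rfl
          | (exfalso; have h := congrArg Fin.val hst; simp at h; omega)
      have h2 := hli.comp _ hg
      have he : ((fun i : Fin n => x (i.1 + 1)) ∘ (![⟨n-2, by omega⟩, ⟨n-1, by omega⟩] : Fin 2 → Fin n)) = ![x (n-1), x n] := by
        funext s
        fin_cases s
        · show x (n - 2 + 1) = x (n - 1)
          congr 1
          omega
        · show x (n - 1 + 1) = x n
          congr 1
          omega
      exact he ▸ h2
    have hZ2 : finrank K ↥Z = 2 := by
      rw [hZdef, finrank_span_eq_card hindep2, Fintype.card_fin]
    have hQrank : finrank K (L ⧸ Z) = n - 2 := by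
      have := Z.finrank_quotient_add_finrank
      omega
    have hQodd : Odd (finrank K (L ⧸ Z)) := by
      rw [hQrank]
      obtain ⟨t, ht⟩ := hno
      exact ⟨t-1, by omega⟩
    have hBz : ∀ z, z = x (n-1) ∨ z = x n → B z = 0 := by
      rintro z (rfl | rfl) <;>
      · apply LinearMap.ext
        intro y
        rw [hBdef, brkForm_apply]
        first
          | rw [hcent (n-1) (Or.inl rfl) y, map_zero]; rfl
          | rw [hcent n (Or.inr rfl) y, map_zero]; rfl
    have hZker : Z ≤ LinearMap.ker B := by
      rw [hZdef, Submodule.span_le]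
      rintro _ ⟨s, rfl⟩
      rw [SetLike.mem_coe, LinearMap.mem_ker]
      fin_cases s
      · exact hBz _ (Or.inl (by simp))
      · exact hBz _ (Or.inr (by simp))
    set C1 := Z.liftQ B hZker with hC1def
    have hZker2 : Z ≤ LinearMap.ker C1.flip := by
      intro z hzZ
      rw [LinearMap.mem_ker]
      apply LinearMap.ext
      intro ubar
      obtain ⟨u, rfl⟩ := Submodule.Quotient.mk_surjective Z ubar
      show C1 (Submodule.Quotient.mk u) z = 0
      rw [hC1def, Submodule.liftQ_apply]
      rw [hskewB]
      have : B z = 0 := hZker hzZ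
      rw [this]
      simp
    set D := Z.liftQ C1.flip hZker2 with hDdef
    have hD : ∀ u w : L, D (Submodule.Quotient.mk u) (Submodule.Quotient.mk w) = B w u := by
      intro u w
      rw [hDdef, Submodule.liftQ_apply]
      show C1 (Submodule.Quotient.mk w) u = B w u
      rw [hC1def, Submodule.liftQ_apply]
    have hDskew : ∀ ub wb, D ub wb = - D wb ub := by
      intro ub wb
      obtain ⟨u, rfl⟩ := Submodule.Quotient.mk_surjective Z ub
      obtain ⟨w, rfl⟩ := Submodule.Quotient.mk_surjective Z wb
      rw [hD, hD, hskewB]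
    obtain ⟨wbar, hw0, hwrad⟩ := odd_radical hQodd D hDskew
    obtain ⟨w, rfl⟩ := Submodule.Quotient.mk_surjective Z wbar
    have hwstab : w ∈ lieStab K f := by
      intro y
      have h1 : f ⁅w, y⁆ = B w y := rfl
      rw [h1, ← hD y w, hDskew, hwrad, neg_zero]
    have hstab1 : x (n-1) ∈ lieStab K f := by
      intro y
      rw [hcent (n-1) (Or.inl rfl) y, map_zero]
    have hstab2 : x n ∈ lieStab K f := by
      intro y
      rw [hcent n (Or.inr rfl) y, map_zero]
    have hnotmem : w ∉ Submodule.span K (Set.range ![x (n-1), x n]) := by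
      intro hmem
      rw [← hZdef] at hmem
      exact hw0 ((Submodule.Quotient.mk_eq_zero Z).mpr hmem)
    have key : LinearIndependent K ![w, x (n-1), x n] :=
      linearIndependent_fin_cons.mpr ⟨hindep2, hnotmem⟩
    let u3 : Fin 3 → lieStab K f := fun i =>
      ⟨![w, x (n-1), x n] i, by fin_cases i <;> simpa using ‹_›⟩
    have hu3 : LinearIndependent K u3 := by
      apply LinearIndependent.of_comp (lieStab K f).subtype
      have : ((lieStab K f).subtype ∘ u3) = ![w, x (n-1), x n] := by
        funext i
        fin_cases i <;> rfl
      rw [this]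
      exact key
    have hcard := hu3.fintype_card_le_finrank
    simpa using hcard
  -- upper bound
  have hup : ∃ f0 : Module.Dual K L, finrank K (lieStab K f0) ≤ 3 := by
    set i0 : Fin n := ⟨n-2, by omega⟩ with hi0
    set f0 : Module.Dual K L := b.coord i0 with hf0def
    have hf0 : ∀ k (h1 : 1 ≤ k) (h2 : k ≤ n), f0 (x k) = if k = n-1 then (1:K) else 0 := by
      intro k h1 h2
      rw [hxb k h1 h2, hf0def, Basis.coord_apply, Basis.repr_self, Finsupp.single_apply]
      have hiff : ((⟨k-1, by omega⟩ : Fin n) = i0) ↔ k = n - 1 := by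
        rw [hi0, Fin.mk.injEq]
        omega
      by_cases h : k = n-1
      · rw [if_pos (hiff.mpr h), if_pos h]
      · rw [if_neg (fun hh => h (hiff.mp hh)), if_neg h]
    have hval : ∀ (v : L) (j : ℕ) (h1 : 1 ≤ j) (h2 : j ≤ n),
        f0 ⁅v, x j⁆ = ∑ i : Fin n, b.repr v i * f0 ⁅x (i.1+1), x j⁆ := by
      intro v j h1 h2
      have e1 : f0 ⁅v, x j⁆ = (brkForm K f0).flip (x j) v := rfl
      rw [e1]
      conv_lhs => rw [← Basis.sum_repr b v]
      rw [map_sum]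
      apply Finset.sum_congr rfl
      intro i _
      rw [_root_.map_smul, smul_eq_mul, hb i]
      rfl
    -- condition from j ∈ [2, n-3]
    have hcond1 : ∀ v ∈ lieStab K f0, ∀ j (hj2 : 2 ≤ j) (hj3 : j ≤ n-3),
        b.repr v ⟨n-j-1, by omega⟩ = 0 := by
      intro v hv j hj2 hj3
      have hvy : ∀ y, f0 ⁅v, y⁆ = 0 := hv
      have hsum := hval v j (by omega) (by omega)
      rw [hvy (x j)] at hsum
      set i1 : Fin n := ⟨n-j-1, by omega⟩ with hi1
      rw [Finset.sum_eq_single i1 ?van ?notmem] at hsum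
      case notmem => intro h; exact absurd (Finset.mem_univ _) h
      case van =>
        intro i _ hne
        have hk1 : 1 ≤ i.1 + 1 := by omega
        have hkn : i.1 + 1 ≤ n := by omega
        have hkne : i.1 + 1 ≠ n - j := by
          intro hh
          apply hne
          rw [hi1, Fin.ext_iff]
          show i.1 = n - j - 1
          omega
        rcases eq_or_ne (i.1+1) 1 with h1 | h1
        · rw [h1, hbr1 j hj2 (by omega), hf0 (j+1) (by omega) (by omega),
            if_neg (by omega), mul_zero]
        rcases eq_or_ne (i.1+1) j with hjj | hjj
        · rw [hjj, lie_self, map_zero, mul_zero]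
        · rw [hz (i.1+1) j hk1 hkn (by omega) (by omega) (by omega) (by omega) (by omega)
            (by omega), map_zero, mul_zero]
      have hxx : i1.1 + 1 = n - j := by
        rw [hi1]
        show n - j - 1 + 1 = n - j
        omega
      rw [hxx] at hsum
      have hne0 : f0 ⁅x (n-j), x j⁆ ≠ 0 := by
        rcases le_or_gt j ((n-1)/2) with hc | hc
        · rw [← lie_skew, map_neg, hbr2 j hj2 hc, _root_.map_smul, smul_eq_mul,
            hf0 (n-1) (by omega) (by omega), if_pos rfl, mul_one]
          exact neg_ne_zero.mpr (pow_ne_zero _ (by norm_num))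
        · have h2' : 2 ≤ n - j := by omega
          have h3' : n - j ≤ (n-1)/2 := by omega
          have hb2 := hbr2 (n-j) h2' h3'
          rw [show n - (n - j) = j from by omega] at hb2
          rw [hb2, _root_.map_smul, smul_eq_mul, hf0 (n-1) (by omega) (by omega),
            if_pos rfl, mul_one]
          exact pow_ne_zero _ (by norm_num)
      have := mul_eq_zero.mp hsum.symm
      tauto
    -- condition from j = n-2
    have hcond2 : ∀ v ∈ lieStab K f0,
        b.repr v ⟨1, by omega⟩ = b.repr v ⟨0, by omega⟩ := by
      intro v hv
      have hvy : ∀ y, f0 ⁅v, y⁆ = 0 := hv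
      have hsum := hval v (n-2) (by omega) (by omega)
      rw [hvy (x (n-2))] at hsum
      rw [← Finset.sum_erase_add _ _ (Finset.mem_univ (⟨0, by omega⟩ : Fin n))] at hsum
      rw [Finset.sum_eq_single_of_mem (⟨1, by omega⟩ : Fin n)
        (Finset.mem_erase.mpr ⟨by simp [Fin.ext_iff], Finset.mem_univ _⟩) ?van2] at hsum
      case van2 =>
        intro i hi hne1
        have hne0 : i ≠ (⟨0, by omega⟩ : Fin n) := (Finset.mem_erase.mp hi).1
        have hk2 : 2 ≤ i.1 + 1 := by
          rcases Nat.eq_zero_or_pos i.1 with h | h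
          · exact absurd (Fin.ext h) hne0
          · omega
        have hk3 : i.1 + 1 ≠ 2 := by
          intro hh
          apply hne1
          rw [Fin.ext_iff]
          show i.1 = 1
          omega
        rcases eq_or_ne (i.1+1) (n-2) with he | he
        · rw [he, lie_self, map_zero, mul_zero]
        · rw [hz (i.1+1) (n-2) (by omega) (by omega) (by omega) (by omega) (by omega)
            (by omega) (by omega) (by omega), map_zero, mul_zero]
      have hv1 : f0 ⁅x ((⟨1, by omega⟩ : Fin n).1 + 1), x (n-2)⁆ = -1 := by
        show f0 ⁅x 2, x (n-2)⁆ = -1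
        rw [show (n:ℕ)-2 = n - 2 from rfl, hbr2 2 (by omega) (by omega),
          _root_.map_smul, smul_eq_mul, hf0 (n-1) (by omega) (by omega), if_pos rfl]
        norm_num
      have hv0 : f0 ⁅x ((⟨0, by omega⟩ : Fin n).1 + 1), x (n-2)⁆ = 1 := by
        show f0 ⁅x 1, x (n-2)⁆ = 1
        rw [hbr1 (n-2) (by omega) (by omega), show (n:ℕ)-2+1 = n-1 from by omega,
          hf0 (n-1) (by omega) (by omega), if_pos rfl]
      rw [hv1, hv0, mul_one, mul_neg_one] at hsum
      linear_combination hsum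
    refine ⟨f0, ?_⟩
    let idx : Fin 3 → Fin n := ![⟨0, by omega⟩, ⟨n-2, by omega⟩, ⟨n-1, by omega⟩]
    let φ : lieStab K f0 →ₗ[K] (Fin 3 → K) :=
      LinearMap.pi (fun t => (b.coord (idx t)) ∘ₗ (lieStab K f0).subtype)
    have hinj : Function.Injective φ := by
      rw [← LinearMap.ker_eq_bot, Submodule.eq_bot_iff]
      intro u hu
      rw [LinearMap.mem_ker] at hu
      have h0 : b.repr u.1 ⟨0, by omega⟩ = 0 := by
        have := congrFun hu 0
        simpa [φ, idx, Basis.coord_apply] using this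
      have h1 : b.repr u.1 ⟨n-2, by omega⟩ = 0 := by
        have := congrFun hu 1
        simpa [φ, idx, Basis.coord_apply] using this
      have h2 : b.repr u.1 ⟨n-1, by omega⟩ = 0 := by
        have := congrFun hu 2
        simpa [φ, idx, Basis.coord_apply] using this
      have hall : ∀ i : Fin n, b.repr u.1 i = 0 := by
        intro i
        rcases eq_or_ne i.1 0 with hc | hc
        · rw [show i = ⟨0, by omega⟩ from Fin.ext hc]
          exact h0
        rcases eq_or_ne i.1 1 with hc1 | hc1
        · rw [show i = ⟨1, by omega⟩ from Fin.ext hc1]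
          rw [hcond2 u.1 u.2]
          exact h0
        rcases eq_or_ne i.1 (n-2) with hc2 | hc2
        · rw [show i = ⟨n-2, by omega⟩ from Fin.ext hc2]
          exact h1
        rcases eq_or_ne i.1 (n-1) with hc3 | hc3
        · rw [show i = ⟨n-1, by omega⟩ from Fin.ext hc3]
          exact h2
        · have hrange : 2 ≤ i.1 ∧ i.1 ≤ n - 3 := by
            have := i.2
            omega
          have := hcond1 u.1 u.2 (n-1-i.1) (by omega) (by omega)
          rw [show (⟨n-(n-1-i.1)-1, by omega⟩ : Fin n) = i from Fin.ext (by
            show n-(n-1-i.1)-1 = i.1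
            omega)] at this
          exact this
      have hu1 : u.1 = 0 := by
        have hr : b.repr u.1 = 0 := Finsupp.ext hall
        have := b.repr.map_eq_zero_iff.mp hr
        exact this
      exact Subtype.ext hu1
    have hle := LinearMap.finrank_le_finrank_of_injective hinj
    rwa [Module.finrank_fin_fun] at hle
  obtain ⟨f0, hf0⟩ := hup
  rw [lieIndex]
  apply le_antisymm
  · exact le_trans (ciInf_le (OrderBot.bddBelow _) f0) hf0
  · exact le_ciInf hlow
end
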